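/- arXiv:2207.08238 — 6 statements merged into one kernel-verified Lean document; each statement's English description precedes it below -/
import Mathlib

section
/- For any parameter set A ⊆ M and any pair of Keisler measures μ ∈ 𝔐_x(A) and ν ∈ 𝔐_y(A), there exists a separated amalgam ω ∈ 𝔐_xy(A) such that π_x(ω) = μ and π_y(ω) = ν. -/
open FirstOrder

/-- A Keisler measure over the parameter set `A`, in the variables indexed by `α`:
a finitely additive probability measure on the Boolean algebra of `A`-definable
subsets of `M^α` (i.e. on `L_α(A)`).  The function `toFun` is defined on all sets,
but only its values on `A`-definable sets are constrained (and relevant). -/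
structure KeislerMeasure (L : FirstOrder.Language) (M : Type*) [L.Structure M]
    (A : Set M) (α : Type*) where
  toFun : Set (α → M) → ℝ
  measure_univ : toFun Set.univ = 1
  nonneg' : ∀ s : Set (α → M), A.Definable L s → 0 ≤ toFun s
  compl' : ∀ s : Set (α → M), A.Definable L s → toFun sᶜ = 1 - toFun s
  union_inter' : ∀ s t : Set (α → M), A.Definable L s → A.Definable L t →
    toFun (s ∪ t) = toFun s + toFun t - toFun (s ∩ t)

/-- Pull back a set of variable assignments along a variable reindexing map:
for `S ⊆ M^α` and `f : α → β`, `cyl f S ⊆ M^β` is the corresponding cylinder.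
E.g. `cyl Sum.inl X = X × M^β` inside `M^(α ⊕ β)`. -/
def cyl {M : Type*} {α β : Type*} (f : α → β) (S : Set (α → M)) : Set (β → M) :=
  {g : β → M | (fun a => g (f a)) ∈ S}

/-- The product `X × Y` of a set in variables `α` and a set in variables `β`,
viewed inside the variables `α ⊕ β`. -/
def prodSet {M : Type*} {α β : Type*} (X : Set (α → M)) (Y : Set (β → M)) :
    Set (α ⊕ β → M) :=
  cyl Sum.inl X ∩ cyl Sum.inr Y

namespace AmalgamAux

variable {L : FirstOrder.Language} {M : Type*} [L.Structure M] {A : Set M} {γ : Type*}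

lemma km_empty (m : KeislerMeasure L M A γ) : m.toFun ∅ = 0 := by
  have h := m.compl' Set.univ Set.definable_univ
  rw [Set.compl_univ, m.measure_univ] at h
  simpa using h

lemma km_split (m : KeislerMeasure L M A γ) {S T : Set (γ → M)}
    (hS : A.Definable L S) (hT : A.Definable L T) :
    m.toFun S = m.toFun (S ∩ T) + m.toFun (S ∩ Tᶜ) := by
  have h := m.union_inter' (S ∩ T) (S ∩ Tᶜ) (hS.inter hT) (hS.inter hT.compl)
  have h1 : (S ∩ T) ∪ (S ∩ Tᶜ) = S := by
    rw [← Set.inter_union_distrib_left, Set.union_compl_self, Set.inter_univ]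
  have h2 : (S ∩ T) ∩ (S ∩ Tᶜ) = ∅ := by
    ext x; simp only [Set.mem_inter_iff, Set.mem_compl_iff, Set.mem_empty_iff_false]
    tauto
  rw [h1, h2, km_empty] at h
  linarith

/-- the atom of the finite algebra generated by `T` corresponding to sign pattern `σ` -/
def atomOf {n : ℕ} (T : Fin n → Set (γ → M)) (σ : Fin n → Bool) : Set (γ → M) :=
  ⋂ i, (cond (σ i) (T i) (T i)ᶜ)

lemma atomOf_definable {n : ℕ} {T : Fin n → Set (γ → M)} (hT : ∀ i, A.Definable L (T i))
    (σ : Fin n → Bool) : A.Definable L (atomOf T σ) := by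
  have : atomOf T σ = ⋂ i ∈ Finset.univ, (cond (σ i) (T i) (T i)ᶜ) := by
    simp [atomOf]
  rw [this]
  refine Set.definable_biInter_finset (fun i => ?_) _
  cases h : σ i <;> simp [hT i, (hT i).compl]

lemma atomOf_cons {n : ℕ} (T : Fin (n + 1) → Set (γ → M)) (b : Bool) (σ : Fin n → Bool) :
    atomOf T (Fin.cons b σ) =
      (cond b (T 0) (T 0)ᶜ) ∩ atomOf (T ∘ Fin.succ) σ := by
  ext x
  simp only [atomOf, Set.mem_iInter, Set.mem_inter_iff, Fin.forall_fin_succ, Fin.cons_zero,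
    Fin.cons_succ, Function.comp]

lemma atomOf_subset_or {n : ℕ} (T : Fin n → Set (γ → M)) (σ : Fin n → Bool) (i : Fin n) :
    atomOf T σ ⊆ T i ∨ atomOf T σ ⊆ (T i)ᶜ := by
  cases h : σ i
  · right; intro x hx; have := Set.mem_iInter.mp hx i; simpa [h] using this
  · left; intro x hx; have := Set.mem_iInter.mp hx i; simpa [h] using this

/-- partition identity: the measure of a definable set is the sum of the measures of its
intersections with all atoms -/
lemma km_partition (m : KeislerMeasure L M A γ) {S : Set (γ → M)} (hS : A.Definable L S) :
    ∀ {n : ℕ} (T : Fin n → Set (γ → M)), (∀ i, A.Definable L (T i)) →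
      m.toFun S = ∑ σ : Fin n → Bool, m.toFun (S ∩ atomOf T σ) := by
  intro n
  induction n with
  | zero =>
    intro T _
    rw [Fintype.sum_unique]
    congr 1
    simp [atomOf]
  | succ n ih =>
    intro T hT
    have key : ∀ σ : Fin n → Bool,
        ∑ b : Bool, m.toFun (S ∩ atomOf T (Fin.cons b σ))
          = m.toFun (S ∩ atomOf (T ∘ Fin.succ) σ) := by
      intro σ
      have hA : A.Definable L (atomOf (T ∘ Fin.succ) σ) :=
        atomOf_definable (fun i => hT i.succ) σ
      have hsplit := km_split m (hS.inter hA) (hT 0)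
      have e1 : S ∩ atomOf T (Fin.cons true σ) = S ∩ atomOf (T ∘ Fin.succ) σ ∩ T 0 := by
        rw [atomOf_cons]; ext x
        simp only [Set.mem_inter_iff, cond_true]; tauto
      have e2 : S ∩ atomOf T (Fin.cons false σ) = S ∩ atomOf (T ∘ Fin.succ) σ ∩ (T 0)ᶜ := by
        rw [atomOf_cons]; ext x
        simp only [Set.mem_inter_iff, cond_false, Set.mem_compl_iff]; tauto
      rw [Fintype.sum_bool, e1, e2]
      linarith
    symm
    calc ∑ σ : Fin (n+1) → Bool, m.toFun (S ∩ atomOf T σ)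
        = ∑ p : Bool × (Fin n → Bool), m.toFun (S ∩ atomOf T (Fin.cons p.1 p.2)) :=
          (Fintype.sum_equiv (Fin.consEquiv fun _ => Bool) _ _ (fun p => rfl)).symm
      _ = ∑ σ : Fin n → Bool, ∑ b : Bool, m.toFun (S ∩ atomOf T (Fin.cons b σ)) := by
          rw [Fintype.sum_prod_type, Finset.sum_comm]
      _ = ∑ σ : Fin n → Bool, m.toFun (S ∩ atomOf (T ∘ Fin.succ) σ) :=
          Finset.sum_congr rfl (fun σ _ => key σ)
      _ = m.toFun S := (ih (T ∘ Fin.succ) (fun i => hT i.succ)).symm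

variable {α β : Type*}

lemma mem_prodSet_elim (f : α → M) (g : β → M) (X : Set (α → M)) (Y : Set (β → M)) :
    Sum.elim f g ∈ prodSet X Y ↔ f ∈ X ∧ g ∈ Y := Iff.rfl

/-- key positivity lemma: a nonnegative combination of rectangle indicators has nonnegative
product-value. -/
lemma pos_key (mu : KeislerMeasure L M A α) (nu : KeislerMeasure L M A β) {n : ℕ}
    (c : Fin n → ℝ) (X : Fin n → Set (α → M)) (Y : Fin n → Set (β → M))
    (hX : ∀ i, A.Definable L (X i)) (hY : ∀ i, A.Definable L (Y i))
    (hpos : ∀ z : α ⊕ β → M,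
      0 ≤ ∑ i, Set.indicator (prodSet (X i) (Y i)) (fun _ => c i) z) :
    0 ≤ ∑ i, c i * mu.toFun (X i) * nu.toFun (Y i) := by
  classical
  have step1 : ∑ i, c i * mu.toFun (X i) * nu.toFun (Y i)
      = ∑ σ : Fin n → Bool, ∑ τ : Fin n → Bool,
          ∑ i, c i * mu.toFun (X i ∩ atomOf X σ) * nu.toFun (Y i ∩ atomOf Y τ) := by
    have per : ∀ i, c i * mu.toFun (X i) * nu.toFun (Y i)
        = ∑ σ : Fin n → Bool, ∑ τ : Fin n → Bool,
            c i * mu.toFun (X i ∩ atomOf X σ) * nu.toFun (Y i ∩ atomOf Y τ) := by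
      intro i
      rw [km_partition mu (hX i) X hX, km_partition nu (hY i) Y hY, Finset.mul_sum]
      rw [Finset.sum_congr rfl (fun τ (_ : τ ∈ Finset.univ) => by
        rw [Finset.mul_sum, Finset.sum_mul] :
        ∀ τ ∈ Finset.univ, (c i * ∑ σ : Fin n → Bool, mu.toFun (X i ∩ atomOf X σ))
            * nu.toFun (Y i ∩ atomOf Y τ)
          = ∑ σ : Fin n → Bool,
              c i * mu.toFun (X i ∩ atomOf X σ) * nu.toFun (Y i ∩ atomOf Y τ))]
      exact Finset.sum_comm
    calc ∑ i, c i * mu.toFun (X i) * nu.toFun (Y i)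
        = ∑ i, ∑ σ : Fin n → Bool, ∑ τ : Fin n → Bool,
            c i * mu.toFun (X i ∩ atomOf X σ) * nu.toFun (Y i ∩ atomOf Y τ) :=
          Finset.sum_congr rfl (fun i _ => per i)
      _ = ∑ σ : Fin n → Bool, ∑ i, ∑ τ : Fin n → Bool,
            c i * mu.toFun (X i ∩ atomOf X σ) * nu.toFun (Y i ∩ atomOf Y τ) :=
          Finset.sum_comm
      _ = ∑ σ : Fin n → Bool, ∑ τ : Fin n → Bool,
            ∑ i, c i * mu.toFun (X i ∩ atomOf X σ) * nu.toFun (Y i ∩ atomOf Y τ) :=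
          Finset.sum_congr rfl (fun σ _ => Finset.sum_comm)
  rw [step1]
  refine Finset.sum_nonneg (fun σ _ => Finset.sum_nonneg (fun τ _ => ?_))
  rcases Set.eq_empty_or_nonempty (atomOf X σ) with hA | ⟨f, hf⟩
  · refine le_of_eq (Finset.sum_eq_zero (fun i _ => ?_)).symm
    rw [hA, Set.inter_empty, km_empty]
    ring
  rcases Set.eq_empty_or_nonempty (atomOf Y τ) with hB | ⟨g, hg⟩
  · refine le_of_eq (Finset.sum_eq_zero (fun i _ => ?_)).symm
    rw [hB, Set.inter_empty, km_empty]
    ring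
  have hXi : ∀ i, mu.toFun (X i ∩ atomOf X σ) =
      if f ∈ X i then mu.toFun (atomOf X σ) else 0 := by
    intro i
    rcases atomOf_subset_or X σ i with hsub | hsub
    · rw [if_pos (hsub hf)]
      congr 1
      exact Set.inter_eq_self_of_subset_right hsub
    · rw [if_neg (hsub hf), Set.inter_comm,
        Set.subset_compl_iff_disjoint_right.mp hsub |>.inter_eq, km_empty]
  have hYi : ∀ i, nu.toFun (Y i ∩ atomOf Y τ) =
      if g ∈ Y i then nu.toFun (atomOf Y τ) else 0 := by
    intro i
    rcases atomOf_subset_or Y τ i with hsub | hsub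
    · rw [if_pos (hsub hg)]
      congr 1
      exact Set.inter_eq_self_of_subset_right hsub
    · rw [if_neg (hsub hg), Set.inter_comm,
        Set.subset_compl_iff_disjoint_right.mp hsub |>.inter_eq, km_empty]
  have hz := hpos (Sum.elim f g)
  have hterm : ∀ i, c i * mu.toFun (X i ∩ atomOf X σ) * nu.toFun (Y i ∩ atomOf Y τ)
      = Set.indicator (prodSet (X i) (Y i)) (fun _ => c i) (Sum.elim f g)
          * mu.toFun (atomOf X σ) * nu.toFun (atomOf Y τ) := by
    intro i
    rw [hXi i, hYi i, Set.indicator_apply]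
    by_cases h1 : f ∈ X i <;> by_cases h2 : g ∈ Y i <;>
      simp [mem_prodSet_elim, h1, h2]
  calc (0:ℝ) ≤ (∑ i, Set.indicator (prodSet (X i) (Y i)) (fun _ => c i) (Sum.elim f g))
        * mu.toFun (atomOf X σ) * nu.toFun (atomOf Y τ) := by
        refine mul_nonneg (mul_nonneg hz ?_) ?_
        · exact mu.nonneg' _ (atomOf_definable hX σ)
        · exact nu.nonneg' _ (atomOf_definable hY τ)
    _ = ∑ i, c i * mu.toFun (X i ∩ atomOf X σ) * nu.toFun (Y i ∩ atomOf Y τ) := by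
        rw [Finset.sum_mul, Finset.sum_mul]
        exact Finset.sum_congr rfl (fun i _ => (hterm i).symm)

lemma prodSet_univ_univ :
    prodSet (Set.univ : Set (α → M)) (Set.univ : Set (β → M)) = Set.univ := by
  ext z; simp [prodSet, cyl]

lemma cyl_inl_eq (X : Set (α → M)) :
    cyl (Sum.inl : α → α ⊕ β) X = prodSet X (Set.univ : Set (β → M)) := by
  ext z; simp [prodSet, cyl]

lemma cyl_inr_eq (Y : Set (β → M)) :
    cyl (Sum.inr : β → α ⊕ β) Y = prodSet (Set.univ : Set (α → M)) Y := by
  ext z; simp [prodSet, cyl]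

/-- `v` is the product-value of some rectangle representation dominating `h`. -/
def RepLE (mu : KeislerMeasure L M A α) (nu : KeislerMeasure L M A β)
    (h : (α ⊕ β → M) → ℝ) (v : ℝ) : Prop :=
  ∃ (n : ℕ) (c : Fin n → ℝ) (X : Fin n → Set (α → M)) (Y : Fin n → Set (β → M)),
    (∀ i, A.Definable L (X i)) ∧ (∀ i, A.Definable L (Y i)) ∧
    (∀ z, h z ≤ ∑ i, Set.indicator (prodSet (X i) (Y i)) (fun _ => c i) z) ∧
    v = ∑ i, c i * mu.toFun (X i) * nu.toFun (Y i)

variable {mu : KeislerMeasure L M A α} {nu : KeislerMeasure L M A β}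

lemma RepLE.add {h h' : (α ⊕ β → M) → ℝ} {v v' : ℝ}
    (H : RepLE mu nu h v) (H' : RepLE mu nu h' v') : RepLE mu nu (h + h') (v + v') := by
  obtain ⟨n, c, X, Y, hX, hY, hle, rfl⟩ := H
  obtain ⟨m, c', X', Y', hX', hY', hle', rfl⟩ := H'
  refine ⟨n + m, Fin.append c c', Fin.append X X', Fin.append Y Y', ?_, ?_, ?_, ?_⟩
  · refine Fin.addCases (fun i => ?_) (fun i => ?_)
    · rw [Fin.append_left]; exact hX i
    · rw [Fin.append_right]; exact hX' i
  · refine Fin.addCases (fun i => ?_) (fun i => ?_)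
    · rw [Fin.append_left]; exact hY i
    · rw [Fin.append_right]; exact hY' i
  · intro z
    rw [Fin.sum_univ_add]
    simp only [Fin.append_left, Fin.append_right]
    exact add_le_add (hle z) (hle' z)
  · rw [Fin.sum_univ_add]
    simp only [Fin.append_left, Fin.append_right]

lemma RepLE.smul {h : (α ⊕ β → M) → ℝ} {v a : ℝ} (ha : 0 < a)
    (H : RepLE mu nu h v) : RepLE mu nu (a • h) (a * v) := by
  obtain ⟨n, c, X, Y, hX, hY, hle, rfl⟩ := H
  refine ⟨n, fun i => a * c i, X, Y, hX, hY, ?_, ?_⟩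
  · intro z
    have key : ∀ i : Fin n,
        Set.indicator (prodSet (X i) (Y i)) (fun _ => a * c i) z
          = a * Set.indicator (prodSet (X i) (Y i)) (fun _ => c i) z := by
      intro i
      by_cases hz : z ∈ prodSet (X i) (Y i) <;> simp [Set.indicator_apply, hz]
    rw [Finset.sum_congr rfl (fun i _ => key i), ← Finset.mul_sum]
    exact mul_le_mul_of_nonneg_left (hle z) ha.le
  · rw [Finset.mul_sum]
    exact Finset.sum_congr rfl (fun i _ => by ring)

lemma RepLE.lower {h : (α ⊕ β → M) → ℝ} {v C : ℝ} (hC : ∀ z, -C ≤ h z)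
    (H : RepLE mu nu h v) : -C ≤ v := by
  obtain ⟨n, c, X, Y, hX, hY, hle, rfl⟩ := H
  have hp := pos_key mu nu (Fin.append c (fun _ : Fin 1 => C))
    (Fin.append X (fun _ => Set.univ)) (Fin.append Y (fun _ => Set.univ))
    (Fin.addCases (fun i => by rw [Fin.append_left]; exact hX i)
      (fun i => by rw [Fin.append_right]; exact Set.definable_univ))
    (Fin.addCases (fun i => by rw [Fin.append_left]; exact hY i)
      (fun i => by rw [Fin.append_right]; exact Set.definable_univ))
    (fun z => by
      rw [Fin.sum_univ_add]
      simp only [Fin.append_left, Fin.append_right, prodSet_univ_univ,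
        Set.indicator_univ, Fin.sum_univ_one]
      linarith [hle z, hC z])
  rw [Fin.sum_univ_add] at hp
  simp only [Fin.append_left, Fin.append_right, mu.measure_univ, nu.measure_univ,
    Fin.sum_univ_one, mul_one] at hp
  linarith

lemma repLE_const {h : (α ⊕ β → M) → ℝ} {C : ℝ} (hC : ∀ z, h z ≤ C) :
    RepLE mu nu h C := by
  refine ⟨1, fun _ => C, fun _ => Set.univ, fun _ => Set.univ,
    fun _ => Set.definable_univ, fun _ => Set.definable_univ, ?_, ?_⟩
  · intro z
    simpa [prodSet_univ_univ, Fin.sum_univ_one] using hC z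
  · simp [mu.measure_univ, nu.measure_univ, Fin.sum_univ_one]

lemma repLE_nonpos {h : (α ⊕ β → M) → ℝ} (hh : ∀ z, h z ≤ 0) :
    RepLE mu nu h 0 := by
  refine ⟨0, Fin.elim0, Fin.elim0, Fin.elim0, fun i => i.elim0, fun i => i.elim0, ?_, ?_⟩
  · intro z; simpa using hh z
  · simp

lemma repLE_ind {X : Set (α → M)} {Y : Set (β → M)}
    (hX : A.Definable L X) (hY : A.Definable L Y) :
    RepLE mu nu (Set.indicator (prodSet X Y) 1) (mu.toFun X * nu.toFun Y) := by
  refine ⟨1, fun _ => 1, fun _ => X, fun _ => Y, fun _ => hX, fun _ => hY, ?_, ?_⟩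
  · intro z
    rw [Fin.sum_univ_one]
    by_cases hz : z ∈ prodSet X Y <;> simp [Set.indicator_apply, hz]
  · rw [Fin.sum_univ_one, one_mul]

lemma repLE_ind_neg {X : Set (α → M)} {Y : Set (β → M)}
    (hX : A.Definable L X) (hY : A.Definable L Y) :
    RepLE mu nu (-(Set.indicator (prodSet X Y) (1 : (α ⊕ β → M) → ℝ)))
      (-(mu.toFun X * nu.toFun Y)) := by
  refine ⟨1, fun _ => -1, fun _ => X, fun _ => Y, fun _ => hX, fun _ => hY, ?_, ?_⟩
  · intro z
    rw [Fin.sum_univ_one]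
    by_cases hz : z ∈ prodSet X Y <;> simp [Set.indicator_apply, hz]
  · rw [Fin.sum_univ_one]; ring

/-- the submodule of bounded functions -/
def bddFns (Z : Type*) : Submodule ℝ (Z → ℝ) where
  carrier := {h | ∃ C, ∀ z, |h z| ≤ C}
  add_mem' := by
    rintro a b ⟨C, hC⟩ ⟨D, hD⟩
    exact ⟨C + D, fun z => (abs_add_le _ _).trans (add_le_add (hC z) (hD z))⟩
  zero_mem' := ⟨0, fun z => by simp⟩
  smul_mem' := by
    rintro c a ⟨C, hC⟩
    exact ⟨|c| * C, fun z => by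
      rw [Pi.smul_apply, smul_eq_mul, abs_mul]
      exact mul_le_mul_of_nonneg_left (hC z) (abs_nonneg c)⟩

lemma bddFns_bound {Z : Type*} (h : ↥(bddFns Z)) : ∃ C, ∀ z, |(h : Z → ℝ) z| ≤ C := h.2

lemma mem_bddFns {Z : Type*} {h : Z → ℝ} (C : ℝ) (hC : ∀ z, |h z| ≤ C) : h ∈ bddFns Z :=
  ⟨C, hC⟩

end AmalgamAux

/-- For any pair of Keisler measures `μ ∈ 𝔐_α(A)` and `ν ∈ 𝔐_β(A)`, there exists a
separated amalgam `ω ∈ 𝔐_{αβ}(A)` with `π_α(ω) = μ` and `π_β(ω) = ν`. -/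
theorem exists_separated_amalgam {L : FirstOrder.Language} {M : Type*} [L.Structure M]
    (A : Set M) {α β : Type*}
    (mu : KeislerMeasure L M A α) (nu : KeislerMeasure L M A β) :
    ∃ om : KeislerMeasure L M A (α ⊕ β),
      (∀ X : Set (α → M), A.Definable L X → om.toFun (cyl Sum.inl X) = mu.toFun X) ∧
      (∀ Y : Set (β → M), A.Definable L Y → om.toFun (cyl Sum.inr Y) = nu.toFun Y) ∧
      (∀ (X : Set (α → M)) (Y : Set (β → M)), A.Definable L X → A.Definable L Y →
        om.toFun (prodSet X Y) =
          om.toFun (cyl Sum.inl X) * om.toFun (cyl Sum.inr Y)) := by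
  classical
  open AmalgamAux in
  set Z := (α ⊕ β) → M with hZ
  let E := AmalgamAux.bddFns Z
  let N : ↥E → ℝ := fun h => sInf {v | AmalgamAux.RepLE mu nu ↑h v}
  have hS_ne : ∀ h : ↥E, {v | AmalgamAux.RepLE mu nu ↑h v}.Nonempty := by
    intro h
    obtain ⟨C, hC⟩ := AmalgamAux.bddFns_bound h
    exact ⟨C, AmalgamAux.repLE_const (fun z => (abs_le.mp (hC z)).2)⟩
  have hbdd : ∀ h : ↥E, BddBelow {v | AmalgamAux.RepLE mu nu ↑h v} := by
    intro h
    obtain ⟨C, hC⟩ := AmalgamAux.bddFns_bound h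
    exact ⟨-C, fun v hv => AmalgamAux.RepLE.lower (fun z => (abs_le.mp (hC z)).1) hv⟩
  have hNle : ∀ (h : ↥E) (v : ℝ), AmalgamAux.RepLE mu nu ↑h v → N h ≤ v :=
    fun h v hv => csInf_le (hbdd h) hv
  have hleN : ∀ (h : ↥E) (b : ℝ), (∀ v, AmalgamAux.RepLE mu nu ↑h v → b ≤ v) → b ≤ N h :=
    fun h b hb => le_csInf (hS_ne h) (fun v hv => hb v hv)
  have N_add : ∀ x y : ↥E, N (x + y) ≤ N x + N y := by
    intro x y
    have h1 : ∀ w, AmalgamAux.RepLE mu nu ↑y w → N (x + y) - w ≤ N x := by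
      intro w hw
      refine hleN x _ (fun v hv => ?_)
      have hxy : AmalgamAux.RepLE mu nu ↑(x + y) (v + w) := by
        rw [Submodule.coe_add]; exact hv.add hw
      have := hNle _ _ hxy
      linarith
    have h2 : N (x + y) - N x ≤ N y := hleN y _ (fun w hw => by have := h1 w hw; linarith)
    linarith
  have N_hom0 : ∀ (a : ℝ), 0 < a → ∀ x : ↥E, N (a • x) ≤ a * N x := by
    intro a ha x
    have key : ∀ v, AmalgamAux.RepLE mu nu ↑x v → N (a • x) ≤ a * v := by
      intro v hv
      refine hNle _ _ ?_
      rw [Submodule.coe_smul]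
      exact hv.smul ha
    have hdiv : N (a • x) / a ≤ N x := by
      refine hleN x _ (fun v hv => ?_)
      rw [div_le_iff₀ ha]
      have := key v hv
      linarith [mul_comm a v]
    calc N (a • x) = a * (N (a • x) / a) := by field_simp
      _ ≤ a * N x := mul_le_mul_of_nonneg_left hdiv ha.le
  have N_hom : ∀ (a : ℝ), 0 < a → ∀ x : ↥E, N (a • x) = a * N x := by
    intro a ha x
    refine le_antisymm (N_hom0 a ha x) ?_
    have h2 := N_hom0 a⁻¹ (inv_pos.mpr ha) (a • x)
    rw [inv_smul_smul₀ (ne_of_gt ha)] at h2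
    calc a * N x ≤ a * (a⁻¹ * N (a • x)) := mul_le_mul_of_nonneg_left h2 ha.le
      _ = N (a • x) := by field_simp
  have hN0 : 0 ≤ N 0 := by
    refine hleN 0 0 (fun v hv => ?_)
    have : -(0:ℝ) ≤ v := by
      refine AmalgamAux.RepLE.lower (fun z => ?_) hv
      rw [Submodule.coe_zero]
      simp
    linarith
  obtain ⟨g, -, hg⟩ := exists_extension_of_le_sublinear (⟨⊥, 0⟩ : ↥E →ₗ.[ℝ] ℝ) N N_hom N_add
    (fun x => by
      have hx : ((x : ↥E)) = 0 := Submodule.mem_bot ℝ |>.mp x.2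
      show (0 : ↥(⊥ : Submodule ℝ ↥E) →ₗ[ℝ] ℝ) x ≤ N ↑x
      rw [hx]
      simpa using hN0)
  let ind : Set Z → ↥E := fun S =>
    ⟨Set.indicator S 1, AmalgamAux.mem_bddFns 1 (fun z => by
      by_cases hz : z ∈ S <;> simp [Set.indicator_apply, hz])⟩
  have hcoe : ∀ S : Set Z, ((ind S : ↥E) : Z → ℝ) = Set.indicator S 1 := fun S => rfl
  have hval : ∀ (S : Set Z) (v : ℝ), AmalgamAux.RepLE mu nu (Set.indicator S 1) v →
      AmalgamAux.RepLE mu nu (-(Set.indicator S (1 : Z → ℝ))) (-v) → g (ind S) = v := by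
    intro S v h1 h2
    have ha := hg (ind S)
    have hb := hg (-(ind S))
    rw [map_neg] at hb
    have hN1 : N (ind S) ≤ v := hNle _ _ h1
    have hN2 : N (-(ind S)) ≤ -v := by
      refine hNle _ _ ?_
      rw [Submodule.coe_neg, hcoe]
      exact h2
    linarith
  have hrect : ∀ (X : Set (α → M)) (Y : Set (β → M)), A.Definable L X → A.Definable L Y →
      g (ind (prodSet X Y)) = mu.toFun X * nu.toFun Y := by
    intro X Y hX hY
    exact hval _ _ (AmalgamAux.repLE_ind hX hY) (AmalgamAux.repLE_ind_neg hX hY)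
  have huniv : g (ind Set.univ) = 1 := by
    have he : (Set.univ : Set Z) = prodSet Set.univ Set.univ :=
      (AmalgamAux.prodSet_univ_univ).symm
    rw [show ind Set.univ = ind (prodSet Set.univ Set.univ) from congrArg ind he,
      hrect _ _ Set.definable_univ Set.definable_univ, mu.measure_univ, nu.measure_univ,
      mul_one]
  have hnonneg : ∀ s : Set Z, 0 ≤ g (ind s) := by
    intro s
    have hb := hg (-(ind s))
    rw [map_neg] at hb
    have hN2 : N (-(ind s)) ≤ 0 := by
      refine hNle _ _ ?_
      rw [Submodule.coe_neg, hcoe]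
      refine AmalgamAux.repLE_nonpos (fun z => ?_)
      simp only [Pi.neg_apply, neg_nonpos]
      exact Set.indicator_apply_nonneg (fun _ => zero_le_one)
    linarith
  refine ⟨⟨fun S => g (ind S), huniv, fun s _ => hnonneg s, ?_, ?_⟩, ?_, ?_, ?_⟩
  · -- compl'
    intro s _
    have key : ind sᶜ + ind s = ind Set.univ := by
      refine Subtype.ext (funext (fun z => ?_))
      by_cases hz : z ∈ s <;>
        simp [ind, Set.indicator_apply, hz]
    have := congrArg g key
    rw [map_add, huniv] at this
    linarith
  · -- union_inter'
    intro s t _ _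
    have key : ind (s ∪ t) + ind (s ∩ t) = ind s + ind t := by
      refine Subtype.ext (funext (fun z => ?_))
      by_cases hz : z ∈ s <;> by_cases hz' : z ∈ t <;>
        simp [ind, Set.indicator_apply, hz, hz', Set.mem_union, Set.mem_inter_iff]
    have := congrArg g key
    rw [map_add, map_add] at this
    linarith
  · -- left marginal
    intro X hX
    show g (ind (cyl Sum.inl X)) = mu.toFun X
    rw [AmalgamAux.cyl_inl_eq, hrect X Set.univ hX Set.definable_univ, nu.measure_univ,
      mul_one]
  · -- right marginal
    intro Y hY
    show g (ind (cyl Sum.inr Y)) = nu.toFun Y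
    rw [AmalgamAux.cyl_inr_eq, hrect Set.univ Y Set.definable_univ hY, mu.measure_univ,
      one_mul]
  · -- separated
    intro X Y hX hY
    show g (ind (prodSet X Y)) = g (ind (cyl Sum.inl X)) * g (ind (cyl Sum.inr Y))
    rw [hrect X Y hX hY, AmalgamAux.cyl_inl_eq, AmalgamAux.cyl_inr_eq,
      hrect X Set.univ hX Set.definable_univ, hrect Set.univ Y Set.definable_univ hY,
      mu.measure_univ, nu.measure_univ, mul_one, one_mul]
end

section
/- Let p ∈ S_x(M), q ∈ S_y(M) be global complete types and A ⊆ M. If p dominates q over A (p ≥_{D,A} q), then the Dirac measure δ_p extension dominates δ_q over A (δ_p ≥_{E,A} δ_q). -/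
open FirstOrder

/-- The extension space `E(λ, μ)`: all global Keisler measures `ω` in the
variables `α ⊕ β` whose restriction to `A`-definable sets is `λ` and whose
marginal `π_α(ω)` is `μ`. -/
def extSpace (L : FirstOrder.Language) {M : Type*} [L.Structure M] (A : Set M)
    {α β : Type*} (lam : KeislerMeasure L M A (α ⊕ β))
    (mu : KeislerMeasure L M (Set.univ : Set M) α) :
    Set (KeislerMeasure L M (Set.univ : Set M) (α ⊕ β)) :=
  {om | (∀ s : Set (α ⊕ β → M), A.Definable L s → om.toFun s = lam.toFun s) ∧
    (∀ X : Set (α → M), (Set.univ : Set M).Definable L X →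
      om.toFun (cyl Sum.inl X) = mu.toFun X)}

/-- `μ` extension dominates `ν` over `A` (written `μ ≥_{E,A} ν`): there is
`λ ∈ 𝔐_{αβ}(A)` with `π_α(λ) = μ|_A` such that `π_β(ω) = ν` for every
`ω ∈ E(λ, μ)`. -/
def ExtDomOver (L : FirstOrder.Language) {M : Type*} [L.Structure M] (A : Set M)
    {α β : Type*} (mu : KeislerMeasure L M (Set.univ : Set M) α)
    (nu : KeislerMeasure L M (Set.univ : Set M) β) : Prop :=
  ∃ lam : KeislerMeasure L M A (α ⊕ β),
    (∀ X : Set (α → M), A.Definable L X →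
      lam.toFun (cyl Sum.inl X) = mu.toFun X) ∧
    ∀ om ∈ extSpace L A lam mu, ∀ Y : Set (β → M),
      (Set.univ : Set M).Definable L Y → om.toFun (cyl Sum.inr Y) = nu.toFun Y

/-- A complete type over `A` in the variables `α`: an ultrafilter on the
Boolean algebra of `A`-definable subsets of `M^α`. -/
structure CompleteType (L : FirstOrder.Language) (M : Type*) [L.Structure M]
    (A : Set M) (α : Type*) where
  sets : Set (Set (α → M))
  definable_of_mem : ∀ s ∈ sets, A.Definable L s
  univ_mem : Set.univ ∈ sets
  empty_not_mem : ∅ ∉ sets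
  inter_mem : ∀ s ∈ sets, ∀ t ∈ sets, s ∩ t ∈ sets
  superset_mem : ∀ s ∈ sets, ∀ t : Set (α → M), A.Definable L t → s ⊆ t → t ∈ sets
  mem_or_compl_mem : ∀ s : Set (α → M), A.Definable L s → s ∈ sets ∨ sᶜ ∈ sets

/-- `p ∈ S_α(M)` dominates `q ∈ S_β(M)` over `A` (`p ≥_{D,A} q`): there is a complete
type `r ∈ S_{αβ}(A)` such that `X × M^β ∈ r` for every `A`-definable `X ∈ p`, and every
complete global type `w ∈ S_{αβ}(M)` extending `r` with `X × M^β ∈ w` for all `X ∈ p`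
satisfies `M^α × Y ∈ w` for all `Y ∈ q`. -/
def TypeDomOver (L : FirstOrder.Language) {M : Type*} [L.Structure M] (A : Set M)
    {α β : Type*} (p : CompleteType L M (Set.univ : Set M) α)
    (q : CompleteType L M (Set.univ : Set M) β) : Prop :=
  ∃ r : CompleteType L M A (α ⊕ β),
    (∀ X ∈ p.sets, A.Definable L X → cyl Sum.inl X ∈ r.sets) ∧
    ∀ w : CompleteType L M (Set.univ : Set M) (α ⊕ β),
      r.sets ⊆ w.sets → (∀ X ∈ p.sets, cyl Sum.inl X ∈ w.sets) →
      ∀ Y ∈ q.sets, cyl Sum.inr Y ∈ w.sets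

section Aux

open FirstOrder

open scoped Classical

variable {L : FirstOrder.Language} {M : Type*} [L.Structure M] {A : Set M} {α : Type*}

lemma KeislerMeasure.le_one (om : KeislerMeasure L M A α) {s : Set (α → M)}
    (hs : A.Definable L s) : om.toFun s ≤ 1 := by
  have h1 := om.nonneg' sᶜ hs.compl
  have h2 := om.compl' s hs
  linarith

lemma KeislerMeasure.empty (om : KeislerMeasure L M A α) :
    om.toFun (∅ : Set (α → M)) = 0 := by
  have h := om.compl' Set.univ Set.definable_univ
  rw [Set.compl_univ, om.measure_univ] at h
  linarith

lemma KeislerMeasure.inter_ge (om : KeislerMeasure L M A α) {s t : Set (α → M)}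
    (hs : A.Definable L s) (ht : A.Definable L t) :
    om.toFun s + om.toFun t - 1 ≤ om.toFun (s ∩ t) := by
  have hu := om.union_inter' s t hs ht
  have := om.le_one (hs.union ht)
  linarith

lemma KeislerMeasure.sInter_one (om : KeislerMeasure L M A α) {t : Set (Set (α → M))}
    (ht : t.Finite) :
    (∀ s ∈ t, A.Definable L s ∧ om.toFun s = 1) →
    A.Definable L (⋂₀ t) ∧ om.toFun (⋂₀ t) = 1 := by
  refine Set.Finite.induction_on t ht ?_ ?_
  · intro _
    rw [Set.sInter_empty]
    exact ⟨Set.definable_univ, om.measure_univ⟩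
  · intro a t' _ _ ih h
    obtain ⟨hadef, haone⟩ := h a (Set.mem_insert a t')
    obtain ⟨hdef, hone⟩ := ih (fun s hs => h s (Set.mem_insert_of_mem a hs))
    rw [Set.sInter_insert]
    refine ⟨hadef.inter hdef, le_antisymm ?_ ?_⟩
    · exact om.le_one (hadef.inter hdef)
    · have := om.inter_ge hadef hdef
      linarith

lemma CompleteType.not_compl_mem (r : CompleteType L M A α) {s : Set (α → M)}
    (hmem : s ∈ r.sets) : sᶜ ∉ r.sets := by
  intro hc
  have := r.inter_mem s hmem sᶜ hc
  rw [Set.inter_compl_self] at this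
  exact r.empty_not_mem this

lemma cyl_compl {β : Type*} (f : α → β) (S : Set (α → M)) :
    cyl f Sᶜ = (cyl f S)ᶜ := rfl

lemma cyl_definable {β : Type*} (f : α → β) {S : Set (α → M)}
    (hS : A.Definable L S) : A.Definable L (cyl f S) :=
  hS.preimage_comp f

/-- The Dirac measure of a complete type. -/
noncomputable def CompleteType.dirac (r : CompleteType L M A α) : KeislerMeasure L M A α where
  toFun s := if s ∈ r.sets then 1 else 0
  measure_univ := if_pos r.univ_mem
  nonneg' s _ := by split <;> norm_num
  compl' s hs := by
    by_cases h : s ∈ r.sets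
    · rw [if_pos h, if_neg (r.not_compl_mem h)]; norm_num
    · have hc : sᶜ ∈ r.sets := (r.mem_or_compl_mem s hs).resolve_left h
      rw [if_neg h, if_pos hc]; norm_num
  union_inter' s t hs ht := by
    by_cases hsr : s ∈ r.sets <;> by_cases htr : t ∈ r.sets
    · rw [if_pos hsr, if_pos htr, if_pos (r.inter_mem s hsr t htr),
        if_pos (r.superset_mem s hsr (s ∪ t) (hs.union ht) Set.subset_union_left)]
      ring
    · have hint : s ∩ t ∉ r.sets := fun h =>
        htr (r.superset_mem _ h t ht Set.inter_subset_right)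
      rw [if_pos hsr, if_neg htr, if_neg hint,
        if_pos (r.superset_mem s hsr (s ∪ t) (hs.union ht) Set.subset_union_left)]
      ring
    · have hint : s ∩ t ∉ r.sets := fun h =>
        hsr (r.superset_mem _ h s hs Set.inter_subset_left)
      rw [if_neg hsr, if_pos htr, if_neg hint,
        if_pos (r.superset_mem t htr (s ∪ t) (hs.union ht) Set.subset_union_right)]
      ring
    · have hsc : sᶜ ∈ r.sets := (r.mem_or_compl_mem s hs).resolve_left hsr
      have htc : tᶜ ∈ r.sets := (r.mem_or_compl_mem t ht).resolve_left htr
      have hcompl : (s ∪ t)ᶜ ∈ r.sets := by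
        rw [Set.compl_union]; exact r.inter_mem _ hsc _ htc
      have hun : s ∪ t ∉ r.sets := fun h => r.not_compl_mem h hcompl
      have hint : s ∩ t ∉ r.sets := fun h =>
        hsr (r.superset_mem _ h s hs Set.inter_subset_left)
      rw [if_neg hsr, if_neg htr, if_neg hint, if_neg hun]
      ring

@[simp] lemma CompleteType.dirac_apply (r : CompleteType L M A α) (s : Set (α → M)) :
    r.dirac.toFun s = if s ∈ r.sets then 1 else 0 := rfl

end Aux

/-- If `p ≥_{D,A} q` then `δ_p ≥_{E,A} δ_q`: domination of global types implies extension
domination of the corresponding Dirac measures.  (`dp` and `dq` are the Dirac measures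
of `p` and `q` respectively, characterized by their values on definable sets.) -/
theorem extDom_of_typeDom {L : FirstOrder.Language} {M : Type*} [L.Structure M]
    (A : Set M) {α β : Type*}
    (p : CompleteType L M (Set.univ : Set M) α)
    (q : CompleteType L M (Set.univ : Set M) β)
    (hdom : TypeDomOver L A p q)
    (dp : KeislerMeasure L M (Set.univ : Set M) α)
    (dq : KeislerMeasure L M (Set.univ : Set M) β)
    (hdp : ∀ s : Set (α → M), (Set.univ : Set M).Definable L s →
      (s ∈ p.sets → dp.toFun s = 1) ∧ (s ∉ p.sets → dp.toFun s = 0))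
    (hdq : ∀ s : Set (β → M), (Set.univ : Set M).Definable L s →
      (s ∈ q.sets → dq.toFun s = 1) ∧ (s ∉ q.sets → dq.toFun s = 0)) :
    ExtDomOver L A dp dq := by
  obtain ⟨r, hr1, hr2⟩ := hdom
  refine ⟨r.dirac, ?_, ?_⟩
  · -- π_α(δ_r) = δ_p on A-definable sets
    intro X hX
    have hXu : (Set.univ : Set M).Definable L X := hX.mono (Set.subset_univ A)
    by_cases hXp : X ∈ p.sets
    · rw [CompleteType.dirac_apply, if_pos (hr1 X hXp hX), (hdp X hXu).1 hXp]
    · have hXc : Xᶜ ∈ p.sets := (p.mem_or_compl_mem X hXu).resolve_left hXp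
      have hcylc : (cyl Sum.inl X)ᶜ ∈ r.sets := by
        rw [← cyl_compl]; exact hr1 Xᶜ hXc hX.compl
      have hnot : cyl Sum.inl X ∉ r.sets := fun h => r.not_compl_mem h hcylc
      rw [CompleteType.dirac_apply, if_neg hnot, (hdp X hXu).2 hXp]
  · -- every extension of δ_r with marginal δ_p projects to δ_q
    intro om hom
    obtain ⟨homA, homp⟩ := hom
    -- key claim: om assigns measure 1 to cylinders over sets in q
    have key : ∀ Y : Set (β → M), (Set.univ : Set M).Definable L Y → Y ∈ q.sets →
        om.toFun (cyl Sum.inr Y) = 1 := by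
      intro Y hY hYq
      have hcylY : (Set.univ : Set M).Definable L (cyl Sum.inr Y : Set (α ⊕ β → M)) :=
        cyl_definable Sum.inr hY
      rcases lt_or_eq_of_le (om.le_one hcylY) with hlt | heq
      · exfalso
        set c := om.toFun (cyl Sum.inr Y) with hc
        set T : Set (α ⊕ β → M) := (cyl Sum.inr Y)ᶜ with hT
        have hTdef : (Set.univ : Set M).Definable L T := hcylY.compl
        have hTval : om.toFun T = 1 - c := om.compl' _ hcylY
        set G : Set (Set (α ⊕ β → M)) :=
          {S | (Set.univ : Set M).Definable L S ∧ om.toFun S = 1} with hG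
        set g : Set (Set (α ⊕ β → M)) := insert T G with hg
        -- the filter generated by g is proper
        haveI hne : (Filter.generate g).NeBot := by
          rw [Filter.neBot_iff, Ne, ← Filter.empty_mem_iff_bot]
          intro hemp
          rw [Filter.mem_generate_iff] at hemp
          obtain ⟨t, htg, htfin, hsub⟩ := hemp
          have ht'G : t \ {T} ⊆ G := by
            intro s hs
            rcases htg hs.1 with h | h
            · exact absurd h hs.2
            · exact h
          obtain ⟨hdef, hone⟩ := om.sInter_one htfin.diff (fun s hs => ht'G hs)
          have hS0 : T ∩ ⋂₀ (t \ {T}) ⊆ ⋂₀ t := by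
            intro x hx
            rw [Set.mem_sInter]
            intro s hs
            by_cases hsT : s = T
            · rw [hsT]; exact hx.1
            · exact hx.2 s ⟨hs, hsT⟩
          have hpos : 0 < om.toFun (T ∩ ⋂₀ (t \ {T})) := by
            have := om.inter_ge hTdef hdef
            rw [hTval, hone] at this
            linarith
          have hempty : T ∩ ⋂₀ (t \ {T}) = ∅ :=
            Set.subset_empty_iff.mp (hS0.trans hsub)
          rw [hempty, om.empty] at hpos
          exact lt_irrefl 0 hpos
        obtain ⟨U, hU⟩ := Ultrafilter.exists_le (Filter.generate g)
        have hUg : ∀ s ∈ g, s ∈ U := fun s hs => hU (Filter.mem_generate_of_mem hs)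
        -- build a complete global type from U
        set w : CompleteType L M (Set.univ : Set M) (α ⊕ β) :=
          { sets := {S | (Set.univ : Set M).Definable L S ∧ S ∈ U}
            definable_of_mem := fun s hs => hs.1
            univ_mem := ⟨Set.definable_univ, Filter.univ_mem⟩
            empty_not_mem := fun h => U.empty_notMem h.2
            inter_mem := fun s hs t ht => ⟨hs.1.inter ht.1, Filter.inter_mem hs.2 ht.2⟩
            superset_mem := fun s hs t htdef hst =>
              ⟨htdef, Filter.mem_of_superset hs.2 hst⟩
            mem_or_compl_mem := fun s hs =>
              (U.mem_or_compl_mem s).imp (fun h => ⟨hs, h⟩) (fun h => ⟨hs.compl, h⟩) }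
            with hw
        have hsub1 : r.sets ⊆ w.sets := by
          intro s hsr
          have hsdef := r.definable_of_mem s hsr
          have hsu : (Set.univ : Set M).Definable L s := hsdef.mono (Set.subset_univ A)
          have hsone : om.toFun s = 1 := by
            rw [homA s hsdef, CompleteType.dirac_apply, if_pos hsr]
          exact ⟨hsu, hUg s (Set.mem_insert_of_mem T ⟨hsu, hsone⟩)⟩
        have hsub2 : ∀ X ∈ p.sets, cyl Sum.inl X ∈ w.sets := by
          intro X hXp
          have hXu := p.definable_of_mem X hXp
          have hcdef : (Set.univ : Set M).Definable L (cyl Sum.inl X : Set (α ⊕ β → M)) :=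
            cyl_definable Sum.inl hXu
          have hcone : om.toFun (cyl Sum.inl X) = 1 := by
            rw [homp X hXu, (hdp X hXu).1 hXp]
          exact ⟨hcdef, hUg _ (Set.mem_insert_of_mem T ⟨hcdef, hcone⟩)⟩
        have hYw : cyl Sum.inr Y ∈ w.sets := hr2 w hsub1 hsub2 Y hYq
        have hTU : T ∈ U := hUg T (Set.mem_insert T G)
        have : (∅ : Set (α ⊕ β → M)) ∈ U := by
          have := Filter.inter_mem hYw.2 hTU
          rwa [hT, Set.inter_compl_self] at this
        exact U.empty_notMem this
      · exact heq
    intro Y hY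
    by_cases hYq : Y ∈ q.sets
    · rw [key Y hY hYq, (hdq Y hY).1 hYq]
    · have hYc : Yᶜ ∈ q.sets := (q.mem_or_compl_mem Y hY).resolve_left hYq
      have h1 : om.toFun ((cyl Sum.inr Y : Set (α ⊕ β → M))ᶜ) = 1 := by
        rw [← cyl_compl]; exact key Yᶜ hY.compl hYc
      have h2 := om.compl' (cyl Sum.inr Y) (cyl_definable Sum.inr hY)
      rw [(hdq Y hY).2 hYq]
      linarith
end

section
/- Let A ⊆ B ⊆ M be parameter sets and μ ∈ 𝔐_x(M), ν ∈ 𝔐_y(M) global Keisler measures. If μ ≥_{E,A} ν, then μ ≥_{E,B} ν. -/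
open FirstOrder

namespace ExtAux

open Classical in
noncomputable def ind {W : Type*} (s : Set W) (x : W) : ℝ := if x ∈ s then 1 else 0

lemma ind_of_mem {W : Type*} {s : Set W} {x : W} (h : x ∈ s) : ind s x = 1 := by
  simp [ind, h]

lemma ind_of_not_mem {W : Type*} {s : Set W} {x : W} (h : x ∉ s) : ind s x = 0 := by
  simp [ind, h]

lemma abs_ind_le_one {W : Type*} (s : Set W) (x : W) : |ind s x| ≤ 1 := by
  unfold ind; split <;> simp

variable {L : FirstOrder.Language} {M : Type*} [L.Structure M] {C : Set M} {γ : Type*}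

lemma km_empty (κ : KeislerMeasure L M C γ) : κ.toFun ∅ = 0 := by
  have h := κ.compl' Set.univ Set.definable_univ
  rw [Set.compl_univ, κ.measure_univ] at h
  simpa using h

lemma km_add_disjoint (κ : KeislerMeasure L M C γ) {s t : Set (γ → M)}
    (hs : C.Definable L s) (ht : C.Definable L t) (h : s ∩ t = ∅) :
    κ.toFun (s ∪ t) = κ.toFun s + κ.toFun t := by
  rw [κ.union_inter' s t hs ht, h, km_empty]; ring

lemma km_sum_disjoint (κ : KeislerMeasure L M C γ) {ι : Type*} (T : Finset ι)
    (f : ι → Set (γ → M)) (hdef : ∀ i, C.Definable L (f i))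
    (hdis : ∀ i j, i ≠ j → f i ∩ f j = ∅) :
    κ.toFun (⋃ i ∈ T, f i) = ∑ i ∈ T, κ.toFun (f i) := by
  classical
  induction T using Finset.induction_on with
  | empty => simpa using km_empty κ
  | @insert a T haT ih =>
    rw [Finset.set_biUnion_insert, Finset.sum_insert haT]
    have hTdef : C.Definable L (⋃ i ∈ T, f i) := Set.definable_biUnion_finset hdef T
    have hd : f a ∩ ⋃ i ∈ T, f i = ∅ := by
      ext x
      simp only [Set.mem_inter_iff, Set.mem_iUnion, Set.mem_empty_iff_false, iff_false, not_and]
      rintro hxa ⟨i, hi, hxi⟩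
      have hne : a ≠ i := by rintro rfl; exact haT hi
      have h0 : f a ∩ f i = ∅ := hdis a i hne
      exact (Set.eq_empty_iff_forall_notMem.mp h0 x) ⟨hxa, hxi⟩
    rw [km_add_disjoint κ (hdef a) hTdef hd, ih]

def atomOf {W ι : Type*} (u : ι → Set W) (σ : ι → Bool) : Set W :=
  {x | ∀ i, x ∈ u i ↔ σ i = true}

lemma atomOf_definable {ι : Type*} [Fintype ι] {u : ι → Set (γ → M)}
    (hu : ∀ i, C.Definable L (u i)) (σ : ι → Bool) : C.Definable L (atomOf u σ) := by
  classical
  have he : atomOf u σ = ⋂ i ∈ (Finset.univ : Finset ι), (if σ i then u i else (u i)ᶜ) := by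
    ext x
    simp only [atomOf, Set.mem_setOf_eq, Set.mem_iInter, Finset.mem_univ, true_implies]
    refine forall_congr' fun i => ?_
    by_cases hσ : σ i = true
    · simp [hσ]
    · simp [hσ]
  rw [he]
  exact Set.definable_biInter_finset (fun i => by
    by_cases hσ : σ i = true
    · simpa [hσ] using hu i
    · simpa [hσ] using (hu i).compl) _

open Classical in
lemma mem_atomOf_pattern {W ι : Type*} (u : ι → Set W) (x : W) :
    x ∈ atomOf u (fun i => decide (x ∈ u i)) := by
  intro i; simp

lemma atomOf_pattern_eq {W ι : Type*} {u : ι → Set W} {σ : ι → Bool} {x : W}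
    (hx : x ∈ atomOf u σ) : σ = fun i => @decide (x ∈ u i) (Classical.propDecidable _) := by
  funext i
  have := hx i
  by_cases h : x ∈ u i
  · simp [h, this.mp h]
  · have : ¬ (σ i = true) := fun hs => h (this.mpr hs)
    simp [h, Bool.not_eq_true] at this ⊢
    simp [this]

lemma atomOf_disjoint {W ι : Type*} (u : ι → Set W) {σ τ : ι → Bool} (h : σ ≠ τ) :
    atomOf u σ ∩ atomOf u τ = ∅ := by
  classical
  ext x
  simp only [Set.mem_inter_iff, Set.mem_empty_iff_false, iff_false, not_and]
  intro hσ hτ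
  exact h ((atomOf_pattern_eq hσ).trans (atomOf_pattern_eq hτ).symm)

open Classical in
lemma km_measure_eq_sum_atoms (κ : KeislerMeasure L M C γ) {ι : Type*} [Fintype ι]
    {u : ι → Set (γ → M)} (hu : ∀ i, C.Definable L (u i)) (i : ι) :
    κ.toFun (u i) = ∑ σ : ι → Bool, if σ i then κ.toFun (atomOf u σ) else 0 := by
  classical
  have he : u i = ⋃ σ ∈ (Finset.univ.filter fun σ : ι → Bool => σ i = true), atomOf u σ := by
    ext x
    simp only [Set.mem_iUnion, Finset.mem_filter, Finset.mem_univ, true_and]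
    constructor
    · intro hx
      exact ⟨fun j => decide (x ∈ u j), by simp [hx], mem_atomOf_pattern u x⟩
    · rintro ⟨σ, hσ, hxσ⟩
      exact (hxσ i).mpr hσ
  rw [he, km_sum_disjoint κ _ _ (fun σ => atomOf_definable hu σ)
    (fun σ τ h => atomOf_disjoint u h), Finset.sum_filter]

lemma integral_nonneg (κ : KeislerMeasure L M C γ) {ι : Type*} [Fintype ι]
    {u : ι → Set (γ → M)} (hu : ∀ i, C.Definable L (u i)) (a : ι → ℝ)
    (hpos : ∀ x, 0 ≤ ∑ i, a i * ind (u i) x) :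
    0 ≤ ∑ i, a i * κ.toFun (u i) := by
  classical
  have key : ∑ i, a i * κ.toFun (u i)
      = ∑ σ : ι → Bool, (∑ i, if σ i then a i else 0) * κ.toFun (atomOf u σ) := by
    calc ∑ i, a i * κ.toFun (u i)
        = ∑ i, ∑ σ : ι → Bool, (if σ i then a i * κ.toFun (atomOf u σ) else 0) := by
          refine Finset.sum_congr rfl fun i _ => ?_
          rw [km_measure_eq_sum_atoms κ hu i, Finset.mul_sum]
          exact Finset.sum_congr rfl fun σ _ => by split <;> simp
      _ = ∑ σ : ι → Bool, ∑ i, (if σ i then a i else 0) * κ.toFun (atomOf u σ) := by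
          rw [Finset.sum_comm]
          exact Finset.sum_congr rfl fun σ _ => Finset.sum_congr rfl fun i _ => by
            split <;> simp
      _ = _ := by
          exact Finset.sum_congr rfl fun σ _ => (Finset.sum_mul ..).symm
  rw [key]
  refine Finset.sum_nonneg fun σ _ => ?_
  rcases Set.eq_empty_or_nonempty (atomOf u σ) with h | ⟨x, hx⟩
  · rw [h, km_empty]; simp
  · refine mul_nonneg ?_ (κ.nonneg' _ (atomOf_definable hu σ))
    have : (∑ i, if σ i then a i else 0) = ∑ i, a i * ind (u i) x := by
      refine Finset.sum_congr rfl fun i _ => ?_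
      by_cases hσ : σ i = true
      · rw [if_pos hσ, ind_of_mem ((hx i).mpr hσ), mul_one]
      · rw [if_neg hσ, ind_of_not_mem (fun hm => hσ ((hx i).mp hm)), mul_zero]
    rw [this]
    exact hpos x

lemma integral_nonneg₂ (κ : KeislerMeasure L M C γ) {ι₁ ι₂ : Type*} [Fintype ι₁] [Fintype ι₂]
    {u₁ : ι₁ → Set (γ → M)} {u₂ : ι₂ → Set (γ → M)}
    (h₁ : ∀ i, C.Definable L (u₁ i)) (h₂ : ∀ j, C.Definable L (u₂ j))
    (a₁ : ι₁ → ℝ) (a₂ : ι₂ → ℝ)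
    (hpos : ∀ x, 0 ≤ (∑ i, a₁ i * ind (u₁ i) x) + ∑ j, a₂ j * ind (u₂ j) x) :
    0 ≤ (∑ i, a₁ i * κ.toFun (u₁ i)) + ∑ j, a₂ j * κ.toFun (u₂ j) := by
  classical
  have := integral_nonneg κ (ι := ι₁ ⊕ ι₂) (u := Sum.elim u₁ u₂)
    (by rintro (i | j); exacts [h₁ i, h₂ j]) (Sum.elim a₁ a₂)
    (fun x => by rw [Fintype.sum_sum_type]; simpa using hpos x)
  rw [Fintype.sum_sum_type] at this
  simpa using this

lemma integral_nonneg_fin (κ : KeislerMeasure L M C γ) {ι₁ ι₂ : Type*}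
    (T₁ : Finset ι₁) (T₂ : Finset ι₂)
    {u₁ : ι₁ → Set (γ → M)} {u₂ : ι₂ → Set (γ → M)}
    (h₁ : ∀ i, C.Definable L (u₁ i)) (h₂ : ∀ j, C.Definable L (u₂ j))
    (a₁ : ι₁ → ℝ) (a₂ : ι₂ → ℝ)
    (hpos : ∀ x, 0 ≤ (∑ i ∈ T₁, a₁ i * ind (u₁ i) x) + ∑ j ∈ T₂, a₂ j * ind (u₂ j) x) :
    0 ≤ (∑ i ∈ T₁, a₁ i * κ.toFun (u₁ i)) + ∑ j ∈ T₂, a₂ j * κ.toFun (u₂ j) := by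
  classical
  have := integral_nonneg₂ κ (ι₁ := ↥T₁) (ι₂ := ↥T₂)
    (u₁ := fun i => u₁ i.1) (u₂ := fun j => u₂ j.1)
    (fun i => h₁ i.1) (fun j => h₂ j.1) (fun i => a₁ i.1) (fun j => a₂ j.1)
    (fun x => by rw [Finset.sum_coe_sort T₁ (fun i => a₁ i * ind (u₁ i) x),
      Finset.sum_coe_sort T₂ (fun j => a₂ j * ind (u₂ j) x)]; exact hpos x)
  rwa [Finset.sum_coe_sort T₁ (fun i => a₁ i * κ.toFun (u₁ i)),
    Finset.sum_coe_sort T₂ (fun j => a₂ j * κ.toFun (u₂ j))] at this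

lemma nonempty_fun_right {α β W : Type*} (h : Nonempty (α ⊕ β → W)) : Nonempty (β → W) := by
  rcases isEmpty_or_nonempty W with hW | hW
  · obtain ⟨f⟩ := h
    exact ⟨fun b => (hW.false (f (Sum.inr b))).elim⟩
  · exact ⟨fun _ => hW.some⟩

lemma nonempty_fun_left {α β W : Type*} (h : Nonempty (α ⊕ β → W)) : Nonempty (α → W) := by
  rcases isEmpty_or_nonempty W with hW | hW
  · obtain ⟨f⟩ := h
    exact ⟨fun a => (hW.false (f (Sum.inl a))).elim⟩
  · exact ⟨fun _ => hW.some⟩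

def projRelabel {α β : Type*} (F : Finset (α ⊕ β)) (Fβ : Finset β)
    (hFβ : ∀ b, Sum.inr b ∈ (↑F : Set (α ⊕ β)) → b ∈ Fβ) {m : ℕ} (q : ↥Fβ ≃ Fin m) :
    {x : α ⊕ β // x ∈ (↑F : Set (α ⊕ β))} → α ⊕ Fin m
  | ⟨Sum.inl a, _⟩ => Sum.inl a
  | ⟨Sum.inr b, hb⟩ => Sum.inr (q ⟨b, hFβ b hb⟩)

lemma definable_proj {A : Set M} {α β : Type*} {s : Set (α ⊕ β → M)}
    (hs : A.Definable L s) (hβ : Nonempty (β → M)) :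
    A.Definable L ((fun g : α ⊕ β → M => g ∘ Sum.inl) '' s) := by
  classical
  obtain ⟨φ, rfl⟩ := hs
  set F := φ.freeVarFinset with hF
  set Fβ : Finset β := F.preimage Sum.inr (Sum.inr_injective.injOn) with hFβdef
  have hFβ : ∀ b, Sum.inr b ∈ (↑F : Set (α ⊕ β)) → b ∈ Fβ := fun b hb =>
    Finset.mem_preimage.mpr (Finset.mem_coe.mp hb)
  set m := Fintype.card ↥Fβ with hm
  set q : ↥Fβ ≃ Fin m := Fintype.equivFin ↥Fβ with hq
  have hsub : ↑F ⊆ (↑F : Set (α ⊕ β)) := Set.Subset.rfl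
  set φ₀ := φ.restrictFreeVar (Set.inclusion hsub) with hφ₀
  set ρ := projRelabel F Fβ hFβ q with hρ
  set ψ := FirstOrder.Language.Formula.relabel ρ φ₀ with hψ
  have bridge : ∀ (v : (α ⊕ β) → M) (w : (α ⊕ Fin m) → M),
      (∀ x : {x : α ⊕ β // x ∈ (↑F : Set (α ⊕ β))}, v x.1 = w (ρ x)) →
      (φ.Realize v ↔ ψ.Realize w) := by
    intro v w hvw
    rw [hψ, FirstOrder.Language.Formula.realize_relabel]
    have h2 : w ∘ ρ = v ∘ (↑) := funext fun x => (hvw x).symm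
    show _ ↔ FirstOrder.Language.BoundedFormula.Realize φ₀ (w ∘ ρ) default
    rw [h2, hφ₀]
    exact (FirstOrder.Language.BoundedFormula.realize_restrictFreeVar' hsub).symm
  have h₀ : A.Definable L {w : α ⊕ Fin m → M | ψ.Realize w} := ⟨ψ, rfl⟩
  have himg := Set.Definable.image_comp_sumInl_fin m h₀
  convert himg using 1
  ext p
  simp only [Set.mem_image, Set.mem_setOf_eq]
  constructor
  · rintro ⟨g, hg, rfl⟩
    refine ⟨Sum.elim (g ∘ Sum.inl) (fun k => g (Sum.inr (q.symm k))), ?_, rfl⟩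
    refine (bridge g _ ?_).mp hg
    rintro ⟨x, hx⟩
    cases x with
    | inl a => rfl
    | inr b =>
      show g (Sum.inr b) = Sum.elim (g ∘ Sum.inl) (fun k => g (Sum.inr (q.symm k)))
        (ρ ⟨Sum.inr b, hx⟩)
      rw [hρ]
      show g (Sum.inr b) = g (Sum.inr (q.symm (q ⟨b, hFβ b hx⟩)))
      rw [Equiv.symm_apply_apply]
  · rintro ⟨w, hw, rfl⟩
    obtain ⟨z₀⟩ := hβ
    refine ⟨Sum.elim (w ∘ Sum.inl) (fun b => if hb : b ∈ Fβ then w (Sum.inr (q ⟨b, hb⟩)) else z₀ b),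
      ?_, rfl⟩
    refine (bridge _ w ?_).mpr hw
    rintro ⟨x, hx⟩
    cases x with
    | inl a => rfl
    | inr b =>
      have hb : b ∈ Fβ := hFβ b hx
      show (if hb' : b ∈ Fβ then w (Sum.inr (q ⟨b, hb'⟩)) else z₀ b) = w (ρ ⟨Sum.inr b, hx⟩)
      rw [dif_pos hb, hρ]
      rfl

lemma cyl_eq_preimage {W α β : Type*} (f : α → β) (S : Set (α → W)) :
    cyl f S = (fun g : β → W => g ∘ f) ⁻¹' S := rfl

lemma definable_cyl {A : Set M} {α β : Type*} {X : Set (α → M)} (hX : A.Definable L X) :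
    A.Definable L (cyl (Sum.inl : α → α ⊕ β) X) := by
  rw [cyl_eq_preimage]
  exact hX.preimage_comp Sum.inl

lemma ind_cyl {W α β : Type*} (f : α → β) (S : Set (α → W)) (z : β → W) :
    ind (cyl f S) z = ind S (fun a => z (f a)) := by
  by_cases h : (fun a => z (f a)) ∈ S
  · rw [ind_of_mem (show z ∈ cyl f S from h), ind_of_mem h]
  · rw [ind_of_not_mem (show z ∉ cyl f S from h), ind_of_not_mem h]

lemma mixed_nonneg {A : Set M} {α β : Type*}
    (lam : KeislerMeasure L M A (α ⊕ β)) (mu : KeislerMeasure L M (Set.univ : Set M) α)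
    (hmarg : ∀ X : Set (α → M), A.Definable L X → lam.toFun (cyl Sum.inl X) = mu.toFun X)
    (hne : Nonempty (α ⊕ β → M))
    {ι₁ ι₂ : Type*} [Fintype ι₁] [Fintype ι₂]
    {s : ι₁ → Set (α ⊕ β → M)} (hs : ∀ i, A.Definable L (s i))
    {X : ι₂ → Set (α → M)} (hX : ∀ j, (Set.univ : Set M).Definable L (X j))
    (a : ι₁ → ℝ) (b : ι₂ → ℝ)
    (hpos : ∀ z, 0 ≤ (∑ i, a i * ind (s i) z) + ∑ j, b j * ind (cyl Sum.inl (X j)) z) :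
    0 ≤ (∑ i, a i * lam.toFun (s i)) + ∑ j, b j * mu.toFun (X j) := by
  classical
  obtain ⟨q0⟩ := nonempty_fun_right hne
  set c : (ι₁ → Bool) → ℝ := fun σ => ∑ i, if σ i then a i else 0 with hc
  set P : (ι₁ → Bool) → Set (α → M) :=
    fun σ => (fun g : α ⊕ β → M => g ∘ Sum.inl) '' atomOf s σ with hP
  have hPdef : ∀ σ, A.Definable L (P σ) :=
    fun σ => definable_proj (atomOf_definable hs σ) ⟨q0⟩
  have hBdef : ∀ τ : (ι₁ → Bool) → Bool, A.Definable L (atomOf P τ) :=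
    fun τ => atomOf_definable hPdef τ
  obtain ⟨d, hd_le, hd_mem⟩ : ∃ d : ((ι₁ → Bool) → Bool) → ℝ,
      (∀ (τ : (ι₁ → Bool) → Bool) (σ : ι₁ → Bool), τ σ = true → d τ ≤ c σ) ∧
      (∀ τ : (ι₁ → Bool) → Bool, (Finset.univ.filter fun σ : ι₁ → Bool => τ σ = true).Nonempty →
        ∃ σ : ι₁ → Bool, τ σ = true ∧ d τ = c σ) := by
    refine ⟨fun τ => if h : (Finset.univ.filter fun σ => τ σ = true).Nonempty
      then ((Finset.univ.filter fun σ => τ σ = true).image c).min' (h.image c) else 0, ?_, ?_⟩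
    · intro τ σ hτσ
      have hne' : (Finset.univ.filter fun σ' => τ σ' = true).Nonempty := ⟨σ, by simp [hτσ]⟩
      dsimp only
      rw [dif_pos hne']
      exact Finset.min'_le _ _ (Finset.mem_image_of_mem c (by simp [hτσ]))
    · intro τ h
      dsimp only
      rw [dif_pos h]
      obtain ⟨σ, hσ, hval⟩ := Finset.mem_image.mp (Finset.min'_mem _ (h.image c))
      exact ⟨σ, by simpa using hσ, hval.symm⟩
  -- pointwise inequality for the lam-side comparison
  have hpt1 : ∀ z, 0 ≤ (∑ i, a i * ind (s i) z)
      + ∑ τ, (-(d τ)) * ind (cyl Sum.inl (atomOf P τ)) z := by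
    intro z
    obtain ⟨σ₀, hz⟩ : ∃ σ, z ∈ atomOf s σ := ⟨_, mem_atomOf_pattern s z⟩
    have h1 : ∑ i, a i * ind (s i) z = c σ₀ := by
      rw [hc]
      refine Finset.sum_congr rfl fun i _ => ?_
      by_cases h : σ₀ i = true
      · rw [if_pos h, ind_of_mem ((hz i).mpr h), mul_one]
      · rw [if_neg h, ind_of_not_mem (fun hm => h ((hz i).mp hm)), mul_zero]
    obtain ⟨τ₀, hpB⟩ : ∃ τ, (fun a0 => z (Sum.inl a0)) ∈ atomOf P τ :=
      ⟨_, mem_atomOf_pattern P _⟩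
    have h2 : ∑ τ, (-(d τ)) * ind (cyl Sum.inl (atomOf P τ)) z = -(d τ₀) := by
      have hz0 : ∀ τ ∈ Finset.univ, τ ≠ τ₀ →
          (-(d τ)) * ind (cyl Sum.inl (atomOf P τ)) z = 0 := by
        intro τ _ hτ
        rw [ind_cyl, ind_of_not_mem, mul_zero]
        intro hmem
        exact (Set.eq_empty_iff_forall_notMem.mp (atomOf_disjoint P hτ) _) ⟨hmem, hpB⟩
      rw [Finset.sum_eq_single_of_mem τ₀ (Finset.mem_univ τ₀) hz0, ind_cyl,
        ind_of_mem hpB, mul_one]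
    have hτσ : τ₀ σ₀ = true := (hpB σ₀).mp ⟨z, hz, rfl⟩
    rw [h1, h2]
    have := hd_le τ₀ σ₀ hτσ
    linarith
  have concl1 := integral_nonneg₂ lam hs (fun τ => definable_cyl (hBdef τ)) a
    (fun τ => -(d τ)) hpt1
  -- pointwise inequality for the mu side
  have hpt2 : ∀ pt : α → M, 0 ≤ (∑ τ, d τ * ind (atomOf P τ) pt) + ∑ j, b j * ind (X j) pt := by
    intro pt
    obtain ⟨τ₀, hpB⟩ : ∃ τ, pt ∈ atomOf P τ := ⟨_, mem_atomOf_pattern P pt⟩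
    have h2 : ∑ τ, d τ * ind (atomOf P τ) pt = d τ₀ := by
      have hz0 : ∀ τ ∈ Finset.univ, τ ≠ τ₀ → d τ * ind (atomOf P τ) pt = 0 := by
        intro τ _ hτ
        rw [ind_of_not_mem, mul_zero]
        intro hmem
        exact (Set.eq_empty_iff_forall_notMem.mp (atomOf_disjoint P hτ) _) ⟨hmem, hpB⟩
      rw [Finset.sum_eq_single_of_mem τ₀ (Finset.mem_univ τ₀) hz0, ind_of_mem hpB, mul_one]
    obtain ⟨σp, hzp⟩ : ∃ σ, (Sum.elim pt q0) ∈ atomOf s σ := ⟨_, mem_atomOf_pattern s _⟩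
    have hptP : pt ∈ P σp := ⟨Sum.elim pt q0, hzp, by funext a0; rfl⟩
    have hfil : (Finset.univ.filter fun σ => τ₀ σ = true).Nonempty :=
      ⟨σp, by simp [(hpB σp).mp hptP]⟩
    obtain ⟨σm, hτσm, hdeq⟩ := hd_mem τ₀ hfil
    obtain ⟨zm, hzm, hzmp⟩ := (hpB σm).mpr hτσm
    have h1 : ∑ i, a i * ind (s i) zm = c σm := by
      rw [hc]
      refine Finset.sum_congr rfl fun i _ => ?_
      by_cases h : σm i = true
      · rw [if_pos h, ind_of_mem ((hzm i).mpr h), mul_one]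
      · rw [if_neg h, ind_of_not_mem (fun hm => h ((hzm i).mp hm)), mul_zero]
    have h3 : ∀ j, ind (cyl Sum.inl (X j)) zm = ind (X j) pt := by
      intro j
      have hzp : (fun a0 => zm (Sum.inl a0)) = pt := funext fun a0 => congrFun hzmp a0
      rw [ind_cyl, hzp]
    have h4 := hpos zm
    rw [h1] at h4
    rw [h2, hdeq]
    calc (0:ℝ) ≤ c σm + ∑ j, b j * ind (cyl Sum.inl (X j)) zm := h4
      _ = c σm + ∑ j, b j * ind (X j) pt := by
          congr 1
          exact Finset.sum_congr rfl fun j _ => by rw [h3 j]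
  have concl2 := integral_nonneg₂ mu (fun τ => (hBdef τ).mono (Set.subset_univ _)) hX d b hpt2
  have hEq : ∀ τ, lam.toFun (cyl Sum.inl (atomOf P τ)) = mu.toFun (atomOf P τ) :=
    fun τ => hmarg _ (hBdef τ)
  have e1 : ∑ τ, (-(d τ)) * lam.toFun (cyl Sum.inl (atomOf P τ))
      = -∑ τ, d τ * mu.toFun (atomOf P τ) := by
    rw [← Finset.sum_neg_distrib]
    exact Finset.sum_congr rfl fun τ _ => by rw [hEq τ, neg_mul]
  rw [e1] at concl1
  linarith

lemma ind_nonneg {W : Type*} (s : Set W) (x : W) : 0 ≤ ind s x := by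
  unfold ind; split <;> norm_num

theorem exists_extension {A : Set M} {α β : Type*}
    (lam : KeislerMeasure L M A (α ⊕ β)) (mu : KeislerMeasure L M (Set.univ : Set M) α)
    (hmarg : ∀ X : Set (α → M), A.Definable L X → lam.toFun (cyl Sum.inl X) = mu.toFun X)
    (hne : Nonempty (α ⊕ β → M)) :
    ∃ om : KeislerMeasure L M (Set.univ : Set M) (α ⊕ β),
      (∀ s : Set (α ⊕ β → M), A.Definable L s → om.toFun s = lam.toFun s) ∧
      (∀ X : Set (α → M), (Set.univ : Set M).Definable L X →
        om.toFun (cyl Sum.inl X) = mu.toFun X) := by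
  classical
  let Bdd : Submodule ℝ ((α ⊕ β → M) → ℝ) :=
  { carrier := {f | ∃ Cb : ℝ, ∀ x, |f x| ≤ Cb}
    add_mem' := by
      rintro f g ⟨Cf, hf⟩ ⟨Cg, hg⟩
      exact ⟨Cf + Cg, fun x => (abs_add_le _ _).trans (add_le_add (hf x) (hg x))⟩
    zero_mem' := ⟨0, fun x => by simp⟩
    smul_mem' := by
      rintro cc f ⟨Cf, hf⟩
      exact ⟨|cc| * Cf, fun x => by
        rw [Pi.smul_apply, smul_eq_mul, abs_mul]
        exact mul_le_mul_of_nonneg_left (hf x) (abs_nonneg cc)⟩ }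
  let indB : Set (α ⊕ β → M) → ↥Bdd := fun S => ⟨ind S, 1, fun x => abs_ind_le_one S x⟩
  let ι := {s : Set (α ⊕ β → M) // A.Definable L s} ⊕
    {X : Set (α → M) // (Set.univ : Set M).Definable L X}
  let vB : ι → ↥Bdd := Sum.elim (fun s => indB s.1) (fun X => indB (cyl Sum.inl X.1))
  let w : ι → ℝ := Sum.elim (fun s => lam.toFun s.1) (fun X => mu.toFun X.1)
  let Tv : (ι →₀ ℝ) →ₗ[ℝ] ↥Bdd := Finsupp.linearCombination ℝ vB
  let Φ : (ι →₀ ℝ) →ₗ[ℝ] ℝ := Finsupp.linearCombination ℝ w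
  have hTv_apply : ∀ (l : ι →₀ ℝ) (z : α ⊕ β → M),
      ((Tv l : ↥Bdd) : (α ⊕ β → M) → ℝ) z
        = ∑ i ∈ l.support, l i * ((vB i : ↥Bdd) : (α ⊕ β → M) → ℝ) z := by
    intro l z
    rw [show Tv l = l.sum fun i c => c • vB i from Finsupp.linearCombination_apply ℝ l,
      Finsupp.sum, AddSubmonoidClass.coe_finset_sum, Finset.sum_apply]
    exact Finset.sum_congr rfl fun i _ => by rw [SetLike.val_smul, Pi.smul_apply, smul_eq_mul]
  have keypos : ∀ l : ι →₀ ℝ,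
      (∀ z, 0 ≤ ((Tv l : ↥Bdd) : (α ⊕ β → M) → ℝ) z) → 0 ≤ Φ l := by
    intro l hl
    have hΦ : Φ l = ∑ i ∈ l.support, l i * w i := by
      rw [show Φ l = l.sum fun i c => c • w i from Finsupp.linearCombination_apply ℝ l,
        Finsupp.sum]
      exact Finset.sum_congr rfl fun i _ => by rw [smul_eq_mul]
    rw [hΦ]
    set S1 := l.support.toLeft with hS1
    set S2 := l.support.toRight with hS2
    have hsplit : ∀ f : ι → ℝ, ∑ i ∈ l.support, f i
        = (∑ x ∈ S1, f (Sum.inl x)) + ∑ y ∈ S2, f (Sum.inr y) := by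
      intro f
      conv_lhs => rw [← Finset.toLeft_disjSum_toRight (u := l.support)]
      rw [Finset.sum_disjSum]
    have hmix := mixed_nonneg lam mu hmarg hne (ι₁ := ↥S1) (ι₂ := ↥S2)
      (s := fun x => x.1.1) (fun x => x.1.2) (X := fun y => y.1.1) (fun y => y.1.2)
      (fun x => l (Sum.inl x.1)) (fun y => l (Sum.inr y.1))
      (fun z => by
        have h0 := hl z
        rw [hTv_apply, hsplit (fun i => l i * ((vB i : ↥Bdd) : (α ⊕ β → M) → ℝ) z),
          ← Finset.sum_coe_sort S1
            (fun x => l (Sum.inl x) * ((vB (Sum.inl x) : ↥Bdd) : (α ⊕ β → M) → ℝ) z),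
          ← Finset.sum_coe_sort S2
            (fun y => l (Sum.inr y) * ((vB (Sum.inr y) : ↥Bdd) : (α ⊕ β → M) → ℝ) z)] at h0
        exact h0)
    rw [hsplit (fun i => l i * w i),
      ← Finset.sum_coe_sort S1 (fun x => l (Sum.inl x) * w (Sum.inl x)),
      ← Finset.sum_coe_sort S2 (fun y => l (Sum.inr y) * w (Sum.inr y))]
    exact hmix
  have hker : LinearMap.ker Tv ≤ LinearMap.ker Φ := by
    intro l hl
    rw [LinearMap.mem_ker] at hl ⊢
    have h1 : 0 ≤ Φ l := keypos l (fun z => by rw [hl]; simp)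
    have h2 : 0 ≤ Φ (-l) := keypos (-l) (fun z => by rw [map_neg, hl, neg_zero]; simp)
    rw [map_neg] at h2
    linarith
  let Psub : Submodule ℝ ↥Bdd := LinearMap.range Tv
  let φ : ↥Psub →ₗ[ℝ] ℝ :=
    (Submodule.liftQ (LinearMap.ker Tv) Φ hker).comp
      (LinearMap.quotKerEquivRange Tv).symm.toLinearMap
  have heval : ∀ l : ι →₀ ℝ, φ ⟨Tv l, LinearMap.mem_range_self Tv l⟩ = Φ l := by
    intro l
    show (Submodule.liftQ (LinearMap.ker Tv) Φ hker)
      ((LinearMap.quotKerEquivRange Tv).symm ⟨Tv l, LinearMap.mem_range_self Tv l⟩) = Φ l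
    rw [LinearMap.quotKerEquivRange_symm_apply_image]
    rfl
  let N : ↥Bdd → ℝ := fun f => sSup (Set.range ((f : ↥Bdd) : (α ⊕ β → M) → ℝ))
  have hbdd : ∀ f : ↥Bdd, BddAbove (Set.range ((f : ↥Bdd) : (α ⊕ β → M) → ℝ)) := by
    rintro ⟨f, Cb, hC⟩
    exact ⟨Cb, by rintro y ⟨x, rfl⟩; exact (abs_le.mp (hC x)).2⟩
  have hleN : ∀ (f : ↥Bdd) x, ((f : ↥Bdd) : (α ⊕ β → M) → ℝ) x ≤ N f := fun f x =>
    le_csSup (hbdd f) (Set.mem_range_self x)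
  have hNle : ∀ (f : ↥Bdd) (cb : ℝ), (∀ x, ((f : ↥Bdd) : (α ⊕ β → M) → ℝ) x ≤ cb) → N f ≤ cb :=
    fun f cb h => csSup_le (Set.range_nonempty _) (by rintro y ⟨x, rfl⟩; exact h x)
  have N_add : ∀ f g : ↥Bdd, N (f + g) ≤ N f + N g := fun f g =>
    hNle _ _ (fun x => by
      rw [show ((f + g : ↥Bdd) : (α ⊕ β → M) → ℝ) x
        = ((f : ↥Bdd) : (α ⊕ β → M) → ℝ) x + ((g : ↥Bdd) : (α ⊕ β → M) → ℝ) x from rfl]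
      exact add_le_add (hleN f x) (hleN g x))
  have N_smul_le : ∀ (cb : ℝ), 0 < cb → ∀ f, N (cb • f) ≤ cb * N f := by
    intro cb hcb f
    refine hNle _ _ fun x => ?_
    rw [show ((cb • f : ↥Bdd) : (α ⊕ β → M) → ℝ) x = cb * ((f : ↥Bdd) : (α ⊕ β → M) → ℝ) x
      from rfl]
    exact mul_le_mul_of_nonneg_left (hleN f x) hcb.le
  have N_hom : ∀ (cb : ℝ), 0 < cb → ∀ f, N (cb • f) = cb * N f := by
    intro cb hcb f
    refine le_antisymm (N_smul_le cb hcb f) ?_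
    have h2 := N_smul_le cb⁻¹ (inv_pos.mpr hcb) (cb • f)
    rw [smul_smul, inv_mul_cancel₀ hcb.ne', one_smul] at h2
    calc cb * N f ≤ cb * (cb⁻¹ * N (cb • f)) := mul_le_mul_of_nonneg_left h2 hcb.le
      _ = N (cb • f) := by field_simp
  have hdom : ∀ x : ↥Psub, φ x ≤ N x.1 := by
    rintro ⟨y, hy⟩
    obtain ⟨l, rfl⟩ := hy
    refine (heval l).trans_le ?_
    set cb := N (Tv l) with hcb
    set iu : ι := Sum.inl ⟨Set.univ, Set.definable_univ⟩ with hiu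
    set l' : ι →₀ ℝ := cb • Finsupp.single iu 1 - l with hl'
    have hTvsingle : Tv (Finsupp.single iu 1) = vB iu := by
      show Finsupp.linearCombination ℝ vB (Finsupp.single iu 1) = vB iu
      simp
    have hTvl' : ∀ z, 0 ≤ ((Tv l' : ↥Bdd) : (α ⊕ β → M) → ℝ) z := by
      intro z
      have he : Tv l' = cb • vB iu - Tv l := by
        rw [hl', map_sub, map_smul, hTvsingle]
      rw [he, show ((cb • vB iu - Tv l : ↥Bdd) : (α ⊕ β → M) → ℝ) z
        = cb * ind Set.univ z - ((Tv l : ↥Bdd) : (α ⊕ β → M) → ℝ) z from rfl,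
        ind_of_mem (Set.mem_univ z), mul_one]
      have := hleN (Tv l) z
      linarith
    have h0 := keypos l' hTvl'
    have hΦsingle : Φ (Finsupp.single iu 1) = w iu := by
      show Finsupp.linearCombination ℝ w (Finsupp.single iu 1) = w iu
      simp
    have hΦl' : Φ l' = cb - Φ l := by
      rw [hl', map_sub, map_smul, hΦsingle,
        show w iu = lam.toFun Set.univ from rfl, lam.measure_univ]
      simp
    rw [hΦl'] at h0
    linarith
  obtain ⟨g, hg1, hg2⟩ := exists_extension_of_le_sublinear ⟨Psub, φ⟩ N N_hom N_add hdom
  have hgval : ∀ i : ι, g (vB i) = w i := by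
    intro i
    have hTvsingle : Tv (Finsupp.single i 1) = vB i := by
      show Finsupp.linearCombination ℝ vB (Finsupp.single i 1) = vB i
      simp
    have hmem : vB i ∈ Psub := ⟨Finsupp.single i 1, hTvsingle⟩
    have h1 : g (vB i) = φ ⟨vB i, hmem⟩ := hg1 ⟨vB i, hmem⟩
    have hv : (⟨vB i, hmem⟩ : ↥Psub)
        = ⟨Tv (Finsupp.single i 1), LinearMap.mem_range_self Tv (Finsupp.single i 1)⟩ :=
      Subtype.ext hTvsingle.symm
    have hΦsingle : Φ (Finsupp.single i 1) = w i := by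
      show Finsupp.linearCombination ℝ w (Finsupp.single i 1) = w i
      simp
    rw [h1, hv, heval, hΦsingle]
  have huniv : g (indB Set.univ) = 1 := by
    have := hgval (Sum.inl ⟨Set.univ, Set.definable_univ⟩)
    rw [show w (Sum.inl ⟨Set.univ, Set.definable_univ⟩) = lam.toFun Set.univ from rfl,
      lam.measure_univ] at this
    exact this
  have gnonneg : ∀ S : Set (α ⊕ β → M), 0 ≤ g (indB S) := by
    intro S
    have h1 : g (-(indB S)) ≤ N (-(indB S)) := hg2 _
    have h2 : N (-(indB S)) ≤ 0 := hNle _ _ (fun x => by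
      rw [show ((-(indB S) : ↥Bdd) : (α ⊕ β → M) → ℝ) x = -(ind S x) from rfl]
      have := ind_nonneg S x
      linarith)
    rw [map_neg] at h1
    linarith
  have hcompl : ∀ S : Set (α ⊕ β → M), indB Sᶜ = indB Set.univ - indB S := by
    intro S
    apply Subtype.ext
    funext x
    show ind Sᶜ x = ind Set.univ x - ind S x
    by_cases h : x ∈ S
    · rw [ind_of_mem (Set.mem_univ x), ind_of_mem h, ind_of_not_mem (by simpa using h)]; ring
    · rw [ind_of_mem (Set.mem_univ x), ind_of_not_mem h, ind_of_mem (by simpa using h)]; ring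
  have hui : ∀ S T : Set (α ⊕ β → M), indB (S ∪ T) + indB (S ∩ T) = indB S + indB T := by
    intro S T
    apply Subtype.ext
    funext x
    show ind (S ∪ T) x + ind (S ∩ T) x = ind S x + ind T x
    by_cases hS : x ∈ S <;> by_cases hT : x ∈ T <;>
      simp [ind, hS, hT, Set.mem_union, Set.mem_inter_iff]
  refine ⟨⟨fun S => g (indB S), huniv, fun S _ => gnonneg S, ?_, ?_⟩, ?_, ?_⟩
  · intro S _
    have := congrArg g (hcompl S)
    rw [map_sub, huniv] at this
    exact this
  · intro S T _ _
    have := congrArg g (hui S T)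
    rw [map_add, map_add] at this
    linarith
  · intro S hS
    exact hgval (Sum.inl ⟨S, hS⟩)
  · intro X hX
    exact hgval (Sum.inr ⟨X, hX⟩)

lemma km_absurd_of_empty {C : Set M} {γ : Type*} (h : IsEmpty (γ → M))
    (κ : KeislerMeasure L M C γ) : False := by
  have h1 := κ.measure_univ
  have h2 := κ.compl' Set.univ Set.definable_univ
  rw [Set.compl_univ, h1] at h2
  have he : (∅ : Set (γ → M)) = Set.univ := by
    ext x
    exact (h.false x).elim
  rw [he, h1] at h2
  norm_num at h2

end ExtAux

/-- Extension domination is preserved when the parameter set is enlarged: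
if `A ⊆ B` and `μ ≥_{E,A} ν`, then `μ ≥_{E,B} ν`. -/
theorem extDom_mono {L : FirstOrder.Language} {M : Type*} [L.Structure M]
    {A B : Set M} (hAB : A ⊆ B) {α β : Type*}
    (mu : KeislerMeasure L M (Set.univ : Set M) α)
    (nu : KeislerMeasure L M (Set.univ : Set M) β)
    (h : ExtDomOver L A mu nu) : ExtDomOver L B mu nu := by
  obtain ⟨lam0, hmarg, hpush⟩ := h
  rcases isEmpty_or_nonempty (α ⊕ β → M) with hE | hNE
  · exfalso
    rcases isEmpty_or_nonempty (α → M) with hα | hα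
    · exact ExtAux.km_absurd_of_empty hα mu
    rcases isEmpty_or_nonempty (β → M) with hβ | hβ
    · exact ExtAux.km_absurd_of_empty hβ nu
    · exact hE.false (Sum.elim hα.some hβ.some)
  · obtain ⟨om, hA, hM⟩ := ExtAux.exists_extension lam0 mu hmarg hNE
    refine ⟨⟨om.toFun, om.measure_univ,
        fun s hs => om.nonneg' s (hs.mono (Set.subset_univ B)),
        fun s hs => om.compl' s (hs.mono (Set.subset_univ B)),
        fun s t hs ht => om.union_inter' s t (hs.mono (Set.subset_univ B))
          (ht.mono (Set.subset_univ B))⟩,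
      fun X hX => hM X (hX.mono (Set.subset_univ B)), ?_⟩
    rintro om' ⟨hom'A, hom'M⟩ Y hY
    exact hpush om' ⟨fun s hs => (hom'A s (hs.mono hAB)).trans (hA s hs), hom'M⟩ Y hY
end

section
/- Let μ ∈ 𝔐_x(M) be a global Keisler measure and f : M^x → M^y an A-definable function. Then μ extension dominates the pushforward f(μ) over A, i.e., μ ≥_{E,A} f(μ). -/
open FirstOrder

section Aux

open FirstOrder Set

variable {L : FirstOrder.Language} {M : Type*} [L.Structure M]

/-- A formula's realization depends only on its free variables. -/
lemma realize_congr_of_eqOn {γ : Type*} [DecidableEq γ] {L' : FirstOrder.Language}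
    [L'.Structure M] (φ : L'.Formula γ) {v w : γ → M}
    (h : ∀ i ∈ φ.freeVarFinset, v i = w i) :
    φ.Realize v ↔ φ.Realize w := by
  have hsub : ↑φ.freeVarFinset ⊆ (↑φ.freeVarFinset : Set γ) := subset_rfl
  have h1 := (FirstOrder.Language.BoundedFormula.realize_restrictFreeVar' (M := M)
    (φ := φ) hsub (v := v) (xs := default))
  have h2 := (FirstOrder.Language.BoundedFormula.realize_restrictFreeVar' (M := M)
    (φ := φ) hsub (v := w) (xs := default))
  have hvw : (v ∘ (Subtype.val : ↑(↑φ.freeVarFinset : Set γ) → γ)) = w ∘ Subtype.val := by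
    funext i
    exact h i.1 (by exact_mod_cast i.2)
  simp only [Language.Formula.Realize]
  rw [← h1, ← h2, hvw]

/-- If the graph of `f` is a definable set and `M` is nontrivial, then `β` is finite. -/
lemma finite_of_definable_graph {α β : Type*} [Nontrivial M] {B : Set M}
    (f : (α → M) → (β → M))
    (hf : B.Definable L
      {g : α ⊕ β → M | (fun b => g (Sum.inr b)) = f (fun a => g (Sum.inl a))}) :
    Finite β := by
  classical
  obtain ⟨ψ, hψ⟩ := hf
  have key : ∀ b : β, Sum.inr b ∈ ψ.freeVarFinset := by
    intro b₀
    by_contra hb₀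
    obtain ⟨m₁, m₂, hm⟩ := exists_pair_ne M
    set x : α → M := fun _ => m₁ with hx
    set g : α ⊕ β → M := Sum.elim x (f x) with hg
    have hgΓ : ψ.Realize g := by
      have : g ∈ {g : α ⊕ β → M | (fun b => g (Sum.inr b)) = f (fun a => g (Sum.inl a))} := by
        simp only [Set.mem_setOf_eq, hg]
        rfl
      rw [hψ] at this
      exact this
    set m' : M := if f x b₀ = m₁ then m₂ else m₁ with hm'
    have hm'ne : m' ≠ f x b₀ := by
      rw [hm']
      split_ifs with h
      · rw [h]; exact fun hc => hm hc.symm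
      · exact fun hc => h hc.symm
    set g' : α ⊕ β → M := Function.update g (Sum.inr b₀) m' with hg'
    have hgg' : ψ.Realize g' := by
      rw [← realize_congr_of_eqOn ψ (v := g) (w := g') ?_]
      · exact hgΓ
      · intro i hi
        have : i ≠ Sum.inr b₀ := fun h => hb₀ (h ▸ hi)
        exact (Function.update_of_ne this _ _).symm
    have hg'Γ : (fun b => g' (Sum.inr b)) = f (fun a => g' (Sum.inl a)) := by
      have : g' ∈ {g : α ⊕ β → M | (fun b => g (Sum.inr b)) = f (fun a => g (Sum.inl a))} := by
        rw [hψ]; exact hgg'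
      exact this
    have hxg' : (fun a => g' (Sum.inl a)) = x := by
      funext a
      rw [hg', Function.update_of_ne (by simp : (Sum.inl a : α ⊕ β) ≠ Sum.inr b₀)]
      rfl
    have : m' = f x b₀ := by
      have := congrFun hg'Γ b₀
      rw [hxg'] at this
      simpa [hg'] using this
    exact hm'ne this
  exact Finite.of_injective (fun b => (⟨Sum.inr b, key b⟩ : {i // i ∈ ψ.freeVarFinset}))
    (fun b b' h => Sum.inr_injective (congrArg Subtype.val h))

/-- Key lemma: the preimage of a definable set under `x ↦ (x, f x)` is definable,
provided the graph of `f` is definable. -/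
lemma definable_preimage_graph {α β : Type*} {B : Set M}
    (f : (α → M) → (β → M))
    (hf : B.Definable L
      {g : α ⊕ β → M | (fun b => g (Sum.inr b)) = f (fun a => g (Sum.inl a))})
    {S : Set (α ⊕ β → M)} (hS : B.Definable L S) :
    B.Definable L ((fun x => Sum.elim x (f x)) ⁻¹' S) := by
  rcases subsingleton_or_nontrivial M with hM | hM
  · have : Subsingleton (α → M) := ⟨fun a b => funext fun i => Subsingleton.elim _ _⟩
    rcases Set.eq_empty_or_nonempty ((fun x => Sum.elim x (f x)) ⁻¹' S) with h | h
    · rw [h]; exact Set.definable_empty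
    · have : (fun x => Sum.elim x (f x)) ⁻¹' S = Set.univ := by
        obtain ⟨x, hx⟩ := h
        exact Set.eq_univ_of_forall fun y => (Subsingleton.elim y x) ▸ hx
      rw [this]; exact Set.definable_univ
  · have : Finite β := finite_of_definable_graph f hf
    obtain ⟨n, ⟨e⟩⟩ := Finite.exists_equiv_fin β
    set Γ : Set (α ⊕ β → M) :=
      {g : α ⊕ β → M | (fun b => g (Sum.inr b)) = f (fun a => g (Sum.inl a))} with hΓ
    set σ : (α ⊕ Fin n) ≃ (α ⊕ β) := Equiv.sumCongr (Equiv.refl α) e.symm with hσ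
    have h1 := ((hS.inter hf).image_comp_equiv σ).image_comp_sumInl_fin n
    have h2 : ((fun g : α ⊕ Fin n → M => g ∘ Sum.inl) ''
        ((fun g : α ⊕ β → M => g ∘ σ) '' (S ∩ Γ))) =
        (fun g : α ⊕ β → M => g ∘ Sum.inl) '' (S ∩ Γ) := by
      rw [Set.image_image]
      rfl
    rw [h2] at h1
    have h3 : (fun g : α ⊕ β → M => g ∘ Sum.inl) '' (S ∩ Γ) =
        (fun x => Sum.elim x (f x)) ⁻¹' S := by
      ext x
      constructor
      · rintro ⟨g, ⟨hgS, hgΓ⟩, rfl⟩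
        have : Sum.elim (g ∘ Sum.inl) (f (g ∘ Sum.inl)) = g := by
          funext i
          cases i with
          | inl a => rfl
          | inr b => exact (congrFun hgΓ b).symm
        show Sum.elim (g ∘ Sum.inl) (f (g ∘ Sum.inl)) ∈ S
        rw [this]; exact hgS
      · intro hx
        refine ⟨Sum.elim x (f x), ⟨hx, ?_⟩, rfl⟩
        show (fun b => Sum.elim x (f x) (Sum.inr b)) = f (fun a => Sum.elim x (f x) (Sum.inl a))
        rfl
    rwa [h3] at h1

variable {A : Set M} {γ : Type*}

lemma KM_empty (m : KeislerMeasure L M A γ) : m.toFun ∅ = 0 := by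
  have h := m.compl' Set.univ Set.definable_univ
  rw [Set.compl_univ, m.measure_univ] at h
  linarith

lemma KM_le_one (m : KeislerMeasure L M A γ) {s : Set (γ → M)} (hs : A.Definable L s) :
    m.toFun s ≤ 1 := by
  have h1 := m.nonneg' sᶜ hs.compl
  have h2 := m.compl' s hs
  linarith

lemma KM_mono (m : KeislerMeasure L M A γ) {s t : Set (γ → M)} (hs : A.Definable L s)
    (ht : A.Definable L t) (hsub : s ⊆ t) : m.toFun s ≤ m.toFun t := by
  have h1 := m.union_inter' s tᶜ hs ht.compl
  have h2 : s ∩ tᶜ = ∅ := by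
    rw [Set.eq_empty_iff_forall_notMem]
    exact fun x ⟨hxs, hxt⟩ => hxt (hsub hxs)
  have h3 := m.compl' t ht
  have h4 := KM_le_one m (hs.union ht.compl)
  rw [h2, KM_empty m] at h1
  linarith

lemma KM_inter_one (m : KeislerMeasure L M A γ) {s t : Set (γ → M)} (hs : A.Definable L s)
    (ht : A.Definable L t) (h1 : m.toFun t = 1) : m.toFun (s ∩ t) = m.toFun s := by
  have hle : m.toFun (s ∩ t) ≤ m.toFun s :=
    KM_mono m (hs.inter ht) hs Set.inter_subset_left
  have hui := m.union_inter' s t hs ht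
  have hun := KM_le_one m (hs.union ht)
  linarith

end Aux

/-- A global Keisler measure extension dominates its pushforwards: if
`f : M^α → M^β` is an `A`-definable function (its graph is an `A`-definable subset
of `M^(α⊕β)`) and `fmu` is the pushforward `f(μ)` (i.e. `fmu(Y) = μ(f⁻¹(Y))` for
every definable `Y`), then `μ ≥_{E,A} f(μ)`. -/
theorem extDom_pushforward {L : FirstOrder.Language} {M : Type*} [L.Structure M]
    (A : Set M) {α β : Type*}
    (mu : KeislerMeasure L M (Set.univ : Set M) α)
    (f : (α → M) → (β → M))
    (hf : A.Definable L
      {g : α ⊕ β → M | (fun b => g (Sum.inr b)) = f (fun a => g (Sum.inl a))})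
    (fmu : KeislerMeasure L M (Set.univ : Set M) β)
    (hfmu : ∀ Y : Set (β → M), (Set.univ : Set M).Definable L Y →
      fmu.toFun Y = mu.toFun (f ⁻¹' Y)) :
    ExtDomOver L A mu fmu := by
  set e : (α → M) → (α ⊕ β → M) := fun x => Sum.elim x (f x) with he
  set Γ : Set (α ⊕ β → M) :=
    {g : α ⊕ β → M | (fun b => g (Sum.inr b)) = f (fun a => g (Sum.inl a))} with hΓ
  have hΓu : (Set.univ : Set M).Definable L Γ := hf.mono (Set.subset_univ A)
  have keyU : ∀ S : Set (α ⊕ β → M), (Set.univ : Set M).Definable L S →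
      (Set.univ : Set M).Definable L (e ⁻¹' S) :=
    fun S hS => definable_preimage_graph f hΓu hS
  have keyA : ∀ S : Set (α ⊕ β → M), A.Definable L S →
      (Set.univ : Set M).Definable L (e ⁻¹' S) :=
    fun S hS => keyU S (hS.mono (Set.subset_univ A))
  have heΓ : e ⁻¹' Γ = Set.univ := by
    refine Set.eq_univ_of_forall fun x => ?_
    show (fun b => Sum.elim x (f x) (Sum.inr b)) = f (fun a => Sum.elim x (f x) (Sum.inl a))
    rfl
  refine ⟨⟨fun S => mu.toFun (e ⁻¹' S), ?_, ?_, ?_, ?_⟩, ?_, ?_⟩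
  · show mu.toFun (e ⁻¹' Set.univ) = 1
    rw [Set.preimage_univ, mu.measure_univ]
  · exact fun s hs => mu.nonneg' _ (keyA s hs)
  · intro s hs
    show mu.toFun (e ⁻¹' sᶜ) = 1 - mu.toFun (e ⁻¹' s)
    rw [Set.preimage_compl]
    exact mu.compl' _ (keyA s hs)
  · intro s t hs ht
    show mu.toFun (e ⁻¹' (s ∪ t)) = mu.toFun (e ⁻¹' s) + mu.toFun (e ⁻¹' t)
      - mu.toFun (e ⁻¹' (s ∩ t))
    rw [Set.preimage_union, Set.preimage_inter]
    exact mu.union_inter' _ _ (keyA s hs) (keyA t ht)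
  · intro X hX
    show mu.toFun (e ⁻¹' cyl Sum.inl X) = mu.toFun X
    rfl
  · rintro om ⟨homA, homX⟩ Y hY
    have hΓ1 : om.toFun Γ = 1 := by
      have h1 := homA Γ hf
      show om.toFun Γ = 1
      rw [h1]
      show mu.toFun (e ⁻¹' Γ) = 1
      rw [heΓ, mu.measure_univ]
    have hYc : (Set.univ : Set M).Definable L (cyl Sum.inr Y) := hY.preimage_comp (Sum.inr : β → α ⊕ β)
    have hfY : (Set.univ : Set M).Definable L (f ⁻¹' Y) := by
      have := keyU _ hYc
      have hEq : e ⁻¹' cyl Sum.inr Y = f ⁻¹' Y := rfl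
      rwa [hEq] at this
    have hfYc : (Set.univ : Set M).Definable L (cyl Sum.inl (f ⁻¹' Y)) :=
      hfY.preimage_comp (Sum.inl : α → α ⊕ β)
    have hswap : cyl Sum.inr Y ∩ Γ = cyl Sum.inl (f ⁻¹' Y) ∩ Γ := by
      ext g
      constructor
      · rintro ⟨hgY, hgΓ⟩
        refine ⟨?_, hgΓ⟩
        show (fun a => g (Sum.inl a)) ∈ f ⁻¹' Y
        show f (fun a => g (Sum.inl a)) ∈ Y
        rw [← hgΓ]
        exact hgY
      · rintro ⟨hgX, hgΓ⟩
        refine ⟨?_, hgΓ⟩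
        show (fun b => g (Sum.inr b)) ∈ Y
        rw [hgΓ]
        exact hgX
    calc om.toFun (cyl Sum.inr Y)
        = om.toFun (cyl Sum.inr Y ∩ Γ) := (KM_inter_one om hYc hΓu hΓ1).symm
      _ = om.toFun (cyl Sum.inl (f ⁻¹' Y) ∩ Γ) := by rw [hswap]
      _ = om.toFun (cyl Sum.inl (f ⁻¹' Y)) := KM_inter_one om hfYc hΓu hΓ1
      _ = mu.toFun (f ⁻¹' Y) := homX _ hfY
      _ = fmu.toFun Y := (hfmu Y hY).symm
end

section
/- Let A ⊆ M, λ₁ ∈ 𝔐_xy(A) and λ₂ ∈ 𝔐_yz(A) be Keisler measures with π_y(λ₁) = π_y(λ₂). Then there exists λ₃ ∈ 𝔐_xyz(A) such that π_xy(λ₃) = λ₁ and π_yz(λ₃) = λ₂. -/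
open FirstOrder

namespace KeislerAmalgam
open FirstOrder.Language Set
attribute [local instance] Classical.propDecidable
open Pointwise

variable {L : FirstOrder.Language} {M : Type*} [L.Structure M] {A : Set M}

lemma definable_image_comp_inr {α β : Type*} (x₀ : α → M) {s : Set (α ⊕ β → M)}
    (hs : A.Definable L s) : A.Definable L ((fun g : α ⊕ β → M => g ∘ Sum.inr) '' s) := by
  classical
  obtain ⟨φ, rfl⟩ := hs
  set F : Finset α := φ.freeVarFinset.preimage Sum.inl Sum.inl_injective.injOn with hF
  have hsub : ↑φ.freeVarFinset ⊆ (↑φ.freeVarFinset : Set (α ⊕ β)) := subset_rfl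
  let r : {v // v ∈ (↑φ.freeVarFinset : Set (α ⊕ β))} → (↥F ⊕ β) := fun v =>
    match v with
    | ⟨Sum.inl a, hv⟩ => Sum.inl ⟨a, Finset.mem_preimage.mpr hv⟩
    | ⟨Sum.inr b, _⟩ => Sum.inr b
  let ψ : (L[[↥A]]).Formula (↥F ⊕ β) := Formula.relabel r (φ.restrictFreeVar (Set.inclusion hsub))
  let j : ↥F ⊕ β → α ⊕ β := Sum.map Subtype.val id
  have main : ∀ g : α ⊕ β → M, ψ.Realize (g ∘ j) ↔ φ.Realize g := by
    intro g
    have h1 : (g ∘ j) ∘ r = g ∘ (Subtype.val : _ → α ⊕ β) := by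
      funext v
      rcases v with ⟨a | b, hv⟩ <;> rfl
    unfold ψ
    rw [Formula.realize_relabel, h1]
    exact BoundedFormula.realize_restrictFreeVar g (fun a => rfl)
  let ext : (↥F ⊕ β → M) → (α ⊕ β → M) := fun u v =>
    match v with
    | Sum.inl a => if h : a ∈ F then u (Sum.inl ⟨a, h⟩) else x₀ a
    | Sum.inr b => u (Sum.inr b)
  have hext : ∀ u, ext u ∘ j = u := by
    intro u
    funext v
    rcases v with ⟨a, ha⟩ | b
    · simp only [ext, j, Function.comp_apply, Sum.map_inl, id_eq, dif_pos ha]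
    · rfl
  have himg : (fun g : α ⊕ β → M => g ∘ Sum.inr) '' {g | φ.Realize g}
      = (fun u : ↥F ⊕ β → M => u ∘ Sum.inr) '' {u | ψ.Realize u} := by
    ext y
    simp only [Set.mem_image, Set.mem_setOf_eq]
    constructor
    · rintro ⟨g, hg, rfl⟩
      exact ⟨g ∘ j, (main g).mpr hg, rfl⟩
    · rintro ⟨u, hu, rfl⟩
      refine ⟨ext u, ?_, ?_⟩
      · have := main (ext u)
        rw [hext u] at this
        exact this.mp hu
      · funext b; rfl
  rw [himg]
  have hψ : A.Definable L {u : ↥F ⊕ β → M | ψ.Realize u} := ⟨ψ, rfl⟩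
  let e : (β ⊕ Fin (Fintype.card ↥F)) ≃ (↥F ⊕ β) :=
    (Equiv.sumComm β (Fin (Fintype.card ↥F))).trans
      (Equiv.sumCongr (Fintype.equivFin ↥F).symm (Equiv.refl β))
  have h2 := (hψ.image_comp_equiv e).image_comp_sumInl_fin (Fintype.card ↥F)
  have heq : ((fun g : β ⊕ Fin (Fintype.card ↥F) → M => g ∘ Sum.inl) ''
      ((fun g : ↥F ⊕ β → M => g ∘ e) '' {u | ψ.Realize u}))
      = (fun u : ↥F ⊕ β → M => u ∘ Sum.inr) '' {u | ψ.Realize u} := by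
    rw [Set.image_image]
    apply Set.image_congr'
    intro u
    funext b
    rfl
  rwa [heq] at h2

lemma definable_image_comp_inl {β γ : Type*} (z₀ : γ → M) {t : Set (β ⊕ γ → M)}
    (ht : A.Definable L t) : A.Definable L ((fun g : β ⊕ γ → M => g ∘ Sum.inl) '' t) := by
  have h2 := definable_image_comp_inr z₀ (ht.image_comp_equiv (Equiv.sumComm γ β))
  have heq : ((fun g : γ ⊕ β → M => g ∘ Sum.inr) ''
      ((fun g : β ⊕ γ → M => g ∘ (Equiv.sumComm γ β)) '' t))
      = (fun g : β ⊕ γ → M => g ∘ Sum.inl) '' t := by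
    rw [Set.image_image]
    apply Set.image_congr'
    intro u
    funext b
    rfl
  rwa [heq] at h2

section
variable {δ : Type*} (lam : KeislerMeasure L M A δ)

lemma toFun_empty : lam.toFun (∅ : Set (δ → M)) = 0 := by
  have h := lam.compl' Set.univ Set.definable_univ
  rw [Set.compl_univ, lam.measure_univ] at h
  simpa using h

lemma add_of_disjoint {s t : Set (δ → M)} (hs : A.Definable L s) (ht : A.Definable L t)
    (hst : s ∩ t = ∅) : lam.toFun (s ∪ t) = lam.toFun s + lam.toFun t := by
  rw [lam.union_inter' s t hs ht, hst, toFun_empty]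
  ring

lemma split {s t : Set (δ → M)} (hs : A.Definable L s) (ht : A.Definable L t) :
    lam.toFun s = lam.toFun (s ∩ t) + lam.toFun (s ∩ tᶜ) := by
  have h1 : s ∩ t ∩ (s ∩ tᶜ) = ∅ := by
    ext w; simp only [Set.mem_inter_iff, Set.mem_compl_iff, Set.mem_empty_iff_false]; tauto
  have h2 := add_of_disjoint lam (hs.inter ht) (hs.inter ht.compl) h1
  rwa [Set.inter_union_compl] at h2

lemma toFun_biUnion_sum {ι : Type*} (P : ι → Set (δ → M))
    (hdef : ∀ i, A.Definable L (P i)) (hdisj : ∀ i j, i ≠ j → P i ∩ P j = ∅)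
    (s : Set (δ → M)) (hs : A.Definable L s) (F : Finset ι) :
    lam.toFun (s ∩ ⋃ i ∈ F, P i) = ∑ i ∈ F, lam.toFun (s ∩ P i) := by
  classical
  induction F using Finset.induction_on with
  | empty => simp [toFun_empty]
  | insert a F ha ih =>
    rw [Finset.set_biUnion_insert, Set.inter_union_distrib_left,
      add_of_disjoint lam (hs.inter (hdef a)) (hs.inter (Set.definable_biUnion_finset hdef F)),
      ih, Finset.sum_insert ha]
    ext w
    simp only [Set.mem_inter_iff, Set.mem_iUnion, Set.mem_empty_iff_false, iff_false]
    rintro ⟨⟨-, hpa⟩, -, i, hiF, hpi⟩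
    have : a ≠ i := by rintro rfl; exact ha hiF
    have := hdisj a i this
    rw [Set.eq_empty_iff_forall_notMem] at this
    exact this w ⟨hpa, hpi⟩

lemma toFun_partition {ι : Type*} [Fintype ι] (P : ι → Set (δ → M))
    (hdef : ∀ i, A.Definable L (P i)) (hdisj : ∀ i j, i ≠ j → P i ∩ P j = ∅)
    (hcov : (⋃ i, P i) = Set.univ)
    (s : Set (δ → M)) (hs : A.Definable L s) :
    lam.toFun s = ∑ i, lam.toFun (s ∩ P i) := by
  have h := toFun_biUnion_sum lam P hdef hdisj s hs Finset.univ
  rwa [show (⋃ i ∈ (Finset.univ : Finset ι), P i) = Set.univ by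
      rw [← hcov]; simp, Set.inter_univ] at h

lemma L1 (n : ℕ) : ∀ (S : Fin n → Set (δ → M)), (∀ i, A.Definable L (S i)) →
    ∀ (a : Fin n → ℝ) (U : Set (δ → M)), A.Definable L U → ∀ v : ℝ,
    (∀ w ∈ U, v ≤ ∑ i, (if w ∈ S i then a i else 0)) →
    v * lam.toFun U ≤ ∑ i, a i * lam.toFun (S i ∩ U) := by
  induction n with
  | zero =>
    intro S hS a U hU v hpt
    simp only [Finset.univ_eq_empty, Finset.sum_empty]
    rcases Set.eq_empty_or_nonempty U with rfl | ⟨w, hw⟩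
    · rw [toFun_empty]; simp
    · have h1 := hpt w hw
      simp only [Finset.univ_eq_empty, Finset.sum_empty] at h1
      exact mul_nonpos_of_nonpos_of_nonneg h1 (lam.nonneg' U hU)
  | succ n ih =>
    intro S hS a U hU v hpt
    set Sl := S (Fin.last n) with hSl
    set al := a (Fin.last n) with hal
    have claim1 : ∀ w ∈ U ∩ Sl, v - al ≤ ∑ i : Fin n,
        (if w ∈ S i.castSucc then a i.castSucc else 0) := by
      rintro w ⟨hwU, hwS⟩
      have := hpt w hwU
      rw [Fin.sum_univ_castSucc, if_pos hwS] at this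
      linarith
    have claim2 : ∀ w ∈ U ∩ Slᶜ, v ≤ ∑ i : Fin n,
        (if w ∈ S i.castSucc then a i.castSucc else 0) := by
      rintro w ⟨hwU, hwS⟩
      have := hpt w hwU
      rw [Fin.sum_univ_castSucc, if_neg hwS] at this
      linarith
    have h1 := ih (fun i => S i.castSucc) (fun i => hS _) (fun i => a i.castSucc)
      (U ∩ Sl) (hU.inter (hS _)) (v - al) claim1
    have h2 := ih (fun i => S i.castSucc) (fun i => hS _) (fun i => a i.castSucc)
      (U ∩ Slᶜ) (hU.inter (hS _).compl) v claim2
    have hsplitU : lam.toFun U = lam.toFun (U ∩ Sl) + lam.toFun (U ∩ Slᶜ) :=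
      split lam hU (hS _)
    have hsplitS : ∀ i : Fin n, lam.toFun (S i.castSucc ∩ U)
        = lam.toFun (S i.castSucc ∩ (U ∩ Sl)) + lam.toFun (S i.castSucc ∩ (U ∩ Slᶜ)) := by
      intro i
      have := split lam ((hS i.castSucc).inter hU) (hS (Fin.last n))
      rwa [Set.inter_assoc, Set.inter_assoc] at this
    rw [Fin.sum_univ_castSucc]
    have hlast : lam.toFun (S (Fin.last n) ∩ U) = lam.toFun (U ∩ Sl) := by
      rw [hSl, Set.inter_comm]
    calc v * lam.toFun U
        = (v - al) * lam.toFun (U ∩ Sl) + v * lam.toFun (U ∩ Slᶜ)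
          + al * lam.toFun (U ∩ Sl) := by rw [hsplitU]; ring
      _ ≤ (∑ i : Fin n, a i.castSucc * lam.toFun (S i.castSucc ∩ (U ∩ Sl)))
          + (∑ i : Fin n, a i.castSucc * lam.toFun (S i.castSucc ∩ (U ∩ Slᶜ)))
          + al * lam.toFun (U ∩ Sl) := by linarith
      _ = (∑ i : Fin n, a i.castSucc * lam.toFun (S i.castSucc ∩ U))
          + a (Fin.last n) * lam.toFun (S (Fin.last n) ∩ U) := by
          rw [← Finset.sum_add_distrib, hlast, ← hal]
          congr 1
          refine Finset.sum_congr rfl (fun i _ => ?_)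
          rw [hsplitS i]; ring

lemma two_inf {B C : Set ℝ} (hB : B.Nonempty) (hC : C.Nonempty) {c : ℝ}
    (h : ∀ x ∈ B, ∀ y ∈ C, c ≤ x + y) : c ≤ sInf B + sInf C := by
  have h1 : c - sInf C ≤ sInf B := by
    refine le_csInf hB (fun x hx => ?_)
    have h2 : c - x ≤ sInf C := le_csInf hC (fun y hy => by linarith [h x hx y hy])
    linarith
  linarith


end

lemma key {α β γ : Type*} (x₀ : α → M) (z₀ : γ → M)
    (lam₁ : KeislerMeasure L M A (α ⊕ β)) (lam₂ : KeislerMeasure L M A (β ⊕ γ))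
    (h : ∀ Y : Set (β → M), A.Definable L Y →
      lam₁.toFun (cyl Sum.inr Y) = lam₂.toFun (cyl Sum.inl Y))
    {n m : ℕ} (S : Fin n → Set (α ⊕ β → M)) (hS : ∀ i, A.Definable L (S i))
    (a : Fin n → ℝ) (T : Fin m → Set (β ⊕ γ → M)) (hT : ∀ j, A.Definable L (T j))
    (b : Fin m → ℝ) (c : ℝ)
    (hpt : ∀ w : α ⊕ (β ⊕ γ) → M,
      c ≤ (∑ i, if w ∈ cyl (Sum.map id Sum.inl) (S i) then a i else 0)
        + (∑ j, if w ∈ cyl Sum.inr (T j) then b j else 0)) :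
    c ≤ (∑ i, a i * lam₁.toFun (S i)) + (∑ j, b j * lam₂.toFun (T j)) := by
  classical
  set F : (α → M) → (β → M) → ℝ :=
    fun x y => ∑ i, if Sum.elim x y ∈ S i then a i else 0 with hF
  set G : (β → M) → (γ → M) → ℝ :=
    fun y z => ∑ j, if Sum.elim y z ∈ T j then b j else 0 with hG
  have hpt' : ∀ x y z, c ≤ F x y + G y z := by
    intro x y z
    have hw := hpt (Sum.elim x (Sum.elim y z))
    have e1 : ∀ i, (Sum.elim x (Sum.elim y z) ∈ cyl (Sum.map id Sum.inl) (S i))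
        ↔ Sum.elim x y ∈ S i := by
      intro i
      have e : (fun v => Sum.elim x (Sum.elim y z) (Sum.map id Sum.inl v)) = Sum.elim x y := by
        funext v; rcases v with a' | b' <;> rfl
      simp only [cyl, Set.mem_setOf_eq, e]
    have e2 : ∀ j, (Sum.elim x (Sum.elim y z) ∈ cyl Sum.inr (T j)) ↔ Sum.elim y z ∈ T j := by
      intro j
      have e : (fun v => Sum.elim x (Sum.elim y z) (Sum.inr v)) = Sum.elim y z := by
        funext v; rfl
      simp only [cyl, Set.mem_setOf_eq, e]
    simp only [e1, e2] at hw
    exact hw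
  set patt1 : (α → M) → (β → M) → (Fin n → Bool) :=
    fun x y i => decide (Sum.elim x y ∈ S i) with hpatt1
  set patt2 : (β → M) → (γ → M) → (Fin m → Bool) :=
    fun y z j => decide (Sum.elim y z ∈ T j) with hpatt2
  set val1 : (Fin n → Bool) → ℝ := fun σ => ∑ i, if σ i then a i else 0 with hval1
  set val2 : (Fin m → Bool) → ℝ := fun τ => ∑ j, if τ j then b j else 0 with hval2
  have hFval : ∀ x y, F x y = val1 (patt1 x y) := by
    intro x y
    refine Finset.sum_congr rfl (fun i _ => ?_)
    by_cases hmem : Sum.elim x y ∈ S i <;> simp [hpatt1, hmem]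
  have hGval : ∀ y z, G y z = val2 (patt2 y z) := by
    intro y z
    refine Finset.sum_congr rfl (fun j _ => ?_)
    by_cases hmem : Sum.elim y z ∈ T j <;> simp [hpatt2, hmem]
  set proj1 : (Fin n → Bool) → Set (β → M) := fun σ => {y | ∃ x, patt1 x y = σ} with hproj1
  set proj2 : (Fin m → Bool) → Set (β → M) := fun τ => {y | ∃ z, patt2 y z = τ} with hproj2
  have hproj1def : ∀ σ, A.Definable L (proj1 σ) := by
    intro σ
    have hSσ : A.Definable L {u : α ⊕ β → M | ∀ i, (u ∈ S i ↔ σ i = true)} := by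
      have e : {u : α ⊕ β → M | ∀ i, (u ∈ S i ↔ σ i = true)}
          = ⋂ i ∈ (Finset.univ : Finset (Fin n)), (if σ i then S i else (S i)ᶜ) := by
        ext u
        simp only [Set.mem_setOf_eq, Set.mem_iInter, Finset.mem_univ, true_implies]
        refine forall_congr' (fun i => ?_)
        by_cases hσ : σ i = true <;> simp [hσ]
      rw [e]
      refine Set.definable_biInter_finset (fun i => ?_) _
      by_cases hσ : σ i = true <;> simp [hσ, hS i, (hS i).compl]
    have himg : proj1 σ
        = (fun g : α ⊕ β → M => g ∘ Sum.inr) '' {u | ∀ i, (u ∈ S i ↔ σ i = true)} := by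
      ext y
      simp only [hproj1, Set.mem_setOf_eq, Set.mem_image]
      constructor
      · rintro ⟨x, hx⟩
        refine ⟨Sum.elim x y, fun i => ?_, funext fun b' => rfl⟩
        rw [← hx]
        simp [hpatt1]
      · rintro ⟨g, hg, rfl⟩
        refine ⟨g ∘ Sum.inl, funext fun i => ?_⟩
        have e : Sum.elim (g ∘ Sum.inl) (g ∘ Sum.inr) = g := Sum.elim_comp_inl_inr g
        simp only [hpatt1, e]
        by_cases hgi : g ∈ S i
        · simp [hgi, (hg i).mp hgi]
        · have hσi : σ i = false := by
            cases hc : σ i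
            · rfl
            · exact absurd ((hg i).mpr hc) hgi
          simp [hgi, hσi]
    rw [himg]
    exact definable_image_comp_inr x₀ hSσ
  have hproj2def : ∀ τ, A.Definable L (proj2 τ) := by
    intro τ
    have hTτ : A.Definable L {u : β ⊕ γ → M | ∀ j, (u ∈ T j ↔ τ j = true)} := by
      have e : {u : β ⊕ γ → M | ∀ j, (u ∈ T j ↔ τ j = true)}
          = ⋂ j ∈ (Finset.univ : Finset (Fin m)), (if τ j then T j else (T j)ᶜ) := by
        ext u
        simp only [Set.mem_setOf_eq, Set.mem_iInter, Finset.mem_univ, true_implies]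
        refine forall_congr' (fun j => ?_)
        by_cases hτ : τ j = true <;> simp [hτ]
      rw [e]
      refine Set.definable_biInter_finset (fun j => ?_) _
      by_cases hτ : τ j = true <;> simp [hτ, hT j, (hT j).compl]
    have himg : proj2 τ
        = (fun g : β ⊕ γ → M => g ∘ Sum.inl) '' {u | ∀ j, (u ∈ T j ↔ τ j = true)} := by
      ext y
      simp only [hproj2, Set.mem_setOf_eq, Set.mem_image]
      constructor
      · rintro ⟨z, hz⟩
        refine ⟨Sum.elim y z, fun j => ?_, funext fun b' => rfl⟩
        rw [← hz]
        simp [hpatt2]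
      · rintro ⟨g, hg, rfl⟩
        refine ⟨g ∘ Sum.inr, funext fun j => ?_⟩
        have e : Sum.elim (g ∘ Sum.inl) (g ∘ Sum.inr) = g := Sum.elim_comp_inl_inr g
        simp only [hpatt2, e]
        by_cases hgj : g ∈ T j
        · simp [hgj, (hg j).mp hgj]
        · have hτj : τ j = false := by
            cases hc : τ j
            · rfl
            · exact absurd ((hg j).mpr hc) hgj
          simp [hgj, hτj]
    rw [himg]
    exact definable_image_comp_inl z₀ hTτ
  set piece : (((Fin n → Bool) → Bool) × ((Fin m → Bool) → Bool)) → Set (β → M) := fun p =>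
    {y | (∀ σ, (y ∈ proj1 σ ↔ p.1 σ = true)) ∧ (∀ τ, (y ∈ proj2 τ ↔ p.2 τ = true))} with hpiece
  have hpiecedef : ∀ p, A.Definable L (piece p) := by
    intro p
    have e : piece p =
        (⋂ σ ∈ (Finset.univ : Finset ((Fin n) → Bool)), (if p.1 σ then proj1 σ else (proj1 σ)ᶜ))
        ∩ (⋂ τ ∈ (Finset.univ : Finset ((Fin m) → Bool)), (if p.2 τ then proj2 τ else (proj2 τ)ᶜ)) := by
      ext y
      simp only [hpiece, Set.mem_setOf_eq, Set.mem_inter_iff, Set.mem_iInter, Finset.mem_univ,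
        true_implies]
      refine and_congr (forall_congr' fun σ => ?_) (forall_congr' fun τ => ?_)
      · by_cases hσ : p.1 σ = true <;> simp [hσ]
      · by_cases hτ : p.2 τ = true <;> simp [hτ]
    rw [e]
    refine (Set.definable_biInter_finset (fun σ => ?_) _).inter
      (Set.definable_biInter_finset (fun τ => ?_) _)
    · by_cases hσ : p.1 σ = true <;> simp [hσ, hproj1def σ, (hproj1def σ).compl]
    · by_cases hτ : p.2 τ = true <;> simp [hτ, hproj2def τ, (hproj2def τ).compl]
  have hpiecedisj : ∀ p q, p ≠ q → piece p ∩ piece q = ∅ := by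
    intro p q hpq
    rw [Set.eq_empty_iff_forall_notMem]
    rintro y ⟨hyp, hyq⟩
    apply hpq
    ext1
    · funext σ
      rw [Bool.eq_iff_iff, ← (hyp.1 σ), (hyq.1 σ)]
    · funext τ
      rw [Bool.eq_iff_iff, ← (hyp.2 τ), (hyq.2 τ)]
  have hpiececov : ∀ y : β → M, y ∈ piece
      (fun σ => decide (y ∈ proj1 σ), fun τ => decide (y ∈ proj2 τ)) := by
    intro y
    constructor <;> intro s' <;> simp
  set uu : (((Fin n → Bool) → Bool) × ((Fin m → Bool) → Bool)) → ℝ :=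
    fun p => sInf (val1 '' {σ | p.1 σ = true}) with huu
  set vv : (((Fin n → Bool) → Bool) × ((Fin m → Bool) → Bool)) → ℝ :=
    fun p => sInf (val2 '' {τ | p.2 τ = true}) with hvv
  have factA : ∀ p (x : α → M) (y : β → M), y ∈ piece p → uu p ≤ F x y := by
    intro p x y hy
    have h1 : p.1 (patt1 x y) = true := (hy.1 (patt1 x y)).mp ⟨x, rfl⟩
    rw [hFval x y]
    exact csInf_le ((Set.toFinite _).image val1).bddBelow ⟨patt1 x y, h1, rfl⟩
  have factA2 : ∀ p (y : β → M) (z : γ → M), y ∈ piece p → vv p ≤ G y z := by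
    intro p y z hy
    have h1 : p.2 (patt2 y z) = true := (hy.2 (patt2 y z)).mp ⟨z, rfl⟩
    rw [hGval y z]
    exact csInf_le ((Set.toFinite _).image val2).bddBelow ⟨patt2 y z, h1, rfl⟩
  have factB : ∀ p, (piece p).Nonempty → c ≤ uu p + vv p := by
    rintro p ⟨y₁, hy₁⟩
    have hne1 : (val1 '' {σ | p.1 σ = true}).Nonempty :=
      ⟨val1 (patt1 x₀ y₁), patt1 x₀ y₁, (hy₁.1 _).mp ⟨x₀, rfl⟩, rfl⟩
    have hne2 : (val2 '' {τ | p.2 τ = true}).Nonempty :=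
      ⟨val2 (patt2 y₁ z₀), patt2 y₁ z₀, (hy₁.2 _).mp ⟨z₀, rfl⟩, rfl⟩
    refine two_inf hne1 hne2 ?_
    rintro r ⟨σ, hσ, rfl⟩ s' ⟨τ, hτ, rfl⟩
    obtain ⟨x, hx⟩ := (hy₁.1 σ).mpr hσ
    obtain ⟨z, hz⟩ := (hy₁.2 τ).mpr hτ
    have hb := hpt' x y₁ z
    rw [hFval, hGval, hx, hz] at hb
    exact hb
  set P1 : (((Fin n → Bool) → Bool) × ((Fin m → Bool) → Bool)) → Set (α ⊕ β → M) :=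
    fun p => cyl Sum.inr (piece p) with hP1
  set P2 : (((Fin n → Bool) → Bool) × ((Fin m → Bool) → Bool)) → Set (β ⊕ γ → M) :=
    fun p => cyl Sum.inl (piece p) with hP2
  have hP1def : ∀ p, A.Definable L (P1 p) := fun p =>
    show A.Definable L ((fun g : α ⊕ β → M => g ∘ Sum.inr) ⁻¹' (piece p)) from
      (hpiecedef p).preimage_comp Sum.inr
  have hP2def : ∀ p, A.Definable L (P2 p) := fun p =>
    show A.Definable L ((fun g : β ⊕ γ → M => g ∘ Sum.inl) ⁻¹' (piece p)) from
      (hpiecedef p).preimage_comp Sum.inl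
  have hP1disj : ∀ p q, p ≠ q → P1 p ∩ P1 q = ∅ := by
    intro p q hpq
    rw [Set.eq_empty_iff_forall_notMem]
    rintro u ⟨hup, huq⟩
    have := hpiecedisj p q hpq
    rw [Set.eq_empty_iff_forall_notMem] at this
    exact this (fun b' => u (Sum.inr b')) ⟨hup, huq⟩
  have hP2disj : ∀ p q, p ≠ q → P2 p ∩ P2 q = ∅ := by
    intro p q hpq
    rw [Set.eq_empty_iff_forall_notMem]
    rintro u ⟨hup, huq⟩
    have := hpiecedisj p q hpq
    rw [Set.eq_empty_iff_forall_notMem] at this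
    exact this (fun b' => u (Sum.inl b')) ⟨hup, huq⟩
  have hP1cov : (⋃ p, P1 p) = Set.univ := by
    rw [Set.eq_univ_iff_forall]
    intro u
    rw [Set.mem_iUnion]
    exact ⟨_, hpiececov (fun b' => u (Sum.inr b'))⟩
  have hP2cov : (⋃ p, P2 p) = Set.univ := by
    rw [Set.eq_univ_iff_forall]
    intro u
    rw [Set.mem_iUnion]
    exact ⟨_, hpiececov (fun b' => u (Sum.inl b'))⟩
  have side1 : ∀ p, uu p * lam₁.toFun (P1 p) ≤ ∑ i, a i * lam₁.toFun (S i ∩ P1 p) := by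
    intro p
    refine L1 lam₁ n S hS a (P1 p) (hP1def p) (uu p) (fun w hw => ?_)
    have hy : (w ∘ Sum.inr) ∈ piece p := hw
    have hq := factA p (w ∘ Sum.inl) (w ∘ Sum.inr) hy
    rw [hF] at hq
    simpa only [Sum.elim_comp_inl_inr] using hq
  have side2 : ∀ p, vv p * lam₂.toFun (P2 p) ≤ ∑ j, b j * lam₂.toFun (T j ∩ P2 p) := by
    intro p
    refine L1 lam₂ m T hT b (P2 p) (hP2def p) (vv p) (fun w hw => ?_)
    have hy : (w ∘ Sum.inl) ∈ piece p := hw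
    have hq := factA2 p (w ∘ Sum.inl) (w ∘ Sum.inr) hy
    rw [hG] at hq
    simpa only [Sum.elim_comp_inl_inr] using hq
  have marg : ∀ p, lam₂.toFun (P2 p) = lam₁.toFun (P1 p) := fun p =>
    (h (piece p) (hpiecedef p)).symm
  have total : ∑ p, lam₁.toFun (P1 p) = 1 := by
    have e := toFun_partition lam₁ P1 hP1def hP1disj hP1cov Set.univ Set.definable_univ
    rw [lam₁.measure_univ] at e
    rw [show (∑ p, lam₁.toFun (P1 p)) = ∑ p, lam₁.toFun (Set.univ ∩ P1 p) from
      Finset.sum_congr rfl (fun p _ => by rw [Set.univ_inter]), ← e]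
  have perp : ∀ p, c * lam₁.toFun (P1 p)
      ≤ uu p * lam₁.toFun (P1 p) + vv p * lam₂.toFun (P2 p) := by
    intro p
    rcases Set.eq_empty_or_nonempty (piece p) with hemp | hne
    · have e1 : P1 p = ∅ := by
        rw [Set.eq_empty_iff_forall_notMem]
        intro u hu
        rw [Set.eq_empty_iff_forall_notMem] at hemp
        exact hemp _ hu
      have e2 : P2 p = ∅ := by
        rw [Set.eq_empty_iff_forall_notMem]
        intro u hu
        rw [Set.eq_empty_iff_forall_notMem] at hemp
        exact hemp _ hu
      rw [e1, e2, toFun_empty, toFun_empty]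
      simp
    · have hb := factB p hne
      have h0 := lam₁.nonneg' _ (hP1def p)
      rw [marg p]
      have := mul_le_mul_of_nonneg_right hb h0
      rw [add_mul] at this
      linarith
  have sum1 : ∑ i, a i * lam₁.toFun (S i) = ∑ p, ∑ i, a i * lam₁.toFun (S i ∩ P1 p) := by
    rw [Finset.sum_comm]
    refine Finset.sum_congr rfl (fun i _ => ?_)
    rw [toFun_partition lam₁ P1 hP1def hP1disj hP1cov (S i) (hS i), Finset.mul_sum]
  have sum2 : ∑ j, b j * lam₂.toFun (T j) = ∑ p, ∑ j, b j * lam₂.toFun (T j ∩ P2 p) := by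
    rw [Finset.sum_comm]
    refine Finset.sum_congr rfl (fun j _ => ?_)
    rw [toFun_partition lam₂ P2 hP2def hP2disj hP2cov (T j) (hT j), Finset.mul_sum]
  calc c = c * ∑ p, lam₁.toFun (P1 p) := by rw [total]; ring
    _ = ∑ p, c * lam₁.toFun (P1 p) := Finset.mul_sum _ _ _
    _ ≤ ∑ p, (uu p * lam₁.toFun (P1 p) + vv p * lam₂.toFun (P2 p)) :=
        Finset.sum_le_sum (fun p _ => perp p)
    _ = (∑ p, uu p * lam₁.toFun (P1 p)) + ∑ p, vv p * lam₂.toFun (P2 p) :=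
        Finset.sum_add_distrib
    _ ≤ (∑ i, a i * lam₁.toFun (S i)) + (∑ j, b j * lam₂.toFun (T j)) := by
        rw [sum1, sum2]
        exact add_le_add (Finset.sum_le_sum fun p _ => side1 p)
          (Finset.sum_le_sum fun p _ => side2 p)


lemma false_of_isEmpty (lam : KeislerMeasure L M A δ) (he : IsEmpty (δ → M)) : False := by
  have h1 : (Set.univ : Set (δ → M)) = ∅ := Set.univ_eq_empty_iff.mpr he
  have h2 := lam.measure_univ
  rw [h1, toFun_empty] at h2
  exact absurd h2 (by norm_num)

/-- The submodule of bounded functions. -/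
def bddFuns (W : Type*) : Submodule ℝ (W → ℝ) where
  carrier := {f | ∃ C, ∀ w, |f w| ≤ C}
  add_mem' := by
    rintro f g ⟨C, hC⟩ ⟨D, hD⟩
    exact ⟨C + D, fun w => (abs_add_le _ _).trans (add_le_add (hC w) (hD w))⟩
  zero_mem' := ⟨0, fun w => by simp⟩
  smul_mem' := by
    rintro c f ⟨C, hC⟩
    refine ⟨|c| * C, fun w => ?_⟩
    rw [Pi.smul_apply, smul_eq_mul, abs_mul]
    exact mul_le_mul_of_nonneg_left (hC w) (abs_nonneg c)

variable {α β γ : Type*} (lam₁ : KeislerMeasure L M A (α ⊕ β))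
  (lam₂ : KeislerMeasure L M A (β ⊕ γ))

/-- `r` is the value of a definable combination dominating `f`. -/
def Rep (f : (α ⊕ (β ⊕ γ) → M) → ℝ) (r : ℝ) : Prop :=
  ∃ (n m : ℕ) (S : Fin n → Set (α ⊕ β → M)) (a : Fin n → ℝ)
    (T : Fin m → Set (β ⊕ γ → M)) (b : Fin m → ℝ),
    (∀ i, A.Definable L (S i)) ∧ (∀ j, A.Definable L (T j)) ∧
    (∀ w, f w ≤ (∑ i, if w ∈ cyl (Sum.map id Sum.inl) (S i) then a i else 0)
      + (∑ j, if w ∈ cyl Sum.inr (T j) then b j else 0)) ∧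
    r = (∑ i, a i * lam₁.toFun (S i)) + (∑ j, b j * lam₂.toFun (T j))

lemma rep_add {f f' : (α ⊕ (β ⊕ γ) → M) → ℝ} {r r' : ℝ}
    (hf : Rep lam₁ lam₂ f r) (hf' : Rep lam₁ lam₂ f' r') :
    Rep lam₁ lam₂ (f + f') (r + r') := by
  obtain ⟨n, m, S, a, T, b, hS, hT, hle, rfl⟩ := hf
  obtain ⟨n', m', S', a', T', b', hS', hT', hle', rfl⟩ := hf'
  refine ⟨n + n', m + m', Fin.append S S', Fin.append a a', Fin.append T T', Fin.append b b',
    ?_, ?_, ?_, ?_⟩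
  · intro i
    refine Fin.addCases (fun i0 => ?_) (fun i0 => ?_) i
    · rw [Fin.append_left]; exact hS i0
    · rw [Fin.append_right]; exact hS' i0
  · intro j
    refine Fin.addCases (fun j0 => ?_) (fun j0 => ?_) j
    · rw [Fin.append_left]; exact hT j0
    · rw [Fin.append_right]; exact hT' j0
  · intro w
    simp only [Fin.sum_univ_add, Fin.append_left, Fin.append_right, Pi.add_apply]
    linarith [hle w, hle' w]
  · simp only [Fin.sum_univ_add, Fin.append_left, Fin.append_right]
    ring
lemma rep_smul {c : ℝ} (hc : 0 ≤ c) {f : (α ⊕ (β ⊕ γ) → M) → ℝ} {r : ℝ}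
    (hf : Rep lam₁ lam₂ f r) : Rep lam₁ lam₂ (c • f) (c * r) := by
  obtain ⟨n, m, S, a, T, b, hS, hT, hle, rfl⟩ := hf
  refine ⟨n, m, S, fun i => c * a i, T, fun j => c * b j, hS, hT, fun w => ?_, ?_⟩
  · have h1 := mul_le_mul_of_nonneg_left (hle w) hc
    simp only [Pi.smul_apply, smul_eq_mul]
    refine h1.trans_eq ?_
    rw [mul_add, Finset.mul_sum, Finset.mul_sum]
    congr 1 <;> exact Finset.sum_congr rfl (fun i _ => by split <;> ring)
  · rw [mul_add, Finset.mul_sum, Finset.mul_sum]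
    congr 1 <;> exact Finset.sum_congr rfl (fun i _ => by ring)
lemma rep_const {f : (α ⊕ (β ⊕ γ) → M) → ℝ} {C : ℝ} (hf : ∀ w, f w ≤ C) :
    Rep lam₁ lam₂ f C := by
  refine ⟨1, 0, fun _ => Set.univ, fun _ => C, Fin.elim0, Fin.elim0,
    fun _ => Set.definable_univ, fun j => j.elim0, fun w => ?_, by simp [lam₁.measure_univ]⟩
  have hw : w ∈ cyl (Sum.map id Sum.inl) (Set.univ : Set (α ⊕ β → M)) := trivial
  simp [hw, hf w]
lemma rep_lb (x₀ : α → M) (z₀ : γ → M)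
    (h : ∀ Y : Set (β → M), A.Definable L Y →
      lam₁.toFun (cyl Sum.inr Y) = lam₂.toFun (cyl Sum.inl Y))
    {f : (α ⊕ (β ⊕ γ) → M) → ℝ} {r c : ℝ}
    (hf : Rep lam₁ lam₂ f r) (hlow : ∀ w, c ≤ f w) : c ≤ r := by
  obtain ⟨n, m, S, a, T, b, hS, hT, hle, rfl⟩ := hf
  exact key x₀ z₀ lam₁ lam₂ h S hS a T hT b c (fun w => (hlow w).trans (hle w))

set_option maxHeartbeats 2000000 in
theorem exists_common_amalgam'
    (h : ∀ Y : Set (β → M), A.Definable L Y →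
      lam₁.toFun (cyl Sum.inr Y) = lam₂.toFun (cyl Sum.inl Y)) :
    ∃ lam₃ : KeislerMeasure L M A (α ⊕ (β ⊕ γ)),
      (∀ S : Set (α ⊕ β → M), A.Definable L S →
        lam₃.toFun (cyl (Sum.map id Sum.inl) S) = lam₁.toFun S) ∧
      (∀ S : Set (β ⊕ γ → M), A.Definable L S →
        lam₃.toFun (cyl Sum.inr S) = lam₂.toFun S) := by
  classical
  by_cases hne : Nonempty (α → M) ∧ Nonempty (β → M) ∧ Nonempty (γ → M)
  case neg =>
    exfalso
    by_cases hβ : Nonempty (β → M)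
    · by_cases hα : Nonempty (α → M)
      · have hγ : ¬ Nonempty (γ → M) := fun hg => hne ⟨hα, hβ, hg⟩
        exact false_of_isEmpty lam₂ ⟨fun u => hγ ⟨u ∘ Sum.inr⟩⟩
      · exact false_of_isEmpty lam₁ ⟨fun u => hα ⟨u ∘ Sum.inl⟩⟩
    · exact false_of_isEmpty lam₁ ⟨fun u => hβ ⟨u ∘ Sum.inr⟩⟩
  case pos =>
  obtain ⟨⟨x₀⟩, ⟨y₀⟩, ⟨z₀⟩⟩ := hne
  set W := (α ⊕ (β ⊕ γ)) → M with hW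
  have w₀ : W := Sum.elim x₀ (Sum.elim y₀ z₀)
  set E := bddFuns W with hE
  set RS : (W → ℝ) → Set ℝ := fun f => {r | Rep lam₁ lam₂ f r} with hRS
  have hRSne : ∀ f : E, (RS f.1).Nonempty := by
    rintro ⟨f, C, hC⟩
    exact ⟨C, rep_const lam₁ lam₂ (fun w => (abs_le.mp (hC w)).2)⟩
  have hbdd : ∀ f : E, BddBelow (RS f.1) := by
    rintro ⟨f, C, hC⟩
    exact ⟨-C, fun r hr => rep_lb lam₁ lam₂ x₀ z₀ h hr (fun w => (abs_le.mp (hC w)).1)⟩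
  set N : E → ℝ := fun x => sInf (RS x.1) with hN
  have N_le : ∀ (x : E) (r : ℝ), Rep lam₁ lam₂ x.1 r → N x ≤ r := fun x r hr =>
    csInf_le (hbdd x) hr
  have N_ge : ∀ (x : E) (c : ℝ), (∀ r ∈ RS x.1, c ≤ r) → c ≤ N x := fun x c hc =>
    le_csInf (hRSne x) hc
  have N_add : ∀ x y : E, N (x + y) ≤ N x + N y := by
    intro x y
    have h2 : ∀ r ∈ RS x.1, ∀ r' ∈ RS y.1, N (x + y) ≤ r + r' := by
      intro r hr r' hr'
      refine N_le _ _ ?_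
      have := rep_add lam₁ lam₂ hr hr'
      simpa using this
    have h3 : ∀ r ∈ RS x.1, N (x + y) - r ≤ N y := by
      intro r hr
      refine le_csInf (hRSne y) (fun r' hr' => ?_)
      linarith [h2 r hr r' hr']
    have h4 : N (x + y) - N y ≤ N x := by
      refine le_csInf (hRSne x) (fun r hr => ?_)
      linarith [h3 r hr]
    linarith
  have N_hom : ∀ c : ℝ, 0 < c → ∀ x : E, N (c • x) = c * N x := by
    intro c hc x
    have hset : RS ((c • x : E) : W → ℝ) = c • (RS x.1) := by
      ext r
      simp only [hRS, Set.mem_setOf_eq, Set.mem_smul_set, smul_eq_mul]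
      constructor
      · intro hr
        refine ⟨c⁻¹ * r, ?_, by field_simp⟩
        have h5 := rep_smul lam₁ lam₂ (inv_nonneg.mpr hc.le) hr
        have h6 : c⁻¹ • ((c • x : E) : W → ℝ) = x.1 := by
          rw [show ((c • x : E) : W → ℝ) = c • (x : W → ℝ) from rfl, smul_smul,
            inv_mul_cancel₀ hc.ne', one_smul]
        rwa [h6] at h5
      · rintro ⟨r₀, hr₀, rfl⟩
        have h5 := rep_smul lam₁ lam₂ hc.le hr₀
        simpa using h5
    rw [hN]
    simp only
    rw [hset, Real.sInf_smul_of_nonneg hc.le, smul_eq_mul]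
  set oneE : E := ⟨fun _ => (1 : ℝ), ⟨1, fun w => by simp⟩⟩ with honeE
  have hone : oneE ≠ 0 := by
    intro hcon
    have h7 := congrFun (congrArg Subtype.val hcon) w₀
    simpa [honeE] using h7
  set f₀ := (LinearPMap.mkSpanSingleton (K := ℝ) oneE (1 : ℝ) hone : E →ₗ.[ℝ] ℝ) with hf₀def
  have hf₀ : ∀ x : f₀.domain, f₀ x ≤ N x := by
    rintro ⟨xv, hx⟩
    have hx' := hx
    rw [hf₀def] at hx'
    obtain ⟨cc, rfl⟩ := Submodule.mem_span_singleton.mp hx'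
    have h8 : f₀ ⟨cc • oneE, hx⟩ = cc • (1 : ℝ) := LinearPMap.mkSpanSingleton'_apply _ _ _ cc _
    rw [h8, smul_eq_mul, mul_one]
    refine N_ge _ _ (fun r hr => ?_)
    refine rep_lb lam₁ lam₂ x₀ z₀ h hr (fun w => ?_)
    rw [show ((cc • oneE : E) : W → ℝ) w = cc * 1 from rfl, mul_one]
  obtain ⟨g, hg_eq, hg_le⟩ := exists_extension_of_le_sublinear f₀ N N_hom N_add hf₀
  set indE : Set W → E := fun U =>
    ⟨fun w => if w ∈ U then (1 : ℝ) else 0,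
      ⟨1, fun w => by by_cases hw : w ∈ U <;> simp [hw]⟩⟩ with hindE
  have honeval : g oneE = 1 := by
    have h9 := hg_eq ⟨oneE, Submodule.mem_span_singleton_self oneE⟩
    rw [h9]
    exact LinearPMap.mkSpanSingleton_apply ℝ ℝ hone 1
  have gnonneg : ∀ U : Set W, 0 ≤ g (indE U) := by
    intro U
    have h1 : g (-(indE U)) ≤ N (-(indE U)) := hg_le _
    have h2 : N (-(indE U)) ≤ 0 := by
      refine N_le _ _ ?_
      refine ⟨0, 0, Fin.elim0, Fin.elim0, Fin.elim0, Fin.elim0, fun i => i.elim0,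
        fun j => j.elim0, fun w => ?_, by simp⟩
      simp only [Finset.univ_eq_empty, Finset.sum_empty, add_zero]
      by_cases hw : w ∈ U <;> simp [hindE, hw]
    rw [map_neg] at h1
    linarith
  have upper1 : ∀ S : Set (α ⊕ β → M), A.Definable L S →
      g (indE (cyl (Sum.map id Sum.inl) S)) ≤ lam₁.toFun S := by
    intro S hS
    refine (hg_le _).trans (N_le _ _ ?_)
    refine ⟨1, 0, fun _ => S, fun _ => 1, Fin.elim0, Fin.elim0, fun _ => hS,
      fun j => j.elim0, fun w => ?_, by simp⟩
    by_cases hw : w ∈ cyl (Sum.map id Sum.inl) S <;> simp [hindE, hw]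
  have upper2 : ∀ T : Set (β ⊕ γ → M), A.Definable L T →
      g (indE (cyl Sum.inr T)) ≤ lam₂.toFun T := by
    intro T hT
    refine (hg_le _).trans (N_le _ _ ?_)
    refine ⟨0, 1, Fin.elim0, Fin.elim0, fun _ => T, fun _ => 1, fun i => i.elim0,
      fun _ => hT, fun w => ?_, by simp⟩
    by_cases hw : w ∈ cyl Sum.inr T <;> simp [hindE, hw]
  refine ⟨⟨fun U => if A.Definable L U then g (indE U) else 0, ?_, ?_, ?_, ?_⟩, ?_, ?_⟩
  · rw [if_pos Set.definable_univ]
    have h1 : indE Set.univ = oneE := Subtype.ext (funext fun w => if_pos (Set.mem_univ w))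
    rw [h1, honeval]
  · intro s hs
    rw [if_pos hs]
    exact gnonneg s
  · intro s hs
    rw [if_pos hs.compl, if_pos hs]
    have h1 : indE sᶜ = oneE - indE s := Subtype.ext (funext fun w => by
      by_cases hw : w ∈ s <;> simp [hindE, honeE, hw])
    rw [h1, map_sub, honeval]
  · intro s t hs ht
    rw [if_pos (hs.union ht), if_pos hs, if_pos ht, if_pos (hs.inter ht)]
    have h1 : indE (s ∪ t) = indE s + indE t - indE (s ∩ t) := Subtype.ext (funext fun w => by
      by_cases hw : w ∈ s <;> by_cases hw' : w ∈ t <;> simp [hindE, hw, hw'])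
    rw [h1, map_sub, map_add]
  · intro S hS
    have hcyl : A.Definable L (cyl (Sum.map id Sum.inl) S) :=
      show A.Definable L ((fun g' : W => g' ∘ (Sum.map id Sum.inl)) ⁻¹' S) from
        hS.preimage_comp _
    dsimp only
    rw [if_pos hcyl]
    have hcompl : (cyl (Sum.map id Sum.inl) Sᶜ : Set W) = (cyl (Sum.map id Sum.inl) S : Set W)ᶜ := rfl
    have lower : lam₁.toFun S ≤ g (indE (cyl (Sum.map id Sum.inl) S)) := by
      have e : indE (cyl (Sum.map id Sum.inl) S)
          = oneE - indE (cyl (Sum.map id Sum.inl) Sᶜ) := by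
        refine Subtype.ext (funext fun w => ?_)
        rw [hcompl]
        by_cases hw : w ∈ cyl (Sum.map id Sum.inl) S <;> simp [hindE, honeE, hw]
      rw [e, map_sub, honeval]
      have h2 := upper1 Sᶜ hS.compl
      have h3 := lam₁.compl' S hS
      linarith
    exact le_antisymm (upper1 S hS) lower
  · intro T hT
    have hcyl : A.Definable L (cyl (Sum.inr : β ⊕ γ → α ⊕ (β ⊕ γ)) T) :=
      show A.Definable L ((fun g' : W => g' ∘ Sum.inr) ⁻¹' T) from hT.preimage_comp _
    dsimp only
    rw [if_pos hcyl]
    have hcompl : cyl (Sum.inr : β ⊕ γ → α ⊕ (β ⊕ γ)) Tᶜ = (cyl Sum.inr T)ᶜ := rfl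
    have lower : lam₂.toFun T ≤ g (indE (cyl Sum.inr T)) := by
      have e : indE (cyl Sum.inr T) = oneE - indE (cyl Sum.inr Tᶜ) := by
        refine Subtype.ext (funext fun w => ?_)
        rw [hcompl]
        by_cases hw : w ∈ cyl Sum.inr T <;> simp [hindE, honeE, hw]
      rw [e, map_sub, honeval]
      have h2 := upper2 Tᶜ hT.compl
      have h3 := lam₂.compl' T hT
      linarith
    exact le_antisymm (upper2 T hT) lower


end KeislerAmalgam

/-- Amalgamation of measures over a common marginal: if `λ₁ ∈ 𝔐_{αβ}(A)` and
`λ₂ ∈ 𝔐_{βγ}(A)` satisfy `π_β(λ₁) = π_β(λ₂)`, then there is `λ₃ ∈ 𝔐_{αβγ}(A)` with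
`π_{αβ}(λ₃) = λ₁` and `π_{βγ}(λ₃) = λ₂`. -/
theorem exists_common_amalgam {L : FirstOrder.Language} {M : Type*} [L.Structure M]
    (A : Set M) {α β γ : Type*}
    (lam₁ : KeislerMeasure L M A (α ⊕ β)) (lam₂ : KeislerMeasure L M A (β ⊕ γ))
    (h : ∀ Y : Set (β → M), A.Definable L Y →
      lam₁.toFun (cyl Sum.inr Y) = lam₂.toFun (cyl Sum.inl Y)) :
    ∃ lam₃ : KeislerMeasure L M A (α ⊕ (β ⊕ γ)),
      (∀ S : Set (α ⊕ β → M), A.Definable L S →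
        lam₃.toFun (cyl (Sum.map id Sum.inl) S) = lam₁.toFun S) ∧
      (∀ S : Set (β ⊕ γ → M), A.Definable L S →
        lam₃.toFun (cyl Sum.inr S) = lam₂.toFun S) :=
  KeislerAmalgam.exists_common_amalgam' lam₁ lam₂ h
end

section
/- Let A ⊆ M, λ ∈ 𝔐_xyz(A), and ω ∈ 𝔐_xz(M) with ω|_A = π_xz(λ). Then there exists ω' ∈ 𝔐_xyz(M) such that π_xz(ω') = ω and ω'|_A = λ. -/
open FirstOrder

section Aux

open FirstOrder.Language Set

variable {L : FirstOrder.Language} {M : Type*} [L.Structure M] {A : Set M}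

/-- Realization of a formula only depends on the free variables. -/
lemma KMaux.realize_agree {α : Type*} [DecidableEq α] (φ : L.Formula α) {v v' : α → M}
    (h : ∀ a ∈ φ.freeVarFinset, v a = v' a) : φ.Realize v ↔ φ.Realize v' := by
  have hsub : ↑φ.freeVarFinset ⊆ (↑φ.freeVarFinset : Set α) := Set.Subset.rfl
  have h1 := BoundedFormula.realize_restrictFreeVar' (L := L) (M := M) (φ := φ)
    (s := ↑φ.freeVarFinset) hsub (v := v) (xs := default)
  have h2 := BoundedFormula.realize_restrictFreeVar' (L := L) (M := M) (φ := φ)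
    (s := ↑φ.freeVarFinset) hsub (v := v') (xs := default)
  unfold Formula.Realize
  rw [← h1, ← h2]
  refine iff_of_eq (congrArg
    (fun w => (BoundedFormula.restrictFreeVar φ (Set.inclusion hsub)).Realize w default) ?_)
  funext a
  exact h a.1 (by simpa using a.2)

/-- Definability is closed under projection along `Sum.inl`, with no finiteness
assumption on the index types. -/
lemma KMaux.definable_image_comp_inl {κ β' : Type*} {s : Set (κ ⊕ β' → M)}
    (hs : A.Definable L s) :
    A.Definable L ((fun g : κ ⊕ β' → M => g ∘ Sum.inl) '' s) := by
  classical
  rcases isEmpty_or_nonempty M with hM | hM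
  · rcases isEmpty_or_nonempty (κ ⊕ β' → M) with hXe | hXn
    · have hse : s = ∅ := Set.eq_empty_of_isEmpty s
      simp only [hse, Set.image_empty]
      exact Set.definable_empty
    · have hkb : IsEmpty (κ ⊕ β') := by
        by_contra hne
        rw [not_isEmpty_iff] at hne
        obtain ⟨c⟩ := hne
        obtain ⟨x⟩ := hXn
        exact hM.false (x c)
      have hκ : IsEmpty κ := ⟨fun k => hkb.false (Sum.inl k)⟩
      by_cases hse : s = ∅
      · simp only [hse, Set.image_empty]
        exact Set.definable_empty
      · have hsn : s.Nonempty := Set.nonempty_iff_ne_empty.2 hse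
        obtain ⟨x, hx⟩ := hsn
        have himg : (fun g : κ ⊕ β' → M => g ∘ Sum.inl) '' s = Set.univ := by
          apply Set.eq_univ_of_forall
          intro y
          exact ⟨x, hx, funext fun k => (hκ.false k).elim⟩
        rw [himg]
        exact Set.definable_univ
  · obtain ⟨φ, rfl⟩ := hs
    set t : Finset β' := φ.freeVarFinset.preimage Sum.inr Sum.inr_injective.injOn with ht
    set n := Fintype.card ↥t with hn
    set e : ↥t ≃ Fin n := Fintype.equivFin ↥t with he
    have m₀ : M := Classical.arbitrary M
    set r : κ ⊕ β' → κ ⊕ Fin (n + 1) :=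
      Sum.map id (fun b => if hb : b ∈ t then (e ⟨b, hb⟩).castSucc else Fin.last n) with hr
    have claim : ((fun g : κ ⊕ β' → M => g ∘ Sum.inl) '' (Set.ofPred φ.Realize))
        = (fun g : κ ⊕ Fin (n + 1) → M => g ∘ Sum.inl) ''
            (Set.ofPred (FirstOrder.Language.Formula.relabel r φ).Realize) := by
      ext y
      constructor
      · rintro ⟨x, hx, rfl⟩
        rw [Set.mem_setOf_eq] at hx
        refine ⟨Sum.elim (x ∘ Sum.inl)
          (fun i => if hi : (i : ℕ) < n then x (Sum.inr ↑(e.symm (i.castLT hi))) else m₀),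
          ?_, rfl⟩
        rw [Set.mem_setOf_eq, Formula.realize_relabel]
        refine (KMaux.realize_agree φ (fun a ha => ?_)).1 hx
        match a with
        | Sum.inl k => rfl
        | Sum.inr b =>
          have hb : b ∈ t := by
            rw [ht]
            rw [Finset.mem_preimage]
            exact ha
          show x (Sum.inr b) = _
          simp only [Function.comp_apply, hr, Sum.map_inr, dif_pos hb, Sum.elim_inr]
          have hlt : ((e ⟨b, hb⟩).castSucc : ℕ) < n := (e ⟨b, hb⟩).isLt
          rw [dif_pos hlt]
          congr 1
          have : (e ⟨b, hb⟩).castSucc.castLT hlt = e ⟨b, hb⟩ := by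
            apply Fin.ext
            simp
          rw [this, Equiv.symm_apply_apply]
      · rintro ⟨z, hz, rfl⟩
        rw [Set.mem_setOf_eq, Formula.realize_relabel] at hz
        refine ⟨Sum.elim (z ∘ Sum.inl)
          (fun b => if hb : b ∈ t then z (Sum.inr ((e ⟨b, hb⟩).castSucc)) else m₀), ?_, rfl⟩
        rw [Set.mem_setOf_eq]
        refine (KMaux.realize_agree φ (fun a ha => ?_)).2 hz
        match a with
        | Sum.inl k => rfl
        | Sum.inr b =>
          have hb : b ∈ t := by
            rw [ht]
            rw [Finset.mem_preimage]
            exact ha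
          show _ = z (r (Sum.inr b))
          simp only [hr, Sum.map_inr, dif_pos hb, Sum.elim_inr]
    rw [claim]
    exact Set.Definable.image_comp_sumInl_fin (n + 1) ⟨Formula.relabel r φ, rfl⟩

namespace KeislerMeasure

variable {ι : Type*} (μ : KeislerMeasure L M A ι)

lemma map_empty : μ.toFun ∅ = 0 := by
  have h := μ.compl' Set.univ Set.definable_univ
  rw [Set.compl_univ, μ.measure_univ] at h
  simpa using h

lemma nonemptyFun (μ : KeislerMeasure L M A ι) : Nonempty (ι → M) := by
  by_contra h
  have huniv : (Set.univ : Set (ι → M)) = ∅ := by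
    ext x
    exact (h ⟨x⟩).elim
  have h2 := μ.measure_univ
  rw [huniv, μ.map_empty] at h2
  norm_num at h2

lemma map_split {s u : Set (ι → M)} (hs : A.Definable L s) (hu : A.Definable L u) :
    μ.toFun s = μ.toFun (s ∩ u) + μ.toFun (s ∩ uᶜ) := by
  have hdef1 : A.Definable L (s ∩ u) := hs.inter hu
  have hdef2 : A.Definable L (s ∩ uᶜ) := hs.inter hu.compl
  have hunion : (s ∩ u) ∪ (s ∩ uᶜ) = s := by
    rw [← Set.inter_union_distrib_left, Set.union_compl_self, Set.inter_univ]
  have hinter : (s ∩ u) ∩ (s ∩ uᶜ) = ∅ := by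
    ext x; simp only [Set.mem_inter_iff, Set.mem_compl_iff, Set.mem_empty_iff_false]
    tauto
  have := μ.union_inter' _ _ hdef1 hdef2
  rw [hunion, hinter, μ.map_empty] at this
  linarith

end KeislerMeasure

/-- The cell (atom) of the family `U` restricted to `s`, with pattern `K`. -/
def KMcell {X κ : Type*} (U : κ → Set X) (s K : Finset κ) : Set X :=
  {x | ∀ i ∈ s, x ∈ U i ↔ i ∈ K}

lemma KMcell_empty {X κ : Type*} (U : κ → Set X) (K : Finset κ) :
    KMcell U (∅ : Finset κ) K = Set.univ := by
  ext x; simp [KMcell]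

lemma KMcell_insert {X κ : Type*} [DecidableEq κ] (U : κ → Set X) (s K : Finset κ) (a : κ) :
    KMcell U (insert a s) K = (if a ∈ K then U a else (U a)ᶜ) ∩ KMcell U s K := by
  ext x
  simp only [KMcell, Set.mem_setOf_eq, Finset.mem_insert, Set.mem_inter_iff]
  constructor
  · intro hx
    refine ⟨?_, fun i hi => hx i (Or.inr hi)⟩
    have := hx a (Or.inl rfl)
    by_cases hK : a ∈ K
    · simp [hK, this.2 hK]
    · simp only [hK, if_neg, ite_false, Set.mem_compl_iff]
      intro hxa
      exact hK (this.1 hxa)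
  · rintro ⟨ha, hx⟩ i hi
    rcases hi with rfl | hi
    · by_cases hK : i ∈ K
      · rw [if_pos hK] at ha; simp [hK, ha]
      · rw [if_neg hK] at ha; simp [hK]; exact ha
    · exact hx i hi

lemma KMcell_congr {X κ : Type*} (U : κ → Set X) {s K K' : Finset κ}
    (h : ∀ i ∈ s, i ∈ K ↔ i ∈ K') : KMcell U s K = KMcell U s K' := by
  ext x
  constructor <;> intro hx i hi <;> rw [hx i hi] <;> [exact (h i hi); exact (h i hi).symm]

lemma KMcell_definable {κ : Type*} {ι : Type*} {U : κ → Set (ι → M)} {s : Finset κ} {K : Finset κ}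
    (hU : ∀ i ∈ s, A.Definable L (U i)) : A.Definable L (KMcell U s K) := by
  classical
  induction s using Finset.induction_on with
  | empty => rw [KMcell_empty]; exact Set.definable_univ
  | @insert a s ha ih =>
    rw [KMcell_insert]
    refine Set.Definable.inter ?_ (ih fun i hi => hU i (Finset.mem_insert_of_mem hi))
    have hUa := hU a (Finset.mem_insert_self a s)
    by_cases hK : a ∈ K
    · rw [if_pos hK]; exact hUa
    · rw [if_neg hK]; exact hUa.compl

lemma KMcell_self {X κ : Type*} (U : κ → Set X) (s : Finset κ) (x : X)
    [DecidablePred fun i => x ∈ U i] :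
    x ∈ KMcell U s (s.filter fun i => x ∈ U i) := by
  intro i hi
  simp [Finset.mem_filter, hi]

variable {ι : Type*}

lemma KM_partition_sum {κ : Type*} (μ : KeislerMeasure L M A ι) (V : Set (ι → M))
    (hV : A.Definable L V) (U : κ → Set (ι → M)) (s : Finset κ)
    (hU : ∀ i ∈ s, A.Definable L (U i)) :
    μ.toFun V = ∑ K ∈ s.powerset, μ.toFun (V ∩ KMcell U s K) := by
  classical
  induction s using Finset.induction_on with
  | empty => simp [KMcell_empty]
  | @insert a s ha ih =>
    rw [Finset.sum_powerset_insert ha]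
    have hU' : ∀ i ∈ s, A.Definable L (U i) := fun i hi => hU i (Finset.mem_insert_of_mem hi)
    have hUa : A.Definable L (U a) := hU a (Finset.mem_insert_self a s)
    have key : ∀ K ∈ s.powerset,
        μ.toFun (V ∩ KMcell U (insert a s) K) + μ.toFun (V ∩ KMcell U (insert a s) (insert a K))
          = μ.toFun (V ∩ KMcell U s K) := by
      intro K hK
      have haK : a ∉ K := fun h => ha (Finset.mem_powerset.1 hK h)
      have h1 : KMcell U (insert a s) K = (U a)ᶜ ∩ KMcell U s K := by
        rw [KMcell_insert, if_neg haK]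
      have h2 : KMcell U (insert a s) (insert a K) = U a ∩ KMcell U s K := by
        rw [KMcell_insert, if_pos (Finset.mem_insert_self a K)]
        congr 1
        exact KMcell_congr U fun i hi => by
          simp only [Finset.mem_insert, or_iff_right_iff_imp]
          exact fun h => absurd (h ▸ hi) ha
      rw [h1, h2]
      have hsplit := μ.map_split (s := V ∩ KMcell U s K) (u := U a)
        (hV.inter (KMcell_definable hU')) hUa
      have e1 : V ∩ KMcell U s K ∩ U a = V ∩ (U a ∩ KMcell U s K) := by
        ext x; simp only [Set.mem_inter_iff]; tauto
      have e2 : V ∩ KMcell U s K ∩ (U a)ᶜ = V ∩ ((U a)ᶜ ∩ KMcell U s K) := by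
        ext x; simp only [Set.mem_inter_iff, Set.mem_compl_iff]; tauto
      rw [e1, e2] at hsplit
      linarith
    rw [← Finset.sum_add_distrib, Finset.sum_congr rfl key]
    exact ih hU'

lemma KM_weighted_sum (μ : KeislerMeasure L M A ι) {κ : Type*} (U : κ → Set (ι → M))
    (s : Finset κ) (hU : ∀ i ∈ s, A.Definable L (U i)) (a : κ → ℝ) :
    ∑ i ∈ s, a i * μ.toFun (U i)
      = ∑ K ∈ s.powerset, (∑ i ∈ K, a i) * μ.toFun (KMcell U s K) := by
  classical
  have hcover : ∀ i ∈ s, μ.toFun (U i)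
      = ∑ K ∈ s.powerset, if i ∈ K then μ.toFun (KMcell U s K) else 0 := by
    intro i hi
    rw [KM_partition_sum μ (U i) (hU i hi) U s hU]
    refine Finset.sum_congr rfl fun K hK => ?_
    by_cases hiK : i ∈ K
    · rw [if_pos hiK]
      congr 1
      rw [Set.inter_eq_right]
      exact fun x hx => (hx i hi).2 hiK
    · rw [if_neg hiK]
      have : U i ∩ KMcell U s K = ∅ := by
        ext x
        simp only [Set.mem_inter_iff, Set.mem_empty_iff_false, iff_false, not_and]
        intro hxU hxc
        exact hiK ((hxc i hi).1 hxU)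
      rw [this, μ.map_empty]
  calc ∑ i ∈ s, a i * μ.toFun (U i)
      = ∑ i ∈ s, ∑ K ∈ s.powerset,
          (if i ∈ K then a i * μ.toFun (KMcell U s K) else 0) := by
        refine Finset.sum_congr rfl fun i hi => ?_
        rw [hcover i hi, Finset.mul_sum]
        refine Finset.sum_congr rfl fun K _ => ?_
        by_cases hiK : i ∈ K <;> simp [hiK]
    _ = ∑ K ∈ s.powerset, ∑ i ∈ s,
          (if i ∈ K then a i * μ.toFun (KMcell U s K) else 0) := Finset.sum_comm
    _ = ∑ K ∈ s.powerset, (∑ i ∈ K, a i) * μ.toFun (KMcell U s K) := by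
        refine Finset.sum_congr rfl fun K hK => ?_
        rw [Finset.sum_ite_mem, Finset.inter_eq_right.2 (Finset.mem_powerset.1 hK),
          Finset.sum_mul]


lemma KMcell_preimage {X Y κ : Type*} (ρ : X → Y) (U : κ → Set Y) (s K : Finset κ) :
    KMcell (fun i => ρ ⁻¹' U i) s K = ρ ⁻¹' KMcell U s K := rfl

/-- The key inequality: a combination of `A`-definable sets measured by `lam` and of
cylinders over `M`-definable sets measured by `om` is bounded by the sup of the
corresponding simple function. -/
lemma KMkey {α β γ : Type*}
    (lam : KeislerMeasure L M A (α ⊕ (β ⊕ γ)))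
    (om : KeislerMeasure L M (Set.univ : Set M) (α ⊕ γ))
    (h : ∀ S : Set (α ⊕ γ → M), A.Definable L S →
      om.toFun S = lam.toFun ((fun x : α ⊕ (β ⊕ γ) → M =>
        x ∘ (Sum.map id Sum.inr : α ⊕ γ → α ⊕ (β ⊕ γ))) ⁻¹' S))
    (n : ℕ) (a : Fin n → ℝ) (S : Fin n → Set (α ⊕ (β ⊕ γ) → M)) (t : Fin n → ℝ)
    (hOk : ∀ i, (A.Definable L (S i) ∧ t i = lam.toFun (S i)) ∨
      (∃ T : Set (α ⊕ γ → M), (Set.univ : Set M).Definable L T ∧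
        S i = (fun x : α ⊕ (β ⊕ γ) → M => x ∘ Sum.map id Sum.inr) ⁻¹' T ∧ t i = om.toFun T))
    (c : ℝ)
    (hc : ∀ x : α ⊕ (β ⊕ γ) → M,
      (∑ i, a i * Set.indicator (S i) (fun _ => (1:ℝ)) x) ≤ c) :
    ∑ i, a i * t i ≤ c := by
  classical
  set ρ : (α ⊕ (β ⊕ γ) → M) → (α ⊕ γ → M) :=
    fun x => x ∘ (Sum.map id Sum.inr : α ⊕ γ → α ⊕ (β ⊕ γ)) with hρ
  -- split the indices into `lam`-indices `I` and `om`-indices `Iᶜ`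
  set I : Finset (Fin n) :=
    Finset.univ.filter (fun i => A.Definable L (S i) ∧ t i = lam.toFun (S i)) with hIdef
  have hIlam : ∀ i ∈ I, A.Definable L (S i) ∧ t i = lam.toFun (S i) := by
    intro i hi
    exact (Finset.mem_filter.1 hi).2
  have homT : ∀ i : Fin n, ∃ T : Set (α ⊕ γ → M), i ∈ Iᶜ →
      (Set.univ : Set M).Definable L T ∧ S i = ρ ⁻¹' T ∧ t i = om.toFun T := by
    intro i
    by_cases hi : i ∈ Iᶜ
    · have hi' : i ∉ I := Finset.mem_compl.1 hi
      have : ¬(A.Definable L (S i) ∧ t i = lam.toFun (S i)) := by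
        intro hcon
        exact hi' (Finset.mem_filter.2 ⟨Finset.mem_univ i, hcon⟩)
      obtain ⟨T, hT⟩ := (hOk i).resolve_left this
      exact ⟨T, fun _ => hT⟩
    · exact ⟨∅, fun hcon => absurd hcon hi⟩
  choose T hT using homT
  -- extensions of assignments exist
  obtain ⟨x₀⟩ := lam.nonemptyFun
  have hext : ∀ y : α ⊕ γ → M, ∃ x, ρ x = y := by
    intro y
    refine ⟨Sum.elim (fun aa => y (Sum.inl aa))
      (Sum.elim (fun b => x₀ (Sum.inr (Sum.inl b))) (fun cc => y (Sum.inr cc))), ?_⟩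
    funext d
    rcases d with aa | cc <;> rfl
  -- level-1 atoms and their projections
  set CC : Finset (Fin n) → Set (α ⊕ (β ⊕ γ) → M) := fun K => KMcell S I K with hCC
  have hCCdef : ∀ K, A.Definable L (CC K) :=
    fun K => KMcell_definable (fun i hi => (hIlam i hi).1)
  set DD : Finset (Fin n) → Set (α ⊕ γ → M) := fun K => ρ '' (CC K) with hDD
  have hDDdef : ∀ K, A.Definable L (DD K) := by
    intro K
    let e2 : ((α ⊕ γ) ⊕ β) ≃ (α ⊕ (β ⊕ γ)) :=
      { toFun := Sum.elim (Sum.elim Sum.inl (fun cc => Sum.inr (Sum.inr cc)))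
          (fun b => Sum.inr (Sum.inl b))
        invFun := Sum.elim (fun aa => Sum.inl (Sum.inl aa))
          (Sum.elim Sum.inr (fun cc => Sum.inl (Sum.inr cc)))
        left_inv := by rintro ((aa | cc) | b) <;> rfl
        right_inv := by rintro (aa | (b | cc)) <;> rfl }
    have h1 : A.Definable L ((fun g : (α ⊕ (β ⊕ γ)) → M => g ∘ ⇑e2) '' CC K) :=
      (hCCdef K).image_comp_equiv e2
    have h2 := KMaux.definable_image_comp_inl h1
    have himg : (fun g : ((α ⊕ γ) ⊕ β) → M => g ∘ Sum.inl) ''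
        ((fun g : (α ⊕ (β ⊕ γ)) → M => g ∘ ⇑e2) '' CC K) = DD K := by
      rw [Set.image_image]
      refine Set.image_congr fun x _ => ?_
      funext d
      rcases d with aa | cc <;> rfl
    rwa [himg] at h2
  -- level-2 atoms
  set GG : Finset (Finset (Fin n)) → Set (α ⊕ γ → M) :=
    fun 𝒦 => KMcell DD I.powerset 𝒦 with hGG
  have hGGdef : ∀ 𝒦, A.Definable L (GG 𝒦) :=
    fun 𝒦 => KMcell_definable (fun K _ => hDDdef K)
  have hGGdef' : ∀ 𝒦, (Set.univ : Set M).Definable L (GG 𝒦) :=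
    fun 𝒦 => (hGGdef 𝒦).mono (Set.subset_univ A)
  have hρpredef : ∀ (W : Set (α ⊕ γ → M)), A.Definable L W → A.Definable L (ρ ⁻¹' W) :=
    fun W hW => hW.preimage_comp (Sum.map id Sum.inr)
  -- coefficients
  set sK : Finset (Fin n) → ℝ := fun K => ∑ i ∈ K, a i with hsK
  set m : Finset (Finset (Fin n)) → ℝ :=
    fun 𝒦 => if h2 : 𝒦.Nonempty then 𝒦.sup' h2 sK else 0 with hm
  -- Step 1 : split the sum
  have hsplit : ∑ i, a i * t i = ∑ i ∈ I, a i * lam.toFun (S i) + ∑ i ∈ Iᶜ, a i * om.toFun (T i) := by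
    rw [← Finset.sum_add_sum_compl I]
    congr 1
    · exact Finset.sum_congr rfl fun i hi => by rw [(hIlam i hi).2]
    · exact Finset.sum_congr rfl fun i hi => by rw [(hT i hi).2.2]
  -- Step 2 : lam part
  have hlam1 : ∑ i ∈ I, a i * lam.toFun (S i)
      = ∑ K ∈ I.powerset, sK K * lam.toFun (CC K) :=
    KM_weighted_sum lam S I (fun i hi => (hIlam i hi).1) a
  have hlam2 : ∀ K ∈ I.powerset, lam.toFun (CC K)
      = ∑ 𝒦 ∈ I.powerset.powerset, lam.toFun (CC K ∩ ρ ⁻¹' GG 𝒦) := by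
    intro K _
    have := KM_partition_sum lam (CC K) (hCCdef K) (fun K' => ρ ⁻¹' DD K') I.powerset
      (fun K' _ => hρpredef _ (hDDdef K'))
    rw [this]
    refine Finset.sum_congr rfl fun 𝒦 _ => ?_
    rw [KMcell_preimage]
  have hGGtot : ∀ 𝒦 ∈ I.powerset.powerset, lam.toFun (ρ ⁻¹' GG 𝒦)
      = ∑ K ∈ I.powerset, lam.toFun (CC K ∩ ρ ⁻¹' GG 𝒦) := by
    intro 𝒦 _
    have := KM_partition_sum lam (ρ ⁻¹' GG 𝒦) (hρpredef _ (hGGdef 𝒦)) S I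
      (fun i hi => (hIlam i hi).1)
    rw [this]
    refine Finset.sum_congr rfl fun K _ => ?_
    rw [Set.inter_comm]
  have hlam3 : ∑ K ∈ I.powerset, sK K * lam.toFun (CC K)
      ≤ ∑ 𝒦 ∈ I.powerset.powerset, m 𝒦 * om.toFun (GG 𝒦) := by
    calc ∑ K ∈ I.powerset, sK K * lam.toFun (CC K)
        = ∑ K ∈ I.powerset, ∑ 𝒦 ∈ I.powerset.powerset,
            sK K * lam.toFun (CC K ∩ ρ ⁻¹' GG 𝒦) := by
          refine Finset.sum_congr rfl fun K hK => ?_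
          rw [hlam2 K hK, Finset.mul_sum]
      _ = ∑ 𝒦 ∈ I.powerset.powerset, ∑ K ∈ I.powerset,
            sK K * lam.toFun (CC K ∩ ρ ⁻¹' GG 𝒦) := Finset.sum_comm
      _ ≤ ∑ 𝒦 ∈ I.powerset.powerset, ∑ K ∈ I.powerset,
            m 𝒦 * lam.toFun (CC K ∩ ρ ⁻¹' GG 𝒦) := by
          refine Finset.sum_le_sum fun 𝒦 h𝒦 => Finset.sum_le_sum fun K hK => ?_
          by_cases hemp : (CC K ∩ ρ ⁻¹' GG 𝒦) = ∅
          · rw [hemp, lam.map_empty, mul_zero, mul_zero]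
          · obtain ⟨x, hx1, hx2⟩ := Set.nonempty_iff_ne_empty.2 hemp
            have hKmem : K ∈ 𝒦 := by
              have hDmem : ρ x ∈ DD K := ⟨x, hx1, rfl⟩
              exact (hx2 K hK).1 hDmem
            have hne : 𝒦.Nonempty := ⟨K, hKmem⟩
            have hle : sK K ≤ m 𝒦 := by
              rw [hm]
              simp only [dif_pos hne]
              exact Finset.le_sup' sK hKmem
            exact mul_le_mul_of_nonneg_right hle
              (lam.nonneg' _ ((hCCdef K).inter (hρpredef _ (hGGdef 𝒦))))
      _ = ∑ 𝒦 ∈ I.powerset.powerset, m 𝒦 * om.toFun (GG 𝒦) := by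
          refine Finset.sum_congr rfl fun 𝒦 h𝒦 => ?_
          rw [← Finset.mul_sum, ← hGGtot 𝒦 h𝒦, ← h _ (hGGdef 𝒦)]
  -- Step 3 : om part
  set cellT : Finset (Fin n) → Set (α ⊕ γ → M) := fun Q => KMcell T Iᶜ Q with hcellT
  have hTdef : ∀ i ∈ Iᶜ, (Set.univ : Set M).Definable L (T i) := fun i hi => (hT i hi).1
  have hcellTdef : ∀ Q, (Set.univ : Set M).Definable L (cellT Q) :=
    fun Q => KMcell_definable hTdef
  have hom1 : ∑ i ∈ Iᶜ, a i * om.toFun (T i)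
      = ∑ Q ∈ Iᶜ.powerset, sK Q * om.toFun (cellT Q) :=
    KM_weighted_sum om T Iᶜ hTdef a
  -- Step 4 : joint refinement
  have hGGom : ∀ 𝒦, om.toFun (GG 𝒦)
      = ∑ Q ∈ Iᶜ.powerset, om.toFun (GG 𝒦 ∩ cellT Q) :=
    fun 𝒦 => KM_partition_sum om (GG 𝒦) (hGGdef' 𝒦) T Iᶜ hTdef
  have hcellTom : ∀ Q, om.toFun (cellT Q)
      = ∑ 𝒦 ∈ I.powerset.powerset, om.toFun (GG 𝒦 ∩ cellT Q) := by
    intro Q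
    have := KM_partition_sum om (cellT Q) (hcellTdef Q) DD I.powerset
      (fun K _ => (hDDdef K).mono (Set.subset_univ A))
    rw [this]
    exact Finset.sum_congr rfl fun 𝒦 _ => by rw [Set.inter_comm]
  -- Step 5 : total mass one
  have htotal : ∑ 𝒦 ∈ I.powerset.powerset, ∑ Q ∈ Iᶜ.powerset,
      om.toFun (GG 𝒦 ∩ cellT Q) = 1 := by
    have h1 : om.toFun Set.univ = ∑ 𝒦 ∈ I.powerset.powerset, om.toFun (GG 𝒦) := by
      have := KM_partition_sum om Set.univ Set.definable_univ DD I.powerset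
        (fun K _ => (hDDdef K).mono (Set.subset_univ A))
      rw [this]
      exact Finset.sum_congr rfl fun 𝒦 _ => by rw [Set.univ_inter]
    rw [← Finset.sum_congr rfl fun 𝒦 (_ : 𝒦 ∈ I.powerset.powerset) => hGGom 𝒦, ← h1,
      om.measure_univ]
  -- Step 6 : pointwise bound on nonempty pieces
  have hpiece : ∀ 𝒦 ∈ I.powerset.powerset, ∀ Q ∈ Iᶜ.powerset,
      (GG 𝒦 ∩ cellT Q).Nonempty → m 𝒦 + sK Q ≤ c := by
    rintro 𝒦 h𝒦 Q hQ ⟨y, hy1, hy2⟩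
    have h𝒦sub : 𝒦 ⊆ I.powerset := Finset.mem_powerset.1 h𝒦
    -- 𝒦 is nonempty
    obtain ⟨x', hx'⟩ := hext y
    have hK₀ : (I.filter fun i => x' ∈ S i) ∈ 𝒦 := by
      have hmem : x' ∈ CC (I.filter fun i => x' ∈ S i) := KMcell_self S I x'
      have hD : y ∈ DD (I.filter fun i => x' ∈ S i) := ⟨x', hmem, hx'⟩
      exact (hy1 _ (Finset.mem_powerset.2 (Finset.filter_subset _ _))).1 hD
    have hne : 𝒦.Nonempty := ⟨_, hK₀⟩
    obtain ⟨K₁, hK₁mem, hK₁⟩ := Finset.exists_mem_eq_sup' hne sK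
    have hyD : y ∈ DD K₁ := (hy1 K₁ (h𝒦sub hK₁mem)).2 hK₁mem
    obtain ⟨x₁, hx₁C, hx₁ρ⟩ := hyD
    have hval : ∑ i, a i * Set.indicator (S i) (fun _ => (1:ℝ)) x₁ = sK K₁ + sK Q := by
      rw [← Finset.sum_add_sum_compl I]
      congr 1
      · have heq : ∀ i ∈ I, a i * Set.indicator (S i) (fun _ => (1:ℝ)) x₁
            = if i ∈ K₁ then a i else 0 := by
          intro i hi
          by_cases hiK : i ∈ K₁
          · have hxm : x₁ ∈ S i := (hx₁C i hi).2 hiK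
            simp [hiK, Set.indicator_of_mem hxm]
          · have hxm : x₁ ∉ S i := fun hmem => hiK ((hx₁C i hi).1 hmem)
            simp [hiK, Set.indicator_of_notMem hxm]
        rw [Finset.sum_congr rfl heq, Finset.sum_ite_mem,
          Finset.inter_eq_right.2 (Finset.mem_powerset.1 (h𝒦sub hK₁mem))]
      · have heq : ∀ i ∈ Iᶜ, a i * Set.indicator (S i) (fun _ => (1:ℝ)) x₁
            = if i ∈ Q then a i else 0 := by
          intro i hi
          have hSi : S i = ρ ⁻¹' T i := (hT i hi).2.1
          have hx₁T : x₁ ∈ S i ↔ y ∈ T i := by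
            rw [hSi, Set.mem_preimage]
            rw [hx₁ρ]
          by_cases hiQ : i ∈ Q
          · have hxm : x₁ ∈ S i := hx₁T.2 ((hy2 i hi).2 hiQ)
            simp [hiQ, Set.indicator_of_mem hxm]
          · have hxm : x₁ ∉ S i := fun hmem => hiQ ((hy2 i hi).1 (hx₁T.1 hmem))
            simp [hiQ, Set.indicator_of_notMem hxm]
        rw [Finset.sum_congr rfl heq, Finset.sum_ite_mem,
          Finset.inter_eq_right.2 (Finset.mem_powerset.1 hQ)]
    have := hc x₁
    rw [hval] at this
    rw [hm]
    simp only [dif_pos hne]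
    rw [hK₁]
    exact this
  -- Step 7 : conclude
  have hfinal : ∑ 𝒦 ∈ I.powerset.powerset, ∑ Q ∈ Iᶜ.powerset,
      (m 𝒦 + sK Q) * om.toFun (GG 𝒦 ∩ cellT Q) ≤ c := by
    calc ∑ 𝒦 ∈ I.powerset.powerset, ∑ Q ∈ Iᶜ.powerset,
        (m 𝒦 + sK Q) * om.toFun (GG 𝒦 ∩ cellT Q)
        ≤ ∑ 𝒦 ∈ I.powerset.powerset, ∑ Q ∈ Iᶜ.powerset,
            c * om.toFun (GG 𝒦 ∩ cellT Q) := by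
          refine Finset.sum_le_sum fun 𝒦 h𝒦 => Finset.sum_le_sum fun Q hQ => ?_
          by_cases hemp : (GG 𝒦 ∩ cellT Q) = ∅
          · rw [hemp, om.map_empty, mul_zero, mul_zero]
          · exact mul_le_mul_of_nonneg_right
              (hpiece 𝒦 h𝒦 Q hQ (Set.nonempty_iff_ne_empty.2 hemp))
              (om.nonneg' _ ((hGGdef' 𝒦).inter (hcellTdef Q)))
      _ = c := by
          have hmul : ∑ 𝒦 ∈ I.powerset.powerset, ∑ Q ∈ Iᶜ.powerset,
              c * om.toFun (GG 𝒦 ∩ cellT Q)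
              = c * ∑ 𝒦 ∈ I.powerset.powerset, ∑ Q ∈ Iᶜ.powerset,
                  om.toFun (GG 𝒦 ∩ cellT Q) := by
            rw [Finset.mul_sum]
            exact Finset.sum_congr rfl fun 𝒦 _ => by rw [Finset.mul_sum]
          rw [hmul, htotal, mul_one]
  calc ∑ i, a i * t i
      = ∑ i ∈ I, a i * lam.toFun (S i) + ∑ i ∈ Iᶜ, a i * om.toFun (T i) := hsplit
    _ ≤ ∑ 𝒦 ∈ I.powerset.powerset, m 𝒦 * om.toFun (GG 𝒦)
          + ∑ Q ∈ Iᶜ.powerset, sK Q * om.toFun (cellT Q) := by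
        rw [hlam1, hom1]
        exact add_le_add_left hlam3 _
    _ = ∑ 𝒦 ∈ I.powerset.powerset, ∑ Q ∈ Iᶜ.powerset,
          (m 𝒦 + sK Q) * om.toFun (GG 𝒦 ∩ cellT Q) := by
        have e1 : ∑ 𝒦 ∈ I.powerset.powerset, m 𝒦 * om.toFun (GG 𝒦)
            = ∑ 𝒦 ∈ I.powerset.powerset, ∑ Q ∈ Iᶜ.powerset,
                m 𝒦 * om.toFun (GG 𝒦 ∩ cellT Q) :=
          Finset.sum_congr rfl fun 𝒦 _ => by rw [hGGom 𝒦, Finset.mul_sum]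
        have e2 : ∑ Q ∈ Iᶜ.powerset, sK Q * om.toFun (cellT Q)
            = ∑ 𝒦 ∈ I.powerset.powerset, ∑ Q ∈ Iᶜ.powerset,
                sK Q * om.toFun (GG 𝒦 ∩ cellT Q) := by
          rw [Finset.sum_comm]
          exact Finset.sum_congr rfl fun Q _ => by rw [hcellTom Q, Finset.mul_sum]
        rw [e1, e2, ← Finset.sum_add_distrib]
        refine Finset.sum_congr rfl fun 𝒦 _ => ?_
        rw [← Finset.sum_add_distrib]
        exact Finset.sum_congr rfl fun Q _ => by ring
    _ ≤ c := hfinal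

end Aux

set_option maxHeartbeats 2000000 in
/-- If `λ ∈ 𝔐_{αβγ}(A)`, `ω ∈ 𝔐_{αγ}(M)` and `ω|_A = π_{αγ}(λ)`, then there is a global
measure `ω' ∈ 𝔐_{αβγ}(M)` with `π_{αγ}(ω') = ω` and `ω'|_A = λ`. -/
theorem exists_extension_with_marginal {L : FirstOrder.Language} {M : Type*}
    [L.Structure M] (A : Set M) {α β γ : Type*}
    (lam : KeislerMeasure L M A (α ⊕ (β ⊕ γ)))
    (om : KeislerMeasure L M (Set.univ : Set M) (α ⊕ γ))
    (h : ∀ S : Set (α ⊕ γ → M), A.Definable L S →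
      om.toFun S = lam.toFun (cyl (Sum.map id Sum.inr) S)) :
    ∃ om' : KeislerMeasure L M (Set.univ : Set M) (α ⊕ (β ⊕ γ)),
      (∀ S : Set (α ⊕ γ → M), (Set.univ : Set M).Definable L S →
        om'.toFun (cyl (Sum.map id Sum.inr) S) = om.toFun S) ∧
      (∀ S : Set (α ⊕ (β ⊕ γ) → M), A.Definable L S →
        om'.toFun S = lam.toFun S) := by
  classical
  set ρ : (α ⊕ (β ⊕ γ) → M) → (α ⊕ γ → M) :=
    fun x => x ∘ (Sum.map id Sum.inr : α ⊕ γ → α ⊕ (β ⊕ γ)) with hρ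
  have hcyl : ∀ S : Set (α ⊕ γ → M), cyl (Sum.map id Sum.inr) S = ρ ⁻¹' S :=
    fun S => rfl
  obtain ⟨x₀⟩ := lam.nonemptyFun
  haveI : Nonempty (α ⊕ (β ⊕ γ) → M) := ⟨x₀⟩
  -- the space of bounded functions
  set E : Submodule ℝ ((α ⊕ (β ⊕ γ) → M) → ℝ) :=
    { carrier := {f | ∃ C, ∀ x, |f x| ≤ C}
      add_mem' := by
        rintro f g ⟨C, hC⟩ ⟨D, hD⟩
        exact ⟨C + D, fun x => (abs_add_le _ _).trans (add_le_add (hC x) (hD x))⟩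
      zero_mem' := ⟨0, fun x => by simp⟩
      smul_mem' := by
        rintro c f ⟨C, hC⟩
        refine ⟨|c| * C, fun x => ?_⟩
        rw [Pi.smul_apply, smul_eq_mul, abs_mul]
        exact mul_le_mul_of_nonneg_left (hC x) (abs_nonneg c) } with hE
  have hmemE : ∀ w : (α ⊕ (β ⊕ γ) → M) → ℝ, w ∈ E ↔ ∃ C, ∀ x, |w x| ≤ C := fun w => Iff.rfl
  -- sup of a function
  set sup : ((α ⊕ (β ⊕ γ) → M) → ℝ) → ℝ := fun w => sSup (Set.range w) with hsupdef
  have le_sup : ∀ w : (α ⊕ (β ⊕ γ) → M) → ℝ, w ∈ E → ∀ x, w x ≤ sup w := by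
    rintro w ⟨C, hC⟩ x
    exact le_csSup ⟨C, by rintro _ ⟨x', rfl⟩; exact (abs_le.1 (hC x')).2⟩ ⟨x, rfl⟩
  have sup_le : ∀ (w : (α ⊕ (β ⊕ γ) → M) → ℝ) (c : ℝ), (∀ x, w x ≤ c) → sup w ≤ c := by
    intro w c hw
    exact csSup_le (Set.range_nonempty w) (by rintro _ ⟨x, rfl⟩; exact hw x)
  have sup_zero : sup 0 = 0 := by
    refine le_antisymm (sup_le 0 0 fun x => le_rfl) ?_
    have := le_sup 0 E.zero_mem x₀
    simpa using this
  have sup_smul : ∀ w : (α ⊕ (β ⊕ γ) → M) → ℝ, w ∈ E → ∀ c : ℝ, 0 < c →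
      sup (c • w) = c * sup w := by
    intro w hw c hc
    refine le_antisymm (sup_le _ _ fun x => ?_) ?_
    · rw [Pi.smul_apply, smul_eq_mul]
      exact mul_le_mul_of_nonneg_left (le_sup w hw x) hc.le
    · have h1 : sup w ≤ c⁻¹ * sup (c • w) := by
        refine sup_le _ _ fun x => ?_
        have h2 := le_sup (c • w) (E.smul_mem c hw) x
        rw [Pi.smul_apply, smul_eq_mul] at h2
        calc w x = c⁻¹ * (c * w x) := by field_simp
          _ ≤ c⁻¹ * sup (c • w) := mul_le_mul_of_nonneg_left h2 (inv_nonneg.2 hc.le)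
      calc c * sup w ≤ c * (c⁻¹ * sup (c • w)) := mul_le_mul_of_nonneg_left h1 hc.le
        _ = sup (c • w) := by field_simp
  -- indicator functions
  set ind : Set (α ⊕ (β ⊕ γ) → M) → ((α ⊕ (β ⊕ γ) → M) → ℝ) :=
    fun S => Set.indicator S (fun _ => (1:ℝ)) with hind
  have hindmem : ∀ S, ind S ∈ E := by
    intro S
    refine ⟨1, fun x => ?_⟩
    by_cases hx : x ∈ S
    · simp [hind, Set.indicator_of_mem hx]
    · simp [hind, Set.indicator_of_notMem hx]
  set χ : Set (α ⊕ (β ⊕ γ) → M) → E := fun S => ⟨ind S, hindmem S⟩ with hχ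
  -- representations
  set Rep : ((α ⊕ (β ⊕ γ) → M) → ℝ) → ℝ → Prop := fun w r =>
    ∃ (k : ℕ) (a : Fin k → ℝ) (S : Fin k → Set (α ⊕ (β ⊕ γ) → M)) (t : Fin k → ℝ),
      (∀ i, (A.Definable L (S i) ∧ t i = lam.toFun (S i)) ∨
        (∃ T : Set (α ⊕ γ → M), (Set.univ : Set M).Definable L T ∧
          S i = ρ ⁻¹' T ∧ t i = om.toFun T)) ∧
      (w = fun x => ∑ i, a i * ind (S i) x) ∧ r = ∑ i, a i * t i with hRep
  have hkey : ∀ w r, Rep w r → ∀ c, (∀ x, w x ≤ c) → r ≤ c := by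
    rintro w r ⟨k, a, S, t, hOk, rfl, rfl⟩ c hcb
    refine KMkey lam om (fun S hS => (h S hS).trans (by rw [hcyl])) k a S t hOk c
      (fun x => hcb x)
  have rep_mem : ∀ w r, Rep w r → w ∈ E := by
    rintro w r ⟨k, a, S, t, _, rfl, _⟩
    refine ⟨∑ i, |a i|, fun x => ?_⟩
    refine (Finset.abs_sum_le_sum_abs _ _).trans (Finset.sum_le_sum fun i _ => ?_)
    rw [abs_mul]
    by_cases hx : x ∈ S i
    · simp [hind, Set.indicator_of_mem hx]
    · simp [hind, Set.indicator_of_notMem hx]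
  have rep_zero : Rep 0 0 := by
    refine ⟨0, Fin.elim0, Fin.elim0, Fin.elim0, fun i => i.elim0, ?_, by simp⟩
    funext x
    simp
  have rep_smul : ∀ (c : ℝ) w r, Rep w r → Rep (c • w) (c * r) := by
    rintro c w r ⟨k, a, S, t, hOk, rfl, rfl⟩
    refine ⟨k, fun i => c * a i, S, t, hOk, ?_, ?_⟩
    · funext x
      rw [Pi.smul_apply, smul_eq_mul, Finset.mul_sum]
      exact Finset.sum_congr rfl fun i _ => by dsimp only; ring
    · rw [Finset.mul_sum]
      exact Finset.sum_congr rfl fun i _ => by dsimp only; ring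
  have rep_add : ∀ w1 r1 w2 r2, Rep w1 r1 → Rep w2 r2 → Rep (w1 + w2) (r1 + r2) := by
    rintro w1 r1 w2 r2 ⟨k1, a1, S1, t1, hOk1, rfl, rfl⟩ ⟨k2, a2, S2, t2, hOk2, rfl, rfl⟩
    refine ⟨k1 + k2, Fin.append a1 a2, Fin.append S1 S2, Fin.append t1 t2, ?_, ?_, ?_⟩
    · intro i
      refine Fin.addCases (fun j => ?_) (fun j => ?_) i
      · simp only [Fin.append_left]
        exact hOk1 j
      · simp only [Fin.append_right]
        exact hOk2 j
    · funext x
      rw [Pi.add_apply, Fin.sum_univ_add]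
      congr 1
      · exact Finset.sum_congr rfl fun j _ => by simp [Fin.append_left]
      · exact Finset.sum_congr rfl fun j _ => by simp [Fin.append_right]
    · rw [Fin.sum_univ_add]
      congr 1
      · exact Finset.sum_congr rfl fun j _ => by simp [Fin.append_left]
      · exact Finset.sum_congr rfl fun j _ => by simp [Fin.append_right]
  have rep_lam : ∀ S, A.Definable L S → Rep (ind S) (lam.toFun S) := by
    intro S hS
    refine ⟨1, fun _ => 1, fun _ => S, fun _ => lam.toFun S,
      fun i => Or.inl ⟨hS, rfl⟩, ?_, by simp⟩
    funext x
    simp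
  have rep_om : ∀ T : Set (α ⊕ γ → M), (Set.univ : Set M).Definable L T →
      Rep (ind (ρ ⁻¹' T)) (om.toFun T) := by
    intro T hT
    refine ⟨1, fun _ => 1, fun _ => ρ ⁻¹' T, fun _ => om.toFun T,
      fun i => Or.inr ⟨T, hT, rfl, rfl⟩, ?_, by simp⟩
    funext x
    simp
  -- the sublinear functional
  set pS : E → Set ℝ := fun f => {v | ∃ w r, Rep w r ∧ v = sup ((f : _ → ℝ) - w) + r}
    with hpS
  set p : E → ℝ := fun f => sInf (pS f) with hp
  have mem0 : ∀ f : E, sup (f : _ → ℝ) ∈ pS f := by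
    intro f
    exact ⟨0, 0, rep_zero, by simp⟩
  have hpS_ne : ∀ f : E, (pS f).Nonempty := fun f => ⟨_, mem0 f⟩
  have hlb : ∀ f : E, ∀ v ∈ pS f, -(sup (-(f : _ → ℝ))) ≤ v := by
    rintro f v ⟨w, r, hwr, rfl⟩
    have hwE : w ∈ E := rep_mem w r hwr
    have hinf : -(sup (-w)) ≤ r := by
      have hneg : Rep (-w) (-r) := by
        have := rep_smul (-1) w r hwr
        simpa using this
      have := hkey (-w) (-r) hneg (sup (-w)) (le_sup (-w) (E.neg_mem hwE))
      linarith
    refine le_of_forall_pos_le_add ?_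
    intro ε hε
    have hlt : sup (-w) - ε < sSup (Set.range (-w)) := by
      have : sup (-w) - ε < sup (-w) := by linarith
      exact this
    obtain ⟨_, ⟨x, rfl⟩, hx⟩ := exists_lt_of_lt_csSup (Set.range_nonempty (-w)) hlt
    have h1 : (f : _ → ℝ) x - w x ≤ sup ((f : _ → ℝ) - w) :=
      le_sup _ (E.sub_mem f.2 hwE) x
    have h2 : -((f : _ → ℝ) x) ≤ sup (-(f : _ → ℝ)) := le_sup _ (E.neg_mem f.2) x
    have h3 : sup (-w) - ε < -(w x) := hx
    linarith
  have hbddS : ∀ f : E, BddBelow (pS f) := fun f => ⟨_, hlb f⟩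
  have hple : ∀ f : E, p f ≤ sup (f : _ → ℝ) := fun f => csInf_le (hbddS f) (mem0 f)
  have hpge : ∀ f : E, -(sup (-(f : _ → ℝ))) ≤ p f := fun f => le_csInf (hpS_ne f) (hlb f)
  -- sublinearity
  have N_hom : ∀ c : ℝ, 0 < c → ∀ f : E, p (c • f) = c * p f := by
    intro c hc f
    have hfwd : ∀ v ∈ pS f, c * v ∈ pS (c • f) := by
      rintro v ⟨w, r, hwr, rfl⟩
      refine ⟨c • w, c * r, rep_smul c w r hwr, ?_⟩
      rw [mul_add, ← sup_smul _ (E.sub_mem f.2 (rep_mem w r hwr)) c hc]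
      congr 1
      congr 1
      funext x
      simp [mul_sub]
    have hbwd : ∀ v ∈ pS (c • f), ∃ v' ∈ pS f, v = c * v' := by
      rintro v ⟨w, r, hwr, rfl⟩
      refine ⟨sup ((f : _ → ℝ) - c⁻¹ • w) + c⁻¹ * r,
        ⟨c⁻¹ • w, c⁻¹ * r, rep_smul c⁻¹ w r hwr, rfl⟩, ?_⟩
      rw [mul_add, ← sup_smul _ (E.sub_mem f.2 (rep_mem _ _ (rep_smul c⁻¹ w r hwr))) c hc]
      have hcc : c * (c⁻¹ * r) = r := by field_simp
      rw [hcc]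
      congr 1
      congr 1
      funext x
      simp only [Pi.smul_apply, Pi.sub_apply, Submodule.coe_smul, smul_eq_mul]
      field_simp
    refine le_antisymm ?_ ?_
    · have h1 : c⁻¹ * p (c • f) ≤ p f := by
        refine le_csInf (hpS_ne f) fun v' hv' => ?_
        have h2 : p (c • f) ≤ c * v' := csInf_le (hbddS _) (hfwd v' hv')
        calc c⁻¹ * p (c • f) ≤ c⁻¹ * (c * v') :=
              mul_le_mul_of_nonneg_left h2 (inv_nonneg.2 hc.le)
          _ = v' := by field_simp
      calc p (c • f) = c * (c⁻¹ * p (c • f)) := by field_simp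
        _ ≤ c * p f := mul_le_mul_of_nonneg_left h1 hc.le
    · refine le_csInf ⟨_, mem0 (c • f)⟩ fun v hv => ?_
      obtain ⟨v', hv', rfl⟩ := hbwd v hv
      exact mul_le_mul_of_nonneg_left (csInf_le (hbddS f) hv') hc.le
  have N_add : ∀ f g : E, p (f + g) ≤ p f + p g := by
    intro f g
    have hstep : ∀ v1 ∈ pS f, ∀ v2 ∈ pS g, p (f + g) ≤ v1 + v2 := by
      rintro v1 ⟨w1, r1, hwr1, rfl⟩ v2 ⟨w2, r2, hwr2, rfl⟩
      have hmem : sup (((f + g : E) : _ → ℝ) - (w1 + w2)) + (r1 + r2) ∈ pS (f + g) :=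
        ⟨w1 + w2, r1 + r2, rep_add w1 r1 w2 r2 hwr1 hwr2, rfl⟩
      refine (csInf_le (hbddS _) hmem).trans ?_
      have hsub : sup (((f + g : E) : _ → ℝ) - (w1 + w2))
          ≤ sup ((f : _ → ℝ) - w1) + sup ((g : _ → ℝ) - w2) := by
        refine sup_le _ _ fun x => ?_
        have h1 := le_sup _ (E.sub_mem f.2 (rep_mem _ _ hwr1)) x
        have h2 := le_sup _ (E.sub_mem g.2 (rep_mem _ _ hwr2)) x
        simp only [Pi.sub_apply, Pi.add_apply, Submodule.coe_add] at h1 h2 ⊢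
        linarith
      linarith
    have h1 : ∀ v1 ∈ pS f, p (f + g) - v1 ≤ p g := by
      intro v1 hv1
      refine le_csInf (hpS_ne g) fun v2 hv2 => ?_
      have := hstep v1 hv1 v2 hv2
      linarith
    have h2 : p (f + g) - p g ≤ p f := by
      refine le_csInf (hpS_ne f) fun v1 hv1 => ?_
      have := h1 v1 hv1
      linarith
    linarith
  -- Hahn-Banach
  have hp0 : 0 ≤ p 0 := by
    have := hpge 0
    simp only [Submodule.coe_zero, neg_zero] at this
    rw [sup_zero] at this
    simpa using this
  obtain ⟨g, -, hgle⟩ := exists_extension_of_le_sublinear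
    ({ domain := ⊥, toFun := 0 } : E →ₗ.[ℝ] ℝ) p N_hom N_add
    (by
      rintro ⟨x, hx⟩
      have hx0 : x = 0 := by simpa using hx
      subst hx0
      simpa using hp0)
  -- properties of g
  have hgsup : ∀ f : E, g f ≤ sup (f : _ → ℝ) := fun f => (hgle f).trans (hple f)
  have hginf : ∀ f : E, -(sup (-(f : _ → ℝ))) ≤ g f := by
    intro f
    have h1 : g (-f) ≤ sup (-(f : _ → ℝ)) := by
      have := hgsup (-f)
      simpa using this
    have h2 : g (-f) = -(g f) := by rw [map_neg]
    linarith
  have hgen : ∀ w r, Rep w r → (hw : w ∈ E) → g ⟨w, hw⟩ = r := by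
    intro w r hwr hw
    have hup : p ⟨w, hw⟩ ≤ r := by
      have hmem : sup ((⟨w, hw⟩ : E) - w) + r ∈ pS ⟨w, hw⟩ := ⟨w, r, hwr, rfl⟩
      have hz : ((⟨w, hw⟩ : E) : _ → ℝ) - w = 0 := by
        funext x
        simp
      rw [hz, sup_zero, zero_add] at hmem
      exact csInf_le (hbddS _) hmem
    have hdn : p (-⟨w, hw⟩ : E) ≤ -r := by
      have hwr' : Rep (-w) (-r) := by
        have := rep_smul (-1) w r hwr
        simpa using this
      have hmem : sup (((-⟨w, hw⟩ : E) : _ → ℝ) - (-w)) + (-r) ∈ pS (-⟨w, hw⟩ : E) :=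
        ⟨-w, -r, hwr', rfl⟩
      have hz : ((-⟨w, hw⟩ : E) : _ → ℝ) - (-w) = 0 := by
        funext x
        simp
      rw [hz, sup_zero, zero_add] at hmem
      exact csInf_le (hbddS _) hmem
    have h1 : g ⟨w, hw⟩ ≤ r := (hgle _).trans hup
    have h2 : g (-⟨w, hw⟩ : E) ≤ -r := (hgle _).trans hdn
    rw [map_neg] at h2
    linarith
  have hglam : ∀ S, A.Definable L S → g (χ S) = lam.toFun S :=
    fun S hS => hgen (ind S) (lam.toFun S) (rep_lam S hS) (hindmem S)
  have hgom : ∀ T : Set (α ⊕ γ → M), (Set.univ : Set M).Definable L T →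
      g (χ (ρ ⁻¹' T)) = om.toFun T :=
    fun T hT => hgen (ind (ρ ⁻¹' T)) (om.toFun T) (rep_om T hT) (hindmem _)
  have hguniv : g (χ Set.univ) = 1 := by
    have := hgom Set.univ Set.definable_univ
    rw [Set.preimage_univ] at this
    rw [this, om.measure_univ]
  -- build the measure
  refine ⟨⟨fun S => g (χ S), hguniv, ?_, ?_, ?_⟩, ?_, ?_⟩
  · intro S _
    have h1 := hginf (χ S)
    have h2 : sup (-(χ S : _ → ℝ)) ≤ 0 := by
      refine sup_le _ _ fun x => ?_
      simp only [Pi.neg_apply, neg_nonpos]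
      by_cases hx : x ∈ S
      · simp [hχ, hind, Set.indicator_of_mem hx]
      · simp [hχ, hind, Set.indicator_of_notMem hx]
    linarith
  · intro S _
    have hdecomp : χ Sᶜ = χ Set.univ - χ S := by
      apply Subtype.ext
      funext x
      by_cases hx : x ∈ S
      · simp [hχ, hind, Set.indicator_of_mem hx, Set.indicator_of_notMem (by simpa : x ∉ Sᶜ),
          Set.indicator_of_mem (Set.mem_univ x)]
      · simp [hχ, hind, Set.indicator_of_notMem hx, Set.indicator_of_mem (by simpa : x ∈ Sᶜ),
          Set.indicator_of_mem (Set.mem_univ x)]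
    show g (χ Sᶜ) = 1 - g (χ S)
    rw [hdecomp, map_sub, hguniv]
  · intro S T _ _
    have hdecomp : χ (S ∪ T) = χ S + χ T - χ (S ∩ T) := by
      apply Subtype.ext
      funext x
      by_cases hxS : x ∈ S <;> by_cases hxT : x ∈ T <;>
        simp [hχ, hind, Set.indicator_apply, hxS, hxT, Set.mem_union, Set.mem_inter_iff]
    show g (χ (S ∪ T)) = g (χ S) + g (χ T) - g (χ (S ∩ T))
    rw [hdecomp, map_sub, map_add]
  · intro S hS
    show g (χ (cyl (Sum.map id Sum.inr) S)) = om.toFun S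
    rw [hcyl]
    exact hgom S hS
  · intro S hS
    exact hglam S hS
end
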